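/- arXiv:1001.0384 — 8 statements merged into one kernel-verified Lean document; each statement's English description precedes it below -/
import Mathlib

section
/- For a finite simple graph G and two adjacent vertices u and v, the pivot piv(G;u,v) is isomorphic (indeed equal, on the same vertex set) to the triple local complement LC(LC(LC(G;u);v);u). -/
/-- The local complement `LC(G;v)`: toggle the adjacency of every pair of
distinct vertices that are both adjacent to `v`. -/
def SimpleGraph.localComp {V : Type*} (G : SimpleGraph V) (v : V) :
    SimpleGraph V where
  Adj x y := Xor' (G.Adj x y) (x ≠ y ∧ G.Adj v x ∧ G.Adj v y)
  symm := by
    constructor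
    intro x y h
    have h1 := G.adj_comm x y
    have h2 : (x ≠ y) ↔ (y ≠ x) := ne_comm
    unfold Xor' at *
    unfold Xor at *
    tauto
  loopless := by
    constructor
    intro x h
    rcases h with ⟨h1, -⟩ | ⟨⟨h1, -⟩, -⟩
    · exact G.loopless.irrefl x h1
    · exact h1 rfl

/-- The pivot `piv(G;u,v)`: toggle the adjacency of every pair of distinct
vertices `x, y ∉ {u,v}` such that (up to swapping `x` and `y`) `x` is adjacent
to `u`, `y` is adjacent to `v`, and `x` is not adjacent to `v` or `y` is not
adjacent to `u`. -/
def SimpleGraph.pivot {V : Type*} (G : SimpleGraph V) (u v : V) :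
    SimpleGraph V where
  Adj x y := Xor' (G.Adj x y)
    (x ≠ y ∧ x ≠ u ∧ x ≠ v ∧ y ≠ u ∧ y ≠ v ∧
      ((G.Adj u x ∧ G.Adj v y ∧ (¬ G.Adj v x ∨ ¬ G.Adj u y)) ∨
       (G.Adj u y ∧ G.Adj v x ∧ (¬ G.Adj v y ∨ ¬ G.Adj u x))))
  symm := by
    constructor
    intro x y h
    have psymm : ∀ a b : V,
        (a ≠ b ∧ a ≠ u ∧ a ≠ v ∧ b ≠ u ∧ b ≠ v ∧
          ((G.Adj u a ∧ G.Adj v b ∧ (¬ G.Adj v a ∨ ¬ G.Adj u b)) ∨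
           (G.Adj u b ∧ G.Adj v a ∧ (¬ G.Adj v b ∨ ¬ G.Adj u a)))) →
        (b ≠ a ∧ b ≠ u ∧ b ≠ v ∧ a ≠ u ∧ a ≠ v ∧
          ((G.Adj u b ∧ G.Adj v a ∧ (¬ G.Adj v b ∨ ¬ G.Adj u a)) ∨
           (G.Adj u a ∧ G.Adj v b ∧ (¬ G.Adj v a ∨ ¬ G.Adj u b)))) := by
      rintro a b ⟨h1, h2, h3, h4, h5, h6⟩
      exact ⟨h1.symm, h4, h5, h2, h3, h6.symm⟩
    unfold Xor' at h ⊢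
    rcases h with ⟨ha, hnp⟩ | ⟨hp, hna⟩
    · exact Or.inl ⟨G.adj_symm ha, fun hp' => hnp (psymm y x hp')⟩
    · exact Or.inr ⟨psymm x y hp, fun ha' => hna (G.adj_symm ha')⟩
  loopless := by
    constructor
    intro x h
    rcases h with ⟨h1, -⟩ | ⟨⟨h1, -⟩, -⟩
    · exact G.loopless.irrefl x h1
    · exact h1 rfl

lemma localComp_adj {V : Type*} (G : SimpleGraph V) (v x y : V) :
    (G.localComp v).Adj x y ↔ Xor' (G.Adj x y) (x ≠ y ∧ G.Adj v x ∧ G.Adj v y) :=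
  Iff.rfl

lemma pivot_adj {V : Type*} (G : SimpleGraph V) (u v x y : V) :
    (G.pivot u v).Adj x y ↔ Xor' (G.Adj x y)
    (x ≠ y ∧ x ≠ u ∧ x ≠ v ∧ y ≠ u ∧ y ≠ v ∧
      ((G.Adj u x ∧ G.Adj v y ∧ (¬ G.Adj v x ∨ ¬ G.Adj u y)) ∨
       (G.Adj u y ∧ G.Adj v x ∧ (¬ G.Adj v y ∨ ¬ G.Adj u x)))) :=
  Iff.rfl

section PivotAux

variable {V : Type*} (G : SimpleGraph V) (u v a b : V)

set_option maxHeartbeats 1600000 in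
private lemma pivAux_gen (huv : G.Adj u v)
    (hab : a ≠ b) (hau : a ≠ u) (hav : a ≠ v) (hbu : b ≠ u) (hbv : b ≠ v) :
    ((((G.localComp u).localComp v).localComp u).Adj a b ↔ (G.pivot u v).Adj a b) := by
  have hne : u ≠ v := huv.ne
  have hne' : v ≠ u := hne.symm
  have hab' : b ≠ a := hab.symm
  have hau' : u ≠ a := hau.symm
  have hav' : v ≠ a := hav.symm
  have hbu' : u ≠ b := hbu.symm
  have hbv' : v ≠ b := hbv.symm
  have hvu : G.Adj v u := huv.symm
  have huu : ¬ G.Adj u u := G.loopless.irrefl u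
  have hvv : ¬ G.Adj v v := G.loopless.irrefl v
  by_cases p1 : G.Adj a b <;> by_cases p2 : G.Adj u a <;>
    by_cases p3 : G.Adj u b <;> by_cases p4 : G.Adj v a <;>
    by_cases p5 : G.Adj v b <;>
    simp_all [localComp_adj, pivot_adj, Xor', G.adj_comm]

set_option maxHeartbeats 800000 in
private lemma pivAux_uv (huv : G.Adj u v) :
    ((((G.localComp u).localComp v).localComp u).Adj v u ↔ (G.pivot u v).Adj u v) := by
  have hne : u ≠ v := huv.ne
  have hne' : v ≠ u := hne.symm
  have hvu : G.Adj v u := huv.symm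
  have huu : ¬ G.Adj u u := G.loopless.irrefl u
  have hvv : ¬ G.Adj v v := G.loopless.irrefl v
  simp_all [localComp_adj, pivot_adj, Xor', G.adj_comm]

set_option maxHeartbeats 800000 in
private lemma pivAux_vu (huv : G.Adj u v) :
    ((((G.localComp u).localComp v).localComp u).Adj u v ↔ (G.pivot u v).Adj v u) := by
  have hne : u ≠ v := huv.ne
  have hne' : v ≠ u := hne.symm
  have hvu : G.Adj v u := huv.symm
  have huu : ¬ G.Adj u u := G.loopless.irrefl u
  have hvv : ¬ G.Adj v v := G.loopless.irrefl v
  simp_all [localComp_adj, pivot_adj, Xor', G.adj_comm]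

set_option maxHeartbeats 1600000 in
private lemma pivAux_au (huv : G.Adj u v) (hbu : b ≠ u) (hbv : b ≠ v) :
    ((((G.localComp u).localComp v).localComp u).Adj v b ↔ (G.pivot u v).Adj u b) := by
  have hne : u ≠ v := huv.ne
  have hne' : v ≠ u := hne.symm
  have hbu' : u ≠ b := hbu.symm
  have hbv' : v ≠ b := hbv.symm
  have hvu : G.Adj v u := huv.symm
  have huu : ¬ G.Adj u u := G.loopless.irrefl u
  have hvv : ¬ G.Adj v v := G.loopless.irrefl v
  by_cases p3 : G.Adj u b <;> by_cases p5 : G.Adj v b <;>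
    simp_all [localComp_adj, pivot_adj, Xor', G.adj_comm]

set_option maxHeartbeats 1600000 in
private lemma pivAux_av (huv : G.Adj u v) (hbu : b ≠ u) (hbv : b ≠ v) :
    ((((G.localComp u).localComp v).localComp u).Adj u b ↔ (G.pivot u v).Adj v b) := by
  have hne : u ≠ v := huv.ne
  have hne' : v ≠ u := hne.symm
  have hbu' : u ≠ b := hbu.symm
  have hbv' : v ≠ b := hbv.symm
  have hvu : G.Adj v u := huv.symm
  have huu : ¬ G.Adj u u := G.loopless.irrefl u
  have hvv : ¬ G.Adj v v := G.loopless.irrefl v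
  by_cases p3 : G.Adj u b <;> by_cases p5 : G.Adj v b <;>
    simp_all [localComp_adj, pivot_adj, Xor', G.adj_comm]

set_option maxHeartbeats 1600000 in
private lemma pivAux_bu (huv : G.Adj u v) (hau : a ≠ u) (hav : a ≠ v) :
    ((((G.localComp u).localComp v).localComp u).Adj a v ↔ (G.pivot u v).Adj a u) := by
  have hne : u ≠ v := huv.ne
  have hne' : v ≠ u := hne.symm
  have hau' : u ≠ a := hau.symm
  have hav' : v ≠ a := hav.symm
  have hvu : G.Adj v u := huv.symm
  have huu : ¬ G.Adj u u := G.loopless.irrefl u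
  have hvv : ¬ G.Adj v v := G.loopless.irrefl v
  by_cases p2 : G.Adj u a <;> by_cases p4 : G.Adj v a <;>
    simp_all [localComp_adj, pivot_adj, Xor', G.adj_comm]

set_option maxHeartbeats 1600000 in
private lemma pivAux_bv (huv : G.Adj u v) (hau : a ≠ u) (hav : a ≠ v) :
    ((((G.localComp u).localComp v).localComp u).Adj a u ↔ (G.pivot u v).Adj a v) := by
  have hne : u ≠ v := huv.ne
  have hne' : v ≠ u := hne.symm
  have hau' : u ≠ a := hau.symm
  have hav' : v ≠ a := hav.symm
  have hvu : G.Adj v u := huv.symm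
  have huu : ¬ G.Adj u u := G.loopless.irrefl u
  have hvv : ¬ G.Adj v v := G.loopless.irrefl v
  by_cases p2 : G.Adj u a <;> by_cases p4 : G.Adj v a <;>
    simp_all [localComp_adj, pivot_adj, Xor', G.adj_comm]

end PivotAux

/-- For a finite simple graph `G` and adjacent vertices
`u`, `v`, the pivot `piv(G;u,v)` is isomorphic, on the same vertex set, to the
triple local complement `LC(LC(LC(G;u);v);u)`. -/
theorem pivot_iso_triple_localComp {V : Type*} [Fintype V]
    (G : SimpleGraph V) (u v : V) (huv : G.Adj u v) :
    Nonempty (G.pivot u v ≃g ((G.localComp u).localComp v).localComp u) := by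
  classical
  refine ⟨⟨Equiv.swap u v, ?_⟩⟩
  intro a b
  show (((G.localComp u).localComp v).localComp u).Adj (Equiv.swap u v a) (Equiv.swap u v b) ↔ (G.pivot u v).Adj a b
  by_cases hab : a = b
  · subst hab
    exact iff_of_false (SimpleGraph.irrefl _) (SimpleGraph.irrefl _)
  · by_cases hau : a = u
    · rw [hau, Equiv.swap_apply_left]
      by_cases hbv : b = v
      · rw [hbv, Equiv.swap_apply_right]
        exact pivAux_uv G u v huv
      · have hbu : b ≠ u := fun h => hab (hau.trans h.symm)
        rw [Equiv.swap_apply_of_ne_of_ne hbu hbv]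
        exact pivAux_au G u v b huv hbu hbv
    · by_cases hav : a = v
      · rw [hav, Equiv.swap_apply_right]
        by_cases hbu : b = u
        · rw [hbu, Equiv.swap_apply_left]
          exact pivAux_vu G u v huv
        · have hbv : b ≠ v := fun h => hab (hav.trans h.symm)
          rw [Equiv.swap_apply_of_ne_of_ne hbu hbv]
          exact pivAux_av G u v b huv hbu hbv
      · rw [Equiv.swap_apply_of_ne_of_ne hau hav]
        by_cases hbu : b = u
        · rw [hbu, Equiv.swap_apply_left]
          exact pivAux_bu G u v a huv hau hav
        · by_cases hbv : b = v
          · rw [hbv, Equiv.swap_apply_right]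
            exact pivAux_bv G u v a huv hau hav
          · rw [Equiv.swap_apply_of_ne_of_ne hbu hbv]
            exact pivAux_gen G u v a b huv hab hau hav hbu hbv
end

section
/- For every symmetric n×n matrix A over ℤ/2ℤ there exists a symmetric n×n matrix Ã over ℤ/2ℤ with det Ã = 1 such that Ã agrees with A in all off-diagonal entries (Ã_{ij} = A_{ij} for all i ≠ j). -/
private lemma transpose_fin_one {α : Type*} (M : Matrix (Fin 1) (Fin 1) α) :
    M.transpose = M := by
  ext i j
  rw [Subsingleton.elim i j]
  rfl

/-- For every symmetric `n × n` matrix `A` over `ℤ/2ℤ` there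
is a symmetric matrix `Ã` over `ℤ/2ℤ` with `det Ã = 1` which coincides with
`A` in all off-diagonal entries. -/
theorem exists_symm_det_one_eq_off_diagonal (n : ℕ)
    (A : Matrix (Fin n) (Fin n) (ZMod 2)) (hA : A.IsSymm) :
    ∃ B : Matrix (Fin n) (Fin n) (ZMod 2),
      B.IsSymm ∧ B.det = 1 ∧ ∀ i j, i ≠ j → B i j = A i j := by
  induction n with
  | zero =>
      refine ⟨A, hA, ?_, fun i j _ => rfl⟩
      simp [Matrix.det_fin_zero]
  | succ n ih =>
      set e : Fin 1 ⊕ Fin n ≃ Fin (n + 1) :=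
        finSumFinEquiv.trans (finCongr (by omega)) with he
      set A' : Matrix (Fin n) (Fin n) (ZMod 2) :=
        A.submatrix (fun k => e (Sum.inr k)) (fun l => e (Sum.inr l)) with hA'def
      have hA' : A'.IsSymm := by
        ext k l
        simp only [hA'def, Matrix.transpose_apply, Matrix.submatrix_apply]
        exact hA.apply _ _
      obtain ⟨B', hB'symm, hB'det, hB'off⟩ := ih A' hA'
      haveI : Invertible B'.det := by rw [hB'det]; exact invertibleOne
      haveI : Invertible B' := B'.invertibleOfDetInvertible
      set vr : Matrix (Fin 1) (Fin n) (ZMod 2) :=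
        Matrix.of (fun _ l => A (e (Sum.inl 0)) (e (Sum.inr l))) with hvr
      set a : Matrix (Fin 1) (Fin 1) (ZMod 2) := 1 + vr * B'⁻¹ * vr.transpose with ha
      set C : Matrix (Fin 1 ⊕ Fin n) (Fin 1 ⊕ Fin n) (ZMod 2) :=
        Matrix.fromBlocks a vr vr.transpose B' with hC
      refine ⟨Matrix.reindex e e C, ?_, ?_, ?_⟩
      · show (Matrix.reindex e e C).transpose = _
        rw [Matrix.transpose_reindex, hC, Matrix.fromBlocks_transpose,
          transpose_fin_one, Matrix.transpose_transpose, hB'symm]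
      · rw [Matrix.det_reindex_self, hC, Matrix.det_fromBlocks₂₂, hB'det, ha, Matrix.invOf_eq_nonsing_inv,
          add_sub_cancel_right, one_mul, Matrix.det_one]
      · intro i j hij
        have hi : i = e (e.symm i) := (e.apply_symm_apply i).symm
        have hj : j = e (e.symm j) := (e.apply_symm_apply j).symm
        show C (e.symm i) (e.symm j) = A i j
        rcases hsi : e.symm i with k | k <;> rcases hsj : e.symm j with l | l
        · exact absurd (by
            apply e.symm.injective
            rw [hsi, hsj, Subsingleton.elim k l]) hij
        · rw [hi, hj, hsi, hsj]
          simpa [hC, hvr] using congrArg (fun x => A (e (Sum.inl x)) (e (Sum.inr l)))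
            (Subsingleton.elim (0 : Fin 1) k)
        · rw [hi, hj, hsi, hsj]
          have := hA.apply (e (Sum.inl l)) (e (Sum.inr k))
          simpa [hC, hvr, Subsingleton.elim (0 : Fin 1) l] using this.symm ▸ this
        · have hkl : k ≠ l := by
            intro h; apply hij
            apply e.symm.injective; rw [hsi, hsj, h]
          rw [hi, hj, hsi, hsj]
          simpa [hC, hA'def] using hB'off k l hkl
end

section
/- Let n ≥ 1 and let m be a fixed-point-free involution of ℤ/2nℤ, regarded as a chord diagram whose n chords are the orbits {i, m(i)} (all chords framed 0). Let A be the n×n matrix over ℤ/2ℤ indexed by the chords, with zero diagonal and with A_{cd} = 1 for c ≠ d iff the chords c and d are linked, i.e. exactly one endpoint of d lies in the cyclic interval strictly between the two endpoints of c. Then the number of orbits (cycles, counting fixed points) of the permutation i ↦ m(i+1) of ℤ/2nℤ equals corank_{ℤ/2ℤ}(A) + 1. (This is the all-framings-0 special case of Soboleva's theorem: the number of connected components of the 1-manifold obtained by surgery on a framed chord diagram equals corank A(G) + 1, where G is the intersection graph.) -/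
/-- `x` lies strictly between `a` and `b` in the cyclic order of `ZMod N`
(going from `a` in the positive direction towards `b`). -/
def cyclicBtw {N : ℕ} (a x b : ZMod N) : Prop :=
  0 < (x - a).val ∧ (x - a).val < (b - a).val

instance {N : ℕ} (a x b : ZMod N) : Decidable (cyclicBtw a x b) := by
  unfold cyclicBtw; infer_instance

/-- The chords through `i` and through `j` (of the chord diagram given by the
fixed-point-free involution `m`) are linked: exactly one endpoint of the chord
`{j, m j}` lies in the cyclic interval strictly between `i` and `m i`. -/
def ChordLinked {N : ℕ} (m : Equiv.Perm (ZMod N)) (i j : ZMod N) : Prop :=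
  Xor' (cyclicBtw i j (m i)) (cyclicBtw i (m j) (m i))

instance {N : ℕ} (m : Equiv.Perm (ZMod N)) (i j : ZMod N) :
    Decidable (ChordLinked m i j) := by
  unfold ChordLinked Xor'; infer_instance

/-- The chords of the diagram, each represented by its endpoint of smaller value. -/
def ChordIdx {N : ℕ} (m : Equiv.Perm (ZMod N)) : Type :=
  {i : ZMod N // i.val < (m i).val}

instance {N : ℕ} [NeZero N] (m : Equiv.Perm (ZMod N)) : Fintype (ChordIdx m) := by
  unfold ChordIdx; infer_instance

instance {N : ℕ} [NeZero N] (m : Equiv.Perm (ZMod N)) : DecidableEq (ChordIdx m) := by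
  unfold ChordIdx; infer_instance

/-- The adjacency matrix over `ℤ/2ℤ` of the intersection graph of the chord
diagram given by `m`: zero diagonal, and `1` at `(c,d)`, `c ≠ d`, iff the
chords `c` and `d` are linked. -/
def interMat {N : ℕ} [NeZero N] (m : Equiv.Perm (ZMod N)) :
    Matrix (ChordIdx m) (ChordIdx m) (ZMod 2) :=
  fun c d => if c = d then 0 else if ChordLinked m c.1 d.1 then 1 else 0

/-- The number of orbits (cycles, counting fixed points) of a permutation of a
finite type. -/
def numCycles {α : Type*} [Fintype α] [DecidableEq α] (σ : Equiv.Perm α) : ℕ :=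
  σ.cycleType.card + (Fintype.card α - σ.support.card)


open Module

namespace Sobo

variable {α : Type*} [Fintype α] [DecidableEq α]

/-- The setoid of being on the same cycle of a permutation. -/
def sameCycleSetoid (σ : Equiv.Perm α) : Setoid α :=
  ⟨σ.SameCycle, ⟨fun _ => Equiv.Perm.SameCycle.refl σ _, fun h => h.symm, fun h h' => h.trans h'⟩⟩

instance (σ : Equiv.Perm α) : DecidableRel (sameCycleSetoid σ).r := by
  change DecidableRel σ.SameCycle; infer_instance

instance (σ : Equiv.Perm α) : Fintype (Quotient (sameCycleSetoid σ)) :=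
  @Quotient.fintype _ _ (sameCycleSetoid σ)
    (fun x y => (inferInstance : Decidable (σ.SameCycle x y)))

lemma eq_of_sameCycle_fixed {σ : Equiv.Perm α} {x y : α}
    (h : σ.SameCycle x y) (hx : σ x = x) : y = x := by
  obtain ⟨k, hk⟩ := h
  rw [← hk]
  exact Function.IsFixedPt.perm_zpow hx k

/-- Orbits of `σ` are in bijection with (nontrivial cycles) ⊕ (fixed points). -/
noncomputable def orbitEquiv (σ : Equiv.Perm α) :
    Quotient (sameCycleSetoid σ) ≃
      ({c // c ∈ σ.cycleFactorsFinset} ⊕ {x : α // σ x = x}) where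
  toFun := Quotient.lift
    (fun x => if h : σ x = x then Sum.inr ⟨x, h⟩ else
      Sum.inl ⟨σ.cycleOf x,
        Equiv.Perm.cycleOf_mem_cycleFactorsFinset_iff.2 (Equiv.Perm.mem_support.2 h)⟩)
    (by
      intro x y hxy
      by_cases hx : σ x = x
      · have : y = x := eq_of_sameCycle_fixed hxy hx
        subst this; rfl
      · have hy : ¬ σ y = y := by
          intro hy
          have : x = y := eq_of_sameCycle_fixed hxy.symm hy
          exact hx (this ▸ hy)
        simp only [dif_neg hx, dif_neg hy]
        congr 1
        exact Subtype.ext (Equiv.Perm.SameCycle.cycleOf_eq hxy))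
  invFun := fun s =>
    match s with
    | Sum.inl c => ⟦((Equiv.Perm.mem_cycleFactorsFinset_iff.1 c.2).1.nonempty_support).choose⟧
    | Sum.inr x => ⟦x.1⟧
  left_inv := by
    intro q
    obtain ⟨x, rfl⟩ := Quotient.exists_rep q
    by_cases hx : σ x = x
    · simp only [Quotient.lift_mk, dif_pos hx]
    · simp only [Quotient.lift_mk, dif_neg hx]
      apply Quotient.sound
      have hc := Equiv.Perm.cycleOf_mem_cycleFactorsFinset_iff.2
        (Equiv.Perm.mem_support.2 hx)
      have hmem := (Equiv.Perm.mem_cycleFactorsFinset_iff.1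
        (⟨σ.cycleOf x, hc⟩ : {c // c ∈ σ.cycleFactorsFinset}).2).1.nonempty_support.choose_spec
      have := (Equiv.Perm.mem_support_cycleOf_iff.1 hmem).1
      exact this.symm
  right_inv := by
    rintro (⟨c, hc⟩ | ⟨x, hx⟩)
    · have hmem := (Equiv.Perm.mem_cycleFactorsFinset_iff.1 hc).1.nonempty_support.choose_spec
      set y := (Equiv.Perm.mem_cycleFactorsFinset_iff.1 hc).1.nonempty_support.choose with hy
      have hcy : c = σ.cycleOf y := Equiv.Perm.cycle_is_cycleOf hmem hc
      have hys : σ y ≠ y := by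
        have h1 : c y ≠ y := Equiv.Perm.mem_support.1 hmem
        have h2 : c y = σ y := (Equiv.Perm.mem_cycleFactorsFinset_iff.1 hc).2 y hmem
        rw [← h2]; exact h1
      simp only [Quotient.lift_mk, dif_neg hys]
      congr 1
      exact (dif_neg hys).trans (congrArg Sum.inl (Subtype.ext hcy.symm))
    · simp only [Quotient.lift_mk, dif_pos hx]

lemma card_orbits_eq_numCycles' (σ : Equiv.Perm α) :
    Fintype.card (Quotient (sameCycleSetoid σ)) =
      σ.cycleType.card + (Fintype.card α - σ.support.card) := by
  rw [Fintype.card_congr (orbitEquiv σ), Fintype.card_sum]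
  congr 1
  · rw [Fintype.card_coe]
    simp [Equiv.Perm.cycleType]
  · have h1 : Fintype.card {x : α // σ x = x} =
        (Finset.filter (fun x => σ x = x) Finset.univ).card := Fintype.card_subtype _
    have h2 : σ.support.card = (Finset.filter (fun x => ¬ σ x = x) Finset.univ).card := by
      rfl
    have h3 := Finset.card_filter_add_card_filter_not
      (s := (Finset.univ : Finset α)) (fun x => σ x = x)
    have h4 : (Finset.univ : Finset α).card = Fintype.card α := rfl
    omega

end Sobo
namespace Sobo

variable {α : Type*} [Fintype α] [DecidableEq α]

abbrev F2 := ZMod 2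

/-- The subspace of functions `α → ℤ/2` invariant under a permutation. -/
def fixedSpace (σ : Equiv.Perm α) : Submodule F2 (α → F2) where
  carrier := {f | ∀ i, f (σ i) = f i}
  add_mem' := by intro f g hf hg i; simp only [Pi.add_apply, hf i, hg i]
  zero_mem' := by intro i; rfl
  smul_mem' := by intro c f hf i; simp only [Pi.smul_apply, hf i]

lemma apply_pow_of_fixed {σ : Equiv.Perm α} {f : α → F2}
    (hf : ∀ i, f (σ i) = f i) : ∀ (k : ℕ) (x : α), f ((σ ^ k) x) = f x := by
  intro k
  induction k with
  | zero => intro x; rfl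
  | succ k ih =>
    intro x
    rw [pow_succ, Equiv.Perm.mul_apply]
    rw [ih (σ x), hf x]

lemma apply_eq_of_sameCycle {σ : Equiv.Perm α} {f : α → F2}
    (hf : ∀ i, f (σ i) = f i) {x y : α} (h : σ.SameCycle x y) : f x = f y := by
  obtain ⟨k, _, _, hk⟩ := h.exists_pow_eq σ
  rw [← hk, apply_pow_of_fixed hf]

/-- Invariant functions are (linearly) the functions on the set of orbits. -/
def fixedMap (σ : Equiv.Perm α) :
    (Quotient (sameCycleSetoid σ) → F2) →ₗ[F2] fixedSpace σ where
  toFun g := ⟨fun i => g ⟦i⟧, by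
    intro i
    apply congrArg g
    apply Quotient.sound
    exact (⟨-1, by simp⟩ : σ.SameCycle (σ i) i)⟩
  map_add' g h := rfl
  map_smul' c g := rfl

lemma fixedMap_bijective (σ : Equiv.Perm α) : Function.Bijective (fixedMap σ) := by
  constructor
  · intro g h hef
    funext q
    obtain ⟨x, rfl⟩ := Quotient.exists_rep q
    have : (fixedMap σ g).1 x = (fixedMap σ h).1 x := by rw [hef]
    exact this
  · intro f
    refine ⟨fun q => f.1 q.out, ?_⟩
    apply Subtype.ext
    funext i
    show f.1 (Quotient.mk _ i).out = f.1 i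
    have h : (sameCycleSetoid σ).r (⟦i⟧ : Quotient (sameCycleSetoid σ)).out i :=
      Quotient.mk_out i
    exact apply_eq_of_sameCycle f.2 h

lemma finrank_fixedSpace (σ : Equiv.Perm α) :
    Module.finrank F2 (fixedSpace σ) =
      σ.cycleType.card + (Fintype.card α - σ.support.card) := by
  have e : (Quotient (sameCycleSetoid σ) → F2) ≃ₗ[F2] fixedSpace σ :=
    LinearEquiv.ofBijective (fixedMap σ) (fixedMap_bijective σ)
  rw [← e.finrank_eq, Module.finrank_pi, card_orbits_eq_numCycles']

end Sobo
namespace Sobo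

section Main

variable {N : ℕ} [NeZero N] (m : Equiv.Perm (ZMod N))

lemma val_sub' (x a : ZMod N) :
    (x - a).val = (x.val + (N - a.val)) % N := by
  have h1 : ((x.val : ℕ) : ZMod N) = x := ZMod.natCast_rightInverse x
  have h2 : ((a.val : ℕ) : ZMod N) = a := ZMod.natCast_rightInverse a
  have h3 : (x - a) = (((x.val + (N - a.val)) : ℕ) : ZMod N) := by
    push_cast [Nat.cast_sub (ZMod.val_lt a).le]
    rw [h1, h2, ZMod.natCast_self]
    ring
  rw [h3, ZMod.val_natCast]

lemma cyclicBtw_iff' {a b : ZMod N} (hab : a.val < b.val) (x : ZMod N) :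
    cyclicBtw a x b ↔ a.val < x.val ∧ x.val < b.val := by
  have hxN := ZMod.val_lt x
  have haN := ZMod.val_lt a
  have hbN := ZMod.val_lt b
  unfold cyclicBtw
  rw [val_sub' x a, val_sub' b a]
  have e2 : (b.val + (N - a.val)) % N = b.val - a.val := by
    rw [show b.val + (N - a.val) = (b.val - a.val) + N by omega,
      Nat.add_mod_right, Nat.mod_eq_of_lt (by omega)]
  rcases le_or_gt a.val x.val with h | h
  · have e1 : (x.val + (N - a.val)) % N = x.val - a.val := by
      rw [show x.val + (N - a.val) = (x.val - a.val) + N by omega,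
        Nat.add_mod_right, Nat.mod_eq_of_lt (by omega)]
    rw [e1, e2]; omega
  · have e1 : (x.val + (N - a.val)) % N = x.val + (N - a.val) :=
      Nat.mod_eq_of_lt (by omega)
    rw [e1, e2]; omega

variable (hinv : ∀ i, m (m i) = i) (hfpf : ∀ i, m i ≠ i)
include hinv hfpf

lemma mval_ne (i : ZMod N) : (m i).val ≠ i.val := by
  intro h
  exact hfpf i (ZMod.val_injective N h)

/-- The chord of the diagram containing a given point. -/
def chord (hinv : ∀ i, m (m i) = i) (hfpf : ∀ i, m i ≠ i) (i : ZMod N) : ChordIdx m :=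
  if h : i.val < (m i).val then ⟨i, h⟩
  else ⟨m i, by
    have h1 : (m (m i)).val = i.val := by rw [hinv]
    have h2 := mval_ne m hinv hfpf i
    omega⟩

lemma chord_eq_iff (i : ZMod N) (d : ChordIdx m) :
    chord m hinv hfpf i = d ↔ i = d.1 ∨ i = m d.1 := by
  obtain ⟨h, e⟩ | ⟨h, p, e⟩ : (∃ h : i.val < (m i).val, chord m hinv hfpf i = ⟨i, h⟩) ∨
      (∃ _ : ¬ i.val < (m i).val, ∃ p, chord m hinv hfpf i = ⟨m i, p⟩) :=
    (em _).imp (fun h => ⟨h, dif_pos h⟩) (fun h => ⟨h, _, dif_neg h⟩)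
  all_goals rw [e]
  · constructor
    · rintro rfl; left; rfl
    · rintro (rfl | h2)
      · rfl
      · exfalso
        subst h2
        rw [hinv] at h
        have := d.2
        omega
  · constructor
    · rintro rfl
      right
      rw [hinv]
    · rintro (rfl | h2)
      · exfalso
        have := d.2
        omega
      · subst h2
        apply Subtype.ext
        show m (m d.1) = d.1
        rw [hinv]
  
lemma chord_fst (d : ChordIdx m) : chord m hinv hfpf d.1 = d :=
  (chord_eq_iff m hinv hfpf _ d).2 (Or.inl rfl)

lemma chord_snd (d : ChordIdx m) : chord m hinv hfpf (m d.1) = d :=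
  (chord_eq_iff m hinv hfpf _ d).2 (Or.inr rfl)

lemma chord_ne_iff (i : ZMod N) (d : ChordIdx m) :
    chord m hinv hfpf i ≠ d ↔ i ≠ d.1 ∧ i ≠ m d.1 := by
  rw [Ne, chord_eq_iff m hinv hfpf]
  exact not_or

lemma chord_of_lt {i : ZMod N} (h : i.val < (m i).val) :
    chord m hinv hfpf i = ⟨i, h⟩ := dif_pos h

lemma chord_fst_of_not_lt {i : ZMod N} (h : ¬ i.val < (m i).val) :
    (chord m hinv hfpf i).1 = m i := by
  unfold chord
  exact congrArg Subtype.val (dif_neg h)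

/-- Points of the circle = chords × Bool. -/
def pointEquiv (hinv : ∀ i, m (m i) = i) (hfpf : ∀ i, m i ≠ i) : ChordIdx m × Bool ≃ ZMod N where
  toFun p := if p.2 then m p.1.1 else p.1.1
  invFun i := ⟨chord m hinv hfpf i, decide (¬ i.val < (m i).val)⟩
  left_inv := by
    rintro ⟨⟨a, ha⟩, b⟩
    have h1 : (m (m a)).val = a.val := by rw [hinv]
    cases b
    · show (chord m hinv hfpf a, decide (¬ a.val < (m a).val)) = (⟨a, ha⟩, false)
      rw [chord_of_lt m hinv hfpf ha]
      simp [ha]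
    · show (chord m hinv hfpf (m a), decide (¬ (m a).val < (m (m a)).val)) = (⟨a, ha⟩, true)
      rw [(chord_eq_iff m hinv hfpf (m a) ⟨a, ha⟩).2 (Or.inr rfl)]
      simp only [Prod.mk.injEq, true_and, decide_eq_true_eq, h1]
      rw [decide_eq_true (by omega : ¬(m a).val < a.val)]
  right_inv := by
    intro i
    by_cases h : i.val < (m i).val
    · show (if decide (¬ i.val < (m i).val) then m (chord m hinv hfpf i).1
        else (chord m hinv hfpf i).1) = i
      rw [chord_of_lt m hinv hfpf h]
      simp [h]
    · show (if decide (¬ i.val < (m i).val) then m (chord m hinv hfpf i).1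
        else (chord m hinv hfpf i).1) = i
      rw [chord_fst_of_not_lt m hinv hfpf h]
      simp [h, hinv i]

lemma two_mul_card_chordIdx : 2 * Fintype.card (ChordIdx m) = N := by
  have h := Fintype.card_congr (pointEquiv m hinv hfpf)
  rw [Fintype.card_prod, Fintype.card_bool, ZMod.card] at h
  omega

lemma sum_chord_pairs {M : Type*} [AddCommMonoid M] (f : ZMod N → M) :
    ∑ i : ZMod N, f i = ∑ c : ChordIdx m, (f c.1 + f (m c.1)) := by
  rw [← Equiv.sum_comp (pointEquiv m hinv hfpf) f, Fintype.sum_prod_type]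
  apply Finset.sum_congr rfl
  intro c _
  rw [Fintype.sum_bool]
  unfold pointEquiv
  simp [add_comm]

end Main

end Sobo
namespace Sobo

section Vectors

variable {N : ℕ} [NeZero N] (m : Equiv.Perm (ZMod N))

/-- The column of the "trip matrix": `e_{j-1} + e_{m j}`. -/
def uvec (j : ZMod N) : ZMod N → F2 := Pi.single (j - 1) 1 + Pi.single (m j) 1

lemma val_add_one (hN : 1 < N) (x : ZMod N) : (x + 1).val = (x.val + 1) % N := by
  haveI : Fact (1 < N) := ⟨hN⟩
  rw [ZMod.val_add, ZMod.val_one]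

lemma sum_uvec_apply (hinv : ∀ i, m (m i) = i) (P : ZMod N → Prop) [DecidablePred P]
    (i : ZMod N) :
    (∑ j ∈ Finset.univ.filter P, uvec m j) i =
      (if P (i + 1) then 1 else 0) + (if P (m i) then 1 else 0) := by
  rw [Finset.sum_apply]
  have key : ∀ j, uvec m j i =
      (if j = i + 1 then (1 : F2) else 0) + (if j = m i then 1 else 0) := by
    intro j
    unfold uvec
    rw [Pi.add_apply, Pi.single_apply, Pi.single_apply]
    congr 1
    · apply if_congr _ rfl rfl
      rw [eq_sub_iff_add_eq]
      constructor
      · intro h; exact h.symm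
      · intro h; exact h.symm
    · apply if_congr _ rfl rfl
      constructor
      · intro h; rw [h, hinv]
      · intro h; rw [h, hinv]
  rw [Finset.sum_congr rfl (fun j _ => key j), Finset.sum_add_distrib,
    Finset.sum_ite_eq' _ (i + 1) (fun _ => (1 : F2)),
    Finset.sum_ite_eq' _ (m i) (fun _ => (1 : F2))]
  simp [Finset.mem_filter]

/-- Partial sums of the `uvec`s along the circle. -/
def svec (t : ℕ) : ZMod N → F2 :=
  ∑ j ∈ Finset.univ.filter (fun j : ZMod N => 1 ≤ j.val ∧ j.val ≤ t), uvec m j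

/-- The sum of the `uvec`s over the cyclic interval defined by a chord. -/
def wvec (c : ChordIdx m) : ZMod N → F2 :=
  ∑ j ∈ Finset.univ.filter
      (fun j : ZMod N => c.1.val < j.val ∧ j.val ≤ (m c.1).val), uvec m j

lemma svec_apply (hinv : ∀ i, m (m i) = i) (t : ℕ) (i : ZMod N) :
    svec m t i = (if 1 ≤ (i + 1).val ∧ (i + 1).val ≤ t then 1 else 0) +
      (if 1 ≤ (m i).val ∧ (m i).val ≤ t then 1 else 0) :=
  sum_uvec_apply m hinv _ i

lemma wvec_apply (hinv : ∀ i, m (m i) = i) (c : ChordIdx m) (i : ZMod N) :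
    wvec m c i = (if c.1.val < (i + 1).val ∧ (i + 1).val ≤ (m c.1).val then 1 else 0) +
      (if c.1.val < (m i).val ∧ (m i).val ≤ (m c.1).val then 1 else 0) :=
  sum_uvec_apply m hinv _ i

lemma svec_zero : svec m 0 = 0 := by
  unfold svec
  have : Finset.univ.filter (fun j : ZMod N => 1 ≤ j.val ∧ j.val ≤ 0) = ∅ := by
    apply Finset.filter_false_of_mem
    intro j _
    omega
  rw [this, Finset.sum_empty]

lemma svec_split (c : ChordIdx m) :
    svec m ((m c.1).val) = svec m (c.1.val) + wvec m c := by
  unfold svec wvec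
  rw [← Finset.sum_union]
  · apply Finset.sum_congr _ (fun _ _ => rfl)
    ext j
    have hc := c.2
    simp only [Finset.mem_union, Finset.mem_filter, Finset.mem_univ, true_and]
    omega
  · rw [Finset.disjoint_left]
    intro j hj hj'
    simp only [Finset.mem_filter, Finset.mem_univ, true_and] at hj hj'
    omega

variable (hinv : ∀ i, m (m i) = i) (hfpf : ∀ i, m i ≠ i)
include hinv hfpf

lemma chord0_fst : (chord m hinv hfpf 0).1 = 0 := by
  have h : (0 : ZMod N).val < (m 0).val := by
    have h1 := mval_ne m hinv hfpf 0
    have h2 : (0 : ZMod N).val = 0 := ZMod.val_zero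
    omega
  rw [chord_of_lt m hinv hfpf h]

lemma svec_last : svec m (N - 1) = uvec m 0 := by
  funext i
  have hiN := ZMod.val_lt (i + 1)
  have hmN := ZMod.val_lt (m i)
  rw [svec_apply m hinv]
  have h10 : i + 1 = 0 ↔ (i + 1).val = 0 := by
    constructor
    · intro h; rw [h, ZMod.val_zero]
    · intro h; exact ZMod.val_injective N (by rw [h, ZMod.val_zero])
  have hmi0 : i = m 0 ↔ (m i).val = 0 := by
    constructor
    · intro h; rw [h, hinv, ZMod.val_zero]
    · intro h
      have h2 : m i = 0 := ZMod.val_injective N (by rw [h, ZMod.val_zero])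
      rw [← hinv i, h2]
  have e1 : (1 ≤ (i + 1).val ∧ (i + 1).val ≤ N - 1) ↔ ¬ (i + 1 = 0) := by
    rw [h10]; omega
  have e2 : (1 ≤ (m i).val ∧ (m i).val ≤ N - 1) ↔ ¬ (i = m 0) := by
    rw [hmi0]; omega
  have e3 : (i = 0 - 1) ↔ (i + 1 = 0) := by
    rw [eq_sub_iff_add_eq]
  unfold uvec
  rw [Pi.add_apply, Pi.single_apply, Pi.single_apply,
    if_congr e1 rfl rfl, if_congr e2 rfl rfl, if_congr e3 rfl rfl]
  split_ifs <;> first | decide | tauto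

lemma natCast_eq_iff_val (t : ℕ) (ht : t < N) (x : ZMod N) :
    (t : ZMod N) = x ↔ t = x.val := by
  constructor
  · intro h
    rw [← h, ZMod.val_cast_of_lt ht]
  · intro h
    rw [h]
    exact ZMod.natCast_rightInverse x

/-- The key computation: `φ` of the partial sums. -/
lemma svec_pair_apply (hN : 1 < N) (t : ℕ) (ht1 : 1 ≤ t) (ht2 : t ≤ N - 1)
    (d : ChordIdx m) :
    svec m t d.1 + svec m t (m d.1) =
      (if d = chord m hinv hfpf (t : ZMod N) then 1 else 0) +
      (if d = chord m hinv hfpf 0 then 1 else 0) := by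
  have hAB := d.2
  have hBN := ZMod.val_lt (m d.1)
  have hAN := ZMod.val_lt d.1
  have hmm : m (m d.1) = d.1 := hinv d.1
  -- rewrite RHS conditions
  have hc1 : (d = chord m hinv hfpf (t : ZMod N)) ↔ (t = d.1.val ∨ t = (m d.1).val) := by
    rw [eq_comm, chord_eq_iff m hinv hfpf]
    rw [natCast_eq_iff_val m hinv hfpf t (by omega) d.1,
      natCast_eq_iff_val m hinv hfpf t (by omega) (m d.1)]
  have hc2 : (d = chord m hinv hfpf 0) ↔ (d.1.val = 0) := by
    rw [eq_comm, chord_eq_iff m hinv hfpf]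
    constructor
    · rintro (h | h)
      · rw [← h, ZMod.val_zero]
      · exfalso
        have : (m d.1).val = 0 := by rw [← h, ZMod.val_zero]
        omega
    · intro h
      left
      exact (ZMod.val_injective N (by rw [ZMod.val_zero, h])).symm
  rw [if_congr hc1 rfl rfl, if_congr hc2 rfl rfl]
  -- rewrite LHS
  rw [svec_apply m hinv, svec_apply m hinv, hmm]
  have eA : (d.1 + 1).val = d.1.val + 1 := by
    rw [val_add_one (N := N) hN, Nat.mod_eq_of_lt (by omega)]
  have eB : ((m d.1) + 1).val = ((m d.1).val + 1) % N := val_add_one (N := N) hN _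
  rw [eA, eB]
  rcases Nat.lt_or_ge ((m d.1).val) (N - 1) with hB | hB
  · have : ((m d.1).val + 1) % N = (m d.1).val + 1 := Nat.mod_eq_of_lt (by omega)
    rw [this]
    split_ifs <;> first | decide | omega | (exfalso; omega)
  · have hBeq : (m d.1).val = N - 1 := by omega
    have : ((m d.1).val + 1) % N = 0 := by
      rw [hBeq, show N - 1 + 1 = N by omega, Nat.mod_self]
    rw [this]
    split_ifs <;> first | decide | omega | (exfalso; omega)

end Vectors

end Sobo
namespace Sobo

instance (P Q : Prop) [Decidable P] [Decidable Q] : Decidable (Xor' P Q) := by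
  unfold Xor'; infer_instance

lemma ite_xor' (P Q : Prop) [Decidable P] [Decidable Q] :
    (if Xor' P Q then (1 : F2) else 0) = (if P then 1 else 0) + (if Q then 1 else 0) := by
  by_cases hP : P <;> by_cases hQ : Q <;> simp [Xor', hP, hQ] <;> decide

section Vectors2

variable {N : ℕ} [NeZero N] (m : Equiv.Perm (ZMod N))
variable (hinv : ∀ i, m (m i) = i) (hfpf : ∀ i, m i ≠ i)
include hinv hfpf

lemma chordLinked_iff (c : ChordIdx m) (i : ZMod N) :
    ChordLinked m c.1 (chord m hinv hfpf i).1 ↔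
      Xor' (cyclicBtw c.1 i (m c.1)) (cyclicBtw c.1 (m i) (m c.1)) := by
  by_cases h : i.val < (m i).val
  · rw [chord_of_lt m hinv hfpf h]
    exact Iff.rfl
  · have h1 : (chord m hinv hfpf i).1 = m i := chord_fst_of_not_lt m hinv hfpf h
    rw [h1]
    unfold ChordLinked
    rw [hinv i]
    constructor
    · intro hx; exact hx.symm
    · intro hx; exact hx.symm

lemma wvec_eq_row (hN : 1 < N) (c : ChordIdx m) (i : ZMod N) :
    wvec m c i = interMat m c (chord m hinv hfpf i) := by
  have hAB := c.2
  have hBN := ZMod.val_lt (m c.1)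
  have hiN := ZMod.val_lt i
  have hmiN := ZMod.val_lt (m i)
  rw [wvec_apply m hinv]
  by_cases hcd : c = chord m hinv hfpf i
  · have h0 : interMat m c (chord m hinv hfpf i) = 0 := by
      unfold interMat
      rw [if_pos hcd]
    rw [h0]
    rcases (chord_eq_iff m hinv hfpf i c).1 hcd.symm with h | h
    · rw [h]
      have eA : (c.1 + 1).val = c.1.val + 1 := by
        rw [val_add_one (N := N) hN, Nat.mod_eq_of_lt (by omega)]
      rw [eA]
      split_ifs <;> first | decide | (exfalso; omega)
    · rw [h, hinv]
      have eB : ((m c.1) + 1).val = ((m c.1).val + 1) % N := val_add_one (N := N) hN _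
      rw [eB]
      rcases Nat.lt_or_ge ((m c.1).val) (N - 1) with hB | hB
      · have e : ((m c.1).val + 1) % N = (m c.1).val + 1 := Nat.mod_eq_of_lt (by omega)
        rw [e]
        split_ifs <;> first | decide | (exfalso; omega)
      · have e : ((m c.1).val + 1) % N = 0 := by
          rw [show (m c.1).val + 1 = N by omega, Nat.mod_self]
        rw [e]
        split_ifs <;> first | decide | (exfalso; omega)
  · have h0 : interMat m c (chord m hinv hfpf i) =
        if ChordLinked m c.1 (chord m hinv hfpf i).1 then 1 else 0 := by
      unfold interMat
      rw [if_neg hcd]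
    rw [h0, if_congr (chordLinked_iff m hinv hfpf c i) rfl rfl, ite_xor',
      if_congr (cyclicBtw_iff' c.2 i) rfl rfl,
      if_congr (cyclicBtw_iff' c.2 (m i)) rfl rfl]
    have hne := (chord_ne_iff m hinv hfpf i c).1 (fun h => hcd h.symm)
    have hv1 : i.val ≠ c.1.val := fun h => hne.1 (ZMod.val_injective N h)
    have hv2 : i.val ≠ (m c.1).val := fun h => hne.2 (ZMod.val_injective N h)
    have hv3 : (m i).val ≠ c.1.val := by
      intro h
      have : m i = c.1 := ZMod.val_injective N h
      exact hne.2 (by rw [← hinv i, this])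
    have hv4 : (m i).val ≠ (m c.1).val := by
      intro h
      have h2 : m i = m c.1 := ZMod.val_injective N h
      have := congrArg m h2
      rw [hinv, hinv] at this
      exact hne.1 this
    rcases Nat.lt_or_ge i.val (N - 1) with hi | hi
    · have eA : (i + 1).val = i.val + 1 := by
        rw [val_add_one (N := N) hN, Nat.mod_eq_of_lt (by omega)]
      rw [eA]
      split_ifs <;> first | decide | (exfalso; omega)
    · have eA : (i + 1).val = 0 := by
        rw [val_add_one (N := N) hN, show i.val + 1 = N by omega, Nat.mod_self]
      rw [eA]
      split_ifs <;> first | decide | (exfalso; omega)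

end Vectors2

end Sobo
namespace Sobo

open Submodule LinearMap Module

section Helpers2

variable {M : Type*} [AddCommGroup M] [Module F2 M]

/-- The indicator function of a point, with values in `ℤ/2`. -/
def sing {ι : Type*} [DecidableEq ι] (c : ι) : ι → F2 := Pi.single c 1

lemma sing_apply {ι : Type*} [DecidableEq ι] (c x : ι) :
    sing c x = if x = c then 1 else 0 := Pi.single_apply c 1 x

lemma mod2_add_self (x : M) : x + x = 0 := by
  have h : ((1 : F2) + 1) • x = x + x := by rw [add_smul, one_smul]
  have h2 : ((1 : F2) + 1) = 0 := by decide
  rw [h2, zero_smul] at h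
  exact h.symm

lemma mod2_add_eq_zero {x y : M} (h : x + y = 0) : x = y := by
  have : x + (y + y) = 0 + y := by rw [← add_assoc, h]
  rwa [mod2_add_self, add_zero, zero_add] at this

lemma mod2_cancel {x y z : M} (h : x = y + z) : z = y + x := by
  rw [h, ← add_assoc, mod2_add_self, zero_add]

lemma F2_add_eq_zero (x y : F2) : x + y = 0 ↔ x = y := by revert x y; decide

lemma sum_single_one {ι : Type*} [Fintype ι] [DecidableEq ι] (c : ι) :
    ∑ x : ι, sing c x = 1 := by
  simp [sing_apply]

lemma range_eq_span_single {ι : Type*} [Fintype ι] [DecidableEq ι]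
    (f : (ι → F2) →ₗ[F2] M) :
    LinearMap.range f = Submodule.span F2 (Set.range fun i => f (sing i)) := by
  conv_lhs => rw [← Submodule.map_top, ← (Pi.basisFun F2 ι).span_eq]
  rw [Submodule.map_span, ← Set.range_comp]
  have hre : (⇑f ∘ ⇑(Pi.basisFun F2 ι)) = fun i => f (sing i) := by
    funext i
    simp [Function.comp, Pi.basisFun_apply, sing]
  rw [hre]

lemma finrank_split {V W : Type*} [AddCommGroup V] [Module F2 V] [FiniteDimensional F2 V]
    [AddCommGroup W] [Module F2 W] (p : Submodule F2 V) (f : V →ₗ[F2] W) :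
    finrank F2 p = finrank F2 (p.map f) + finrank F2 ↥(p ⊓ LinearMap.ker f) := by
  have h := LinearMap.finrank_range_add_finrank_ker (f.domRestrict p)
  rw [LinearMap.range_domRestrict, LinearMap.ker_domRestrict] at h
  have heq : (LinearMap.ker f).comap p.subtype = (p ⊓ LinearMap.ker f).comap p.subtype := by
    ext x
    simp only [Submodule.mem_comap, Submodule.mem_inf]
    exact ⟨fun hx => ⟨x.2, hx⟩, fun hx => hx.2⟩
  rw [heq] at h
  rw [(Submodule.comapSubtypeEquivOfLe (inf_le_left : p ⊓ LinearMap.ker f ≤ p)).finrank_eq] at h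
  omega

/-- `θ g = g + (∑ g) • δ_{c₀}`. -/
def thetaMap {ι : Type*} [Fintype ι] [DecidableEq ι] (c0 : ι) : (ι → F2) →ₗ[F2] (ι → F2) where
  toFun g := g + (∑ c, g c) • sing c0
  map_add' g h := by
    simp only [Pi.add_apply, Finset.sum_add_distrib, add_smul]
    module
  map_smul' r g := by
    simp only [Pi.smul_apply, smul_eq_mul, ← Finset.mul_sum, RingHom.id_apply]
    rw [smul_add, smul_smul]

lemma thetaMap_apply {ι : Type*} [Fintype ι] [DecidableEq ι] (c0 : ι) (g : ι → F2) :
    thetaMap c0 g = g + (∑ c, g c) • sing c0 := rfl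

lemma theta_single {ι : Type*} [Fintype ι] [DecidableEq ι] (c0 c : ι) :
    thetaMap c0 (sing c) = sing c + sing c0 := by
  rw [thetaMap_apply, sum_single_one, one_smul]

lemma range_theta {ι : Type*} [Fintype ι] [DecidableEq ι] (c0 : ι) :
    LinearMap.range (thetaMap c0) =
      Submodule.span F2 (Set.range fun c => sing c + sing c0) := by
  rw [range_eq_span_single]
  have he : (fun c => thetaMap c0 (sing c)) = fun c => sing c + sing c0 := by
    funext c
    rw [theta_single]
  rw [he]

lemma ker_theta {ι : Type*} [Fintype ι] [DecidableEq ι] (c0 : ι) :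
    LinearMap.ker (thetaMap c0) = Submodule.span F2 {sing c0} := by
  ext g
  rw [LinearMap.mem_ker, Submodule.mem_span_singleton]
  constructor
  · intro h
    have h' : g + (∑ c, g c) • sing c0 = 0 := h
    exact ⟨∑ c, g c, (mod2_add_eq_zero h').symm⟩
  · rintro ⟨a, rfl⟩
    rw [thetaMap_apply]
    have h2 : (∑ c, (a • sing c0) c) = a := by
      simp only [Pi.smul_apply, smul_eq_mul, ← Finset.mul_sum]
      rw [sum_single_one, mul_one]
    rw [h2]
    exact mod2_add_self _

lemma finrank_range_theta {ι : Type*} [Fintype ι] [DecidableEq ι] (c0 : ι) :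
    finrank F2 (LinearMap.range (thetaMap c0)) = Fintype.card ι - 1 ∧
      1 ≤ Fintype.card ι := by
  have h := LinearMap.finrank_range_add_finrank_ker (thetaMap c0)
  rw [Module.finrank_pi] at h
  have hk : finrank F2 (LinearMap.ker (thetaMap c0)) = 1 := by
    rw [ker_theta]
    apply finrank_span_singleton
    intro h0
    have h1 := congrFun h0 c0
    rw [sing_apply, if_pos rfl] at h1
    exact one_ne_zero h1
  rw [hk] at h
  constructor
  · omega
  · omega

end Helpers2

section LinMaps

variable {N : ℕ} [NeZero N] (m : Equiv.Perm (ZMod N))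

/-- `T_σ f = f ∘ σ + f`. -/
def Tmap {β : Type*} [Fintype β] [DecidableEq β] (σ : Equiv.Perm β) :
    (β → F2) →ₗ[F2] (β → F2) where
  toFun f := fun i => f (σ i) + f i
  map_add' f g := by funext i; simp only [Pi.add_apply]; ring
  map_smul' c f := by funext i; simp only [Pi.smul_apply, smul_eq_mul, RingHom.id_apply]; ring

lemma ker_Tmap {β : Type*} [Fintype β] [DecidableEq β] (σ : Equiv.Perm β) :
    LinearMap.ker (Tmap σ) = fixedSpace σ := by
  ext f
  rw [LinearMap.mem_ker]
  constructor
  · intro h i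
    exact F2_add_eq_zero _ _ |>.1 (congrFun h i)
  · intro h
    funext i
    exact (F2_add_eq_zero _ _).2 (h i)

def Gmap : (ZMod N → F2) →ₗ[F2] (ZMod N → F2) where
  toFun f := fun i => f (m i)
  map_add' _ _ := rfl
  map_smul' _ _ := rfl

def Bmap : (ZMod N → F2) →ₗ[F2] (ZMod N → F2) where
  toFun f := fun i => f (i + 1) + f (m i)
  map_add' f g := by funext i; simp only [Pi.add_apply]; ring
  map_smul' c f := by funext i; simp only [Pi.smul_apply, smul_eq_mul, RingHom.id_apply]; ring

/-- `φ f (c) = f(c₁) + f(m c₁)`, the sum over the endpoints of the chord. -/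
def phiMap : (ZMod N → F2) →ₗ[F2] (ChordIdx m → F2) where
  toFun f := fun c => f c.1 + f (m c.1)
  map_add' f g := by funext c; simp only [Pi.add_apply]; ring
  map_smul' c f := by funext d; simp only [Pi.smul_apply, smul_eq_mul, RingHom.id_apply]; ring

def psiMap (hinv : ∀ i, m (m i) = i) (hfpf : ∀ i, m i ≠ i) :
    (ChordIdx m → F2) →ₗ[F2] (ZMod N → F2) where
  toFun g := fun i => g (chord m hinv hfpf i)
  map_add' _ _ := rfl
  map_smul' _ _ := rfl

variable (hinv : ∀ i, m (m i) = i) (hfpf : ∀ i, m i ≠ i)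
include hinv hfpf

lemma Bmap_single (j : ZMod N) : Bmap m (sing j) = uvec m j := by
  funext i
  have h : Bmap m (sing j) i = sing j (i + 1) + sing j (m i) := rfl
  rw [h]
  unfold uvec sing
  rw [Pi.add_apply, Pi.single_apply, Pi.single_apply, Pi.single_apply, Pi.single_apply]
  congr 1
  · apply if_congr _ rfl rfl
    rw [eq_comm, eq_sub_iff_add_eq, eq_comm]
  · apply if_congr _ rfl rfl
    constructor
    · intro h; rw [← h, hinv]
    · intro h; rw [h, hinv]

lemma Tcomp :
    (Tmap ((Equiv.addRight (1 : ZMod N)).trans m)).comp (Gmap m) = Bmap m := by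
  apply LinearMap.ext
  intro f
  funext i
  show f (m (m (i + 1))) + f (m i) = f (i + 1) + f (m i)
  rw [hinv]

lemma Gmap_range_top : LinearMap.range (Gmap m) = ⊤ := by
  rw [LinearMap.range_eq_top]
  intro f
  refine ⟨Gmap m f, ?_⟩
  funext i
  show f (m (m i)) = f i
  rw [hinv]

lemma range_Tmap_eq :
    LinearMap.range (Tmap ((Equiv.addRight (1 : ZMod N)).trans m)) =
      Submodule.span F2 (Set.range (uvec m)) := by
  have h1 : LinearMap.range (Bmap m) = Submodule.span F2 (Set.range (uvec m)) := by
    rw [range_eq_span_single]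
    have he : (fun j => Bmap m (sing j)) = uvec m := by
      funext j
      rw [Bmap_single m hinv hfpf]
    rw [he]
  rw [← h1, ← Tcomp m hinv hfpf, LinearMap.range_comp, Gmap_range_top m hinv hfpf,
    Submodule.map_top]

end LinMaps

end Sobo
namespace Sobo

open Submodule LinearMap Module

lemma mod2_rearrange {M : Type*} [AddCommGroup M] [Module F2 M] {x y z : M}
    (h : x = y + z) : y = x + z := by
  rw [h, add_assoc, mod2_add_self, add_zero]

section Spans

variable {N : ℕ} [NeZero N] (m : Equiv.Perm (ZMod N))

/-- The partial-sum vectors indexed by points of the circle. -/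
def sfam : ZMod N → (ZMod N → F2) := fun j => svec m j.val

lemma sfam_zero : sfam m 0 = 0 := by
  unfold sfam
  rw [ZMod.val_zero]
  exact svec_zero m

lemma wvec_eq_sfam_sum (c : ChordIdx m) :
    wvec m c = sfam m c.1 + sfam m (m c.1) := by
  have h := svec_split m c
  have h2 := mod2_cancel h
  exact h2

variable (hinv : ∀ i, m (m i) = i) (hfpf : ∀ i, m i ≠ i)
include hinv hfpf

lemma val_ne_zero_of_ne_zero {j : ZMod N} (hj : j ≠ 0) : 1 ≤ j.val := by
  rcases Nat.eq_zero_or_pos j.val with h | h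
  · exact absurd (ZMod.val_injective N (by rw [h, ZMod.val_zero])) hj
  · omega

lemma val_sub_one (hN : 1 < N) {j : ZMod N} (hj : j ≠ 0) : (j - 1).val = j.val - 1 := by
  haveI : Fact (1 < N) := ⟨hN⟩
  have h1 := val_ne_zero_of_ne_zero m hinv hfpf hj
  have h2 := ZMod.val_lt j
  rw [val_sub', ZMod.val_one,
    show j.val + (N - 1) = (j.val - 1) + N by omega, Nat.add_mod_right,
    Nat.mod_eq_of_lt (by omega)]

lemma svec_step (j : ZMod N) (hj : j ≠ 0) :
    svec m j.val = uvec m j + svec m (j.val - 1) := by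
  have h1 := val_ne_zero_of_ne_zero m hinv hfpf hj
  have hins : Finset.univ.filter (fun k : ZMod N => 1 ≤ k.val ∧ k.val ≤ j.val) =
      insert j (Finset.univ.filter (fun k : ZMod N => 1 ≤ k.val ∧ k.val ≤ j.val - 1)) := by
    ext k
    simp only [Finset.mem_insert, Finset.mem_filter, Finset.mem_univ, true_and]
    constructor
    · intro h
      by_cases hk : k = j
      · exact Or.inl hk
      · have : k.val ≠ j.val := fun he => hk (ZMod.val_injective N he)
        exact Or.inr (by omega)
    · rintro (rfl | h) <;> omega
  have hnotmem : j ∉ Finset.univ.filter (fun k : ZMod N => 1 ≤ k.val ∧ k.val ≤ j.val - 1) := by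
    simp only [Finset.mem_filter, Finset.mem_univ, true_and]
    omega
  unfold svec
  rw [hins, Finset.sum_insert hnotmem]

lemma span_uvec_eq_sfam (hN : 1 < N) :
    span F2 (Set.range (uvec m)) = span F2 (Set.range (sfam m)) := by
  apply le_antisymm <;> rw [Submodule.span_le]
  · rintro _ ⟨j, rfl⟩
    by_cases hj : j = 0
    · subst hj
      have hx : sfam m (((N - 1 : ℕ) : ZMod N)) = uvec m 0 := by
        unfold sfam
        rw [ZMod.val_cast_of_lt (by omega), svec_last m hinv hfpf]
      rw [← hx]
      exact Submodule.subset_span ⟨_, rfl⟩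
    · have h2 := svec_step m hinv hfpf j hj
      have h1 : uvec m j = svec m j.val + svec m (j.val - 1) := mod2_rearrange h2
      have h3 : sfam m (j - 1) = svec m (j.val - 1) := by
        unfold sfam
        rw [val_sub_one m hinv hfpf hN hj]
      have h4 : uvec m j = sfam m j + sfam m (j - 1) := by
        rw [h1, ← h3]
        rfl
      rw [h4]
      exact Submodule.add_mem _ (Submodule.subset_span ⟨j, rfl⟩)
        (Submodule.subset_span ⟨j - 1, rfl⟩)
  · rintro _ ⟨j, rfl⟩
    show sfam m j ∈ _
    unfold sfam svec
    exact Submodule.sum_mem _ (fun k _ => Submodule.subset_span ⟨k, rfl⟩)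

lemma phi_sfam_apply (hN : 1 < N) {j : ZMod N} (hj : j ≠ 0) :
    phiMap m (sfam m j) =
      sing (chord m hinv hfpf j) + sing (chord m hinv hfpf 0) := by
  funext d
  have hv1 := val_ne_zero_of_ne_zero m hinv hfpf hj
  have hv2 : j.val ≤ N - 1 := by
    have := ZMod.val_lt j
    omega
  have h := svec_pair_apply m hinv hfpf hN j.val hv1 hv2 d
  rw [ZMod.natCast_rightInverse j] at h
  show svec m j.val d.1 + svec m j.val (m d.1) = _
  rw [h, Pi.add_apply, sing_apply, sing_apply]

lemma phi_wvec (hN : 1 < N) (c : ChordIdx m) : phiMap m (wvec m c) = 0 := by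
  funext d
  show wvec m c d.1 + wvec m c (m d.1) = 0
  rw [wvec_eq_row m hinv hfpf hN c d.1, wvec_eq_row m hinv hfpf hN c (m d.1),
    chord_fst m hinv hfpf d, chord_snd m hinv hfpf d]
  exact (F2_add_eq_zero _ _).2 rfl

lemma map_phi_W (hN : 1 < N) :
    Submodule.map (phiMap m) (span F2 (Set.range (uvec m))) =
      LinearMap.range (thetaMap (chord m hinv hfpf 0)) := by
  rw [span_uvec_eq_sfam m hinv hfpf hN, Submodule.map_span, ← Set.range_comp, range_theta]
  apply le_antisymm <;> rw [Submodule.span_le]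
  · rintro _ ⟨j, rfl⟩
    show (phiMap m) (sfam m j) ∈ _
    by_cases hj : j = 0
    · rw [hj, sfam_zero m, map_zero]
      exact Submodule.zero_mem _
    · rw [phi_sfam_apply m hinv hfpf hN hj]
      exact Submodule.subset_span ⟨chord m hinv hfpf j, rfl⟩
  · rintro _ ⟨d, rfl⟩
    show sing d + sing (chord m hinv hfpf 0) ∈ _
    by_cases hd : d = chord m hinv hfpf 0
    · rw [hd, mod2_add_self]
      exact Submodule.zero_mem _
    · have hd1 : d.1 ≠ 0 := by
        intro h0
        apply hd
        rw [← chord_fst m hinv hfpf d, h0]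
      have hh : phiMap m (sfam m d.1) = sing d + sing (chord m hinv hfpf 0) := by
        rw [phi_sfam_apply m hinv hfpf hN hd1, chord_fst m hinv hfpf d]
      rw [← hh]
      exact Submodule.subset_span ⟨d.1, rfl⟩

lemma inf_ker_phi (hN : 1 < N) :
    span F2 (Set.range (uvec m)) ⊓ LinearMap.ker (phiMap m) =
      span F2 (Set.range (wvec m)) := by
  apply le_antisymm
  · intro x hx
    obtain ⟨hxW, hxK⟩ := Submodule.mem_inf.1 hx
    rw [span_uvec_eq_sfam m hinv hfpf hN] at hxW
    obtain ⟨lam, hlam⟩ := (mem_span_range_iff_exists_fun F2).1 hxW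
    have hphix : phiMap m x = 0 := LinearMap.mem_ker.1 hxK
    have key : ∀ d : ChordIdx m, d ≠ chord m hinv hfpf 0 → lam d.1 = lam (m d.1) := by
      intro d hd
      have hterm : ∀ j : ZMod N, phiMap m (sfam m j) d =
          (if d = chord m hinv hfpf j then 1 else 0) := by
        intro j
        by_cases hj : j = 0
        · rw [hj, sfam_zero m, map_zero]
          have : chord m hinv hfpf (0 : ZMod N) ≠ d := fun h => hd h.symm
          rw [if_neg (fun h => this h.symm)]
          rfl
        · rw [phi_sfam_apply m hinv hfpf hN hj, Pi.add_apply, sing_apply, sing_apply,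
            if_neg hd, add_zero]
      have h1 : phiMap m x d = 0 := by rw [hphix]; rfl
      rw [← hlam, map_sum, Finset.sum_apply] at h1
      have h2 : ∀ j : ZMod N, phiMap m (lam j • sfam m j) d =
          (if j = d.1 then lam j else 0) + (if j = m d.1 then lam j else 0) := by
        intro j
        rw [map_smul, Pi.smul_apply, hterm j, smul_eq_mul, mul_ite, mul_one, mul_zero]
        have hcond : (d = chord m hinv hfpf j) ↔ (j = d.1 ∨ j = m d.1) := by
          rw [eq_comm, chord_eq_iff m hinv hfpf]
        rw [if_congr hcond rfl rfl]
        have hne : d.1 ≠ m d.1 := fun h => hfpf d.1 h.symm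
        have hne2 : m d.1 ≠ d.1 := hfpf d.1
        by_cases h3 : j = d.1 <;> by_cases h4 : j = m d.1
        · exact absurd (h3 ▸ h4) hne
        · simp [h3, h4, hne, hne2]
        · simp [h3, h4, hne, hne2]
        · simp [h3, h4, hne, hne2]
      rw [Finset.sum_congr rfl (fun j _ => h2 j), Finset.sum_add_distrib,
        Finset.sum_ite_eq' _ d.1 lam, Finset.sum_ite_eq' _ (m d.1) lam,
        if_pos (Finset.mem_univ _), if_pos (Finset.mem_univ _)] at h1
      exact (F2_add_eq_zero _ _).1 h1
    have hgroup : x = ∑ c : ChordIdx m, lam (m c.1) • wvec m c := by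
      rw [← hlam, sum_chord_pairs m hinv hfpf (fun j => lam j • sfam m j)]
      apply Finset.sum_congr rfl
      intro c _
      rw [wvec_eq_sfam_sum m c, smul_add]
      by_cases hc : c = chord m hinv hfpf 0
      · have hc1 : c.1 = 0 := by rw [hc]; exact chord0_fst m hinv hfpf
        rw [hc1, sfam_zero m]
        simp only [smul_zero, zero_add]
      · rw [← key c hc]
    rw [hgroup]
    exact Submodule.sum_mem _ (fun c _ =>
      Submodule.smul_mem _ _ (Submodule.subset_span ⟨c, rfl⟩))
  · rw [Submodule.span_le]
    rintro _ ⟨c, rfl⟩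
    refine Submodule.mem_inf.2 ⟨?_, ?_⟩
    · show wvec m c ∈ _
      unfold wvec
      exact Submodule.sum_mem _ (fun k _ => Submodule.subset_span ⟨k, rfl⟩)
    · rw [LinearMap.mem_ker]
      exact phi_wvec m hinv hfpf hN c

lemma span_wvec_rank (hN : 1 < N) :
    finrank F2 (span F2 (Set.range (wvec m))) = (interMat m).rank := by
  have hinj : Function.Injective (psiMap m hinv hfpf) := by
    intro g h hgh
    funext d
    have h1 : g (chord m hinv hfpf d.1) = h (chord m hinv hfpf d.1) := congrFun hgh d.1
    rwa [chord_fst m hinv hfpf d] at h1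
  have hw : ∀ c, psiMap m hinv hfpf (interMat m c) = wvec m c := by
    intro c
    funext i
    show interMat m c (chord m hinv hfpf i) = wvec m c i
    exact (wvec_eq_row m hinv hfpf hN c i).symm
  have hmap : Submodule.map (psiMap m hinv hfpf)
      (LinearMap.range ((interMat m).transpose.mulVecLin)) = span F2 (Set.range (wvec m)) := by
    rw [Matrix.range_mulVecLin, Matrix.col_transpose, Submodule.map_span]
    apply le_antisymm <;> rw [Submodule.span_le]
    · rintro _ ⟨v, ⟨c, rfl⟩, rfl⟩
      rw [show (interMat m).row c = interMat m c from rfl, hw c]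
      exact Submodule.subset_span ⟨c, rfl⟩
    · rintro _ ⟨c, rfl⟩
      exact Submodule.subset_span ⟨interMat m c, ⟨c, rfl⟩, hw c⟩
  rw [← hmap, ← LinearEquiv.finrank_eq (Submodule.equivMapOfInjective _ hinj _)]
  have hdef : (interMat m).transpose.rank = finrank F2 (LinearMap.range ((interMat m).transpose.mulVecLin)) :=
    rfl
  rw [← hdef, Matrix.rank_transpose]

end Spans

end Sobo
/-- Soboleva's theorem, all framings `0`. For `n ≥ 1` and a
fixed-point-free involution `m` of `ℤ/2nℤ` regarded as a chord diagram, the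
number of cycles of the permutation `i ↦ m (i+1)` equals
`corank A + 1`, where `A` is the `ℤ/2ℤ` adjacency matrix of the intersection
graph of the chord diagram. -/
theorem soboleva_all_framings_zero (n : ℕ) [NeZero n]
    (m : Equiv.Perm (ZMod (2 * n)))
    (hinv : ∀ i, m (m i) = i) (hfpf : ∀ i, m i ≠ i) :
    numCycles ((Equiv.addRight (1 : ZMod (2 * n))).trans m) =
      (Fintype.card (ChordIdx m) - (interMat m).rank) + 1 := by
  have hn : n ≠ 0 := NeZero.ne n
  have hN : 1 < 2 * n := by omega
  have h1 : numCycles ((Equiv.addRight (1 : ZMod (2 * n))).trans m) =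
      Module.finrank Sobo.F2 (Sobo.fixedSpace ((Equiv.addRight (1 : ZMod (2 * n))).trans m)) := by
    unfold numCycles
    exact (Sobo.finrank_fixedSpace _).symm
  have h2 := LinearMap.finrank_range_add_finrank_ker
    (Sobo.Tmap ((Equiv.addRight (1 : ZMod (2 * n))).trans m))
  rw [Sobo.ker_Tmap, Module.finrank_pi, ZMod.card] at h2
  have h3 := Sobo.range_Tmap_eq m hinv hfpf
  rw [h3] at h2
  have h4 := Sobo.finrank_split (Submodule.span Sobo.F2 (Set.range (Sobo.uvec m)))
    (Sobo.phiMap m)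
  have h5 := Sobo.map_phi_W m hinv hfpf hN
  have h6 := Sobo.finrank_range_theta (Sobo.chord m hinv hfpf 0)
  have h7 := Sobo.inf_ker_phi m hinv hfpf hN
  have h8 := Sobo.span_wvec_rank m hinv hfpf hN
  have h9 := Sobo.two_mul_card_chordIdx m hinv hfpf
  have h10 : (interMat m).rank ≤ Fintype.card (ChordIdx m) := Matrix.rank_le_card_width _
  rw [h5, h7, h8, h6.1] at h4
  have h62 := h6.2
  rw [h1]
  omega
end

section
/- Let G' be obtained from a labeled graph G by adding an isolated vertex with framing 0 and sign α (move Ω1). Then ⟨G'⟩ = −a^{−3}·⟨G⟩ if α = +1 and ⟨G'⟩ = −a^{3}·⟨G⟩ if α = −1. -/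
/-- A *labeled graph*: a finite simple graph whose vertices (a finite set of
natural numbers) carry a framing in `ZMod 2` and a sign (`true` = `+`, `false` = `-`). -/
structure LGraph where
  verts : Finset ℕ
  adj : ℕ → ℕ → Bool
  symm : ∀ x y, adj x y = adj y x
  loopless : ∀ x, adj x x = false
  adj_mem : ∀ x y, adj x y = true → x ∈ verts ∧ y ∈ verts
  fr : ℕ → ZMod 2
  sgn : ℕ → Bool

namespace LGraph

/-- The adjacency matrix over `ZMod 2`, with framings on the diagonal. -/
def A (G : LGraph) : Matrix G.verts G.verts (ZMod 2) :=
  fun u v => if (u : ℕ) = (v : ℕ) then G.fr u else (if G.adj u v then 1 else 0)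

/-- `corank (A(G) + E)` over `ZMod 2`. -/
noncomputable def corankAE (G : LGraph) : ℕ :=
  Fintype.card G.verts - (G.A + 1).rank

/-- `corank A(G)` over `ZMod 2`. -/
noncomputable def corankA (G : LGraph) : ℕ :=
  Fintype.card G.verts - G.A.rank

end LGraph
namespace LGraph

/-- `G'` agrees with `G` (adjacency, framing and sign) away from the set `S`. -/
def sameOutside (G G' : LGraph) (S : Finset ℕ) : Prop :=
  (∀ x y, x ∉ S → y ∉ S → G'.adj x y = G.adj x y) ∧
  (∀ x, x ∉ S → G'.fr x = G.fr x ∧ G'.sgn x = G.sgn x)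

/-- Ω1 (addition direction): `G'` is obtained from `G` by adding the isolated
vertex `v` with framing `0` and arbitrary sign. -/
def Omega1AddAt (G G' : LGraph) (v : ℕ) : Prop :=
  v ∉ G.verts ∧ G'.verts = insert v G.verts ∧ G'.fr v = 0 ∧
    (∀ x, G'.adj v x = false) ∧ sameOutside G G' {v}

/-- Ω2 (addition direction): `G'` is obtained from `G` by adding two vertices `u, v`
with the same adjacencies with all other vertices, opposite signs, either
non-adjacent with framings `0` or adjacent with framings `1`. -/
def Omega2AddAt (G G' : LGraph) (u v : ℕ) : Prop :=
  u ≠ v ∧ u ∉ G.verts ∧ v ∉ G.verts ∧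
    G'.verts = insert u (insert v G.verts) ∧
    G'.sgn u = !(G'.sgn v) ∧
    (∀ x, x ≠ u → x ≠ v → G'.adj u x = G'.adj v x) ∧
    ((G'.adj u v = false ∧ G'.fr u = 0 ∧ G'.fr v = 0) ∨
     (G'.adj u v = true ∧ G'.fr u = 1 ∧ G'.fr v = 1)) ∧
    sameOutside G G' {u, v}

/-- Ω3 (forward direction) at vertices `u, v, w`, all labeled `(0,-)`, with `u`
adjacent exactly to `v` and `w`: the adjacency of `u` with every vertex lying in
exactly one of `N(v)`, `N(w)` is toggled and the signs of `v`,`w` become `+`. -/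
def Omega3FwdAt (G G' : LGraph) (u v w : ℕ) : Prop :=
  u ≠ v ∧ u ≠ w ∧ v ≠ w ∧ u ∈ G.verts ∧ v ∈ G.verts ∧ w ∈ G.verts ∧
    G.fr u = 0 ∧ G.fr v = 0 ∧ G.fr w = 0 ∧
    G.sgn u = false ∧ G.sgn v = false ∧ G.sgn w = false ∧
    (∀ x, G.adj u x = true ↔ (x = v ∨ x = w)) ∧
    G'.verts = G.verts ∧
    (∀ x, G'.adj u x = xor (xor (G.adj v x) (G.adj w x)) (G.adj u x)) ∧
    (∀ x y, x ≠ u → y ≠ u → G'.adj x y = G.adj x y) ∧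
    G'.fr u = 0 ∧ G'.sgn u = false ∧
    G'.fr v = 0 ∧ G'.sgn v = true ∧ G'.fr w = 0 ∧ G'.sgn w = true ∧
    (∀ x, x ≠ u → x ≠ v → x ≠ w → (G'.fr x = G.fr x ∧ G'.sgn x = G.sgn x))

/-- The (one-sided) pivot toggling condition at `u, v` for the pair `x, y`:
`x` is adjacent to `u`, `y` is adjacent to `v`, and `x` is not adjacent to `v`
or `y` is not adjacent to `u`. -/
def pivCond (G : LGraph) (u v x y : ℕ) : Prop :=
  G.adj u x = true ∧ G.adj v y = true ∧ (G.adj v x = false ∨ G.adj u y = false)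

instance pivCond.instDecidable (G : LGraph) (u v x y : ℕ) :
    Decidable (pivCond G u v x y) := by
  unfold pivCond; infer_instance

/-- Ω4 at adjacent vertices `u, v` labeled `(0,α)`, `(0,β)`: `G'` is the pivot
`piv(G;u,v)` with the sign of `u` set to `-β` and the sign of `v` set to `-α`. -/
def Omega4At (G G' : LGraph) (u v : ℕ) : Prop :=
  u ≠ v ∧ G.adj u v = true ∧ G.fr u = 0 ∧ G.fr v = 0 ∧
    G'.verts = G.verts ∧
    (∀ x y, G'.adj x y =
      (if x ≠ y ∧ x ∉ ({u, v} : Finset ℕ) ∧ y ∉ ({u, v} : Finset ℕ) ∧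
          (pivCond G u v x y ∨ pivCond G u v y x)
       then !(G.adj x y) else G.adj x y)) ∧
    G'.fr u = 0 ∧ G'.fr v = 0 ∧
    G'.sgn u = !(G.sgn v) ∧ G'.sgn v = !(G.sgn u) ∧
    (∀ x, x ≠ u → x ≠ v → (G'.fr x = G.fr x ∧ G'.sgn x = G.sgn x))

/-- Ω4' at a vertex `v` labeled `(1,α)`: `G'` is the local complement `LC(G;v)`
with the sign of `v` changed to `-α` and the framing of every neighbour of `v` toggled. -/
def Omega4pAt (G G' : LGraph) (v : ℕ) : Prop :=
  v ∈ G.verts ∧ G.fr v = 1 ∧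
    G'.verts = G.verts ∧
    (∀ x y, G'.adj x y =
      (if x ≠ y ∧ G.adj v x = true ∧ G.adj v y = true
       then !(G.adj x y) else G.adj x y)) ∧
    G'.fr v = G.fr v ∧ G'.sgn v = !(G.sgn v) ∧
    (∀ x, x ≠ v → G'.sgn x = G.sgn x) ∧
    (∀ x, x ≠ v → G'.fr x = (if G.adj v x then G.fr x + 1 else G.fr x))

/-- A single graph-move `Ω1`–`Ω4'` (in either direction). -/
inductive Move : LGraph → LGraph → Prop
  | o1a {G G' v} : Omega1AddAt G G' v → Move G G'
  | o1r {G G' v} : Omega1AddAt G' G v → Move G G'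
  | o2a {G G' u v} : Omega2AddAt G G' u v → Move G G'
  | o2r {G G' u v} : Omega2AddAt G' G u v → Move G G'
  | o3f {G G' u v w} : Omega3FwdAt G G' u v w → Move G G'
  | o3b {G G' u v w} : Omega3FwdAt G' G u v w → Move G G'
  | o4 {G G' u v} : Omega4At G G' u v → Move G G'
  | o4i {G G' u v} : Omega4At G' G u v → Move G G'
  | o4p {G G' v} : Omega4pAt G G' v → Move G G'
  | o4pi {G G' v} : Omega4pAt G' G v → Move G G'

end LGraph
namespace LGraph

/-- The induced labeled subgraph of `G` on a set `s` of vertices. -/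
def induce (G : LGraph) (s : Finset ℕ) : LGraph where
  verts := s ∩ G.verts
  adj := fun x y => decide (x ∈ s) && decide (y ∈ s) && G.adj x y
  symm := by
    intro x y
    cases h1 : decide (x ∈ s) <;> cases h2 : decide (y ∈ s) <;>
      simp [h1, h2, G.symm x y]
  loopless := by intro x; simp [G.loopless x]
  adj_mem := by
    intro x y h
    simp only [Bool.and_eq_true, decide_eq_true_eq] at h
    exact ⟨Finset.mem_inter.2 ⟨h.1.1, (G.adj_mem x y h.2).1⟩,
           Finset.mem_inter.2 ⟨h.1.2, (G.adj_mem x y h.2).2⟩⟩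
  fr := G.fr
  sgn := G.sgn

/-- `α(s)`: the number of vertices in `s` with sign `-` plus the number of
vertices in `V(G) \ s` with sign `+`. -/
def alphaS (G : LGraph) (s : Finset ℕ) : ℕ :=
  (s.filter (fun v => G.sgn v = false)).card +
  ((G.verts \ s).filter (fun v => G.sgn v = true)).card

/-- `β(s) = |V(G)| - α(s)`. -/
def betaS (G : LGraph) (s : Finset ℕ) : ℕ := G.verts.card - G.alphaS s

/-- The Kauffman bracket polynomial
`⟨G⟩ = Σ_s a^(α(s)-β(s)) (-a²-a⁻²)^(corank A(G(s)))` of a labeled graph, as a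
Laurent polynomial in `a` over `ℤ`. -/
noncomputable def bracket (G : LGraph) : LaurentPolynomial ℤ :=
  ∑ s ∈ G.verts.powerset,
    LaurentPolynomial.T ((G.alphaS s : ℤ) - (G.betaS s : ℤ)) *
      (-(LaurentPolynomial.T 2) - LaurentPolynomial.T (-2)) ^ ((G.induce s).corankA)

end LGraph
section OmegaOneAux

open Matrix Finset LaurentPolynomial LGraph

private lemma rank_fromBlocks_zero' {R : Type*} [CommRing R] {n : Type*} [Fintype n]
    (B : Matrix n n R) :
    (Matrix.fromBlocks B 0 0 (0 : Matrix PUnit PUnit R)).rank = B.rank := by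
  let e : (n → R) →ₗ[R] (n ⊕ PUnit → R) :=
    { toFun := fun y => Sum.elim y 0
      map_add' := by intro a b; funext x; cases x <;> simp
      map_smul' := by intro c a; funext x; cases x <;> simp }
  have hinj : Function.Injective e := fun a b hab => funext fun x => congrFun hab (Sum.inl x)
  have hrange : LinearMap.range (Matrix.fromBlocks B 0 0 (0 : Matrix PUnit PUnit R)).mulVecLin
      = (LinearMap.range B.mulVecLin).map e := by
    ext w
    simp only [LinearMap.mem_range, Submodule.mem_map, mulVecLin_apply]
    constructor
    · rintro ⟨x, rfl⟩
      refine ⟨B.mulVec (x ∘ Sum.inl), ⟨x ∘ Sum.inl, rfl⟩, ?_⟩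
      funext i
      cases i <;> simp [e, fromBlocks_mulVec, zero_mulVec]
    · rintro ⟨yy, ⟨x, rfl⟩, rfl⟩
      refine ⟨Sum.elim x 0, ?_⟩
      funext i
      cases i <;> simp [e, fromBlocks_mulVec, zero_mulVec]
  rw [Matrix.rank, hrange, Matrix.rank]
  exact (LinearEquiv.finrank_eq (Submodule.equivMapOfInjective e hinj _)).symm

private lemma corankA_congr' (G1 G2 : LGraph)
    (e : {x // x ∈ G2.verts} ≃ {x // x ∈ G1.verts})
    (hA : ∀ i j, G1.A (e i) (e j) = G2.A i j) : G1.corankA = G2.corankA := by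
  unfold LGraph.corankA
  have h1 : G1.A.submatrix (fun i => e i) (fun j => e j) = G2.A := by
    ext i j; exact hA i j
  rw [← h1, Matrix.rank_submatrix]
  congr 1
  exact Fintype.card_congr e.symm

private lemma corank_induce_notmem (G G' : LGraph) (v : ℕ)
    (h : LGraph.Omega1AddAt G G' v) (t : Finset ℕ) (ht : t ⊆ G.verts) :
    (G'.induce t).corankA = (G.induce t).corankA := by
  obtain ⟨hv, hverts, hfr, hadj, hout⟩ := h
  have hmem : ∀ x, x ∈ (G.induce t).verts ↔ x ∈ (G'.induce t).verts := by
    intro x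
    simp only [LGraph.induce, hverts, Finset.mem_inter, Finset.mem_insert]
    constructor
    · rintro ⟨h1, h2⟩; exact ⟨h1, Or.inr h2⟩
    · rintro ⟨h1, _⟩; exact ⟨h1, ht h1⟩
  refine corankA_congr' _ _ (Equiv.subtypeEquivRight hmem) ?_
  intro i j
  have hi : (i : ℕ) ∈ t ∧ (i : ℕ) ∈ G.verts := Finset.mem_inter.mp i.2
  have hj : (j : ℕ) ∈ t ∧ (j : ℕ) ∈ G.verts := Finset.mem_inter.mp j.2
  have hiv : (i : ℕ) ≠ v := fun hc => hv (hc ▸ hi.2)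
  have hjv : (j : ℕ) ≠ v := fun hc => hv (hc ▸ hj.2)
  have hiv' : (i : ℕ) ∉ ({v} : Finset ℕ) := by simpa using hiv
  have hjv' : (j : ℕ) ∉ ({v} : Finset ℕ) := by simpa using hjv
  simp only [LGraph.A, LGraph.induce, Equiv.subtypeEquivRight_apply]
  change (if (i : ℕ) = (j : ℕ) then G'.fr i else if (decide ((i : ℕ) ∈ t) && decide ((j : ℕ) ∈ t) && G'.adj i j) = true then (1 : ZMod 2) else 0) = (if (i : ℕ) = (j : ℕ) then G.fr i else if (decide ((i : ℕ) ∈ t) && decide ((j : ℕ) ∈ t) && G.adj i j) = true then 1 else 0)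
  by_cases hij : (i : ℕ) = (j : ℕ)
  · simp [hij, (hout.2 _ hjv').1]
  · simp [hij, hi.1, hj.1, hout.1 _ _ hiv' hjv']

private lemma corank_induce_insert (G G' : LGraph) (v : ℕ)
    (h : LGraph.Omega1AddAt G G' v) (t : Finset ℕ) (ht : t ⊆ G.verts) :
    (G'.induce (insert v t)).corankA = (G.induce t).corankA + 1 := by
  obtain ⟨hv, hverts, hfr, hadj, hout⟩ := h
  have hvt : v ∉ (G.induce t).verts := by
    simp only [LGraph.induce, Finset.mem_inter]
    exact fun hc => hv hc.2
  have hmem : ∀ x, x ∈ (G'.induce (insert v t)).verts ↔ x ∈ insert v (G.induce t).verts := by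
    intro x
    simp only [LGraph.induce, hverts, Finset.mem_inter, Finset.mem_insert]
    constructor
    · rintro ⟨h1 | h1, h2⟩
      · exact Or.inl h1
      · rcases h2 with h2 | h2
        · exact Or.inl h2
        · exact Or.inr ⟨h1, h2⟩
    · rintro (rfl | ⟨h1, h2⟩)
      · exact ⟨Or.inl rfl, Or.inl rfl⟩
      · exact ⟨Or.inr h1, Or.inr h2⟩
  let e : {x // x ∈ (G.induce t).verts} ⊕ PUnit.{1} ≃ {x // x ∈ (G'.induce (insert v t)).verts} :=
    (((Equiv.subtypeEquivRight hmem).trans (Finset.subtypeInsertEquivOption hvt)).trans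
      (Equiv.optionEquivSumPUnit _)).symm
  have hel : ∀ x : {x // x ∈ (G.induce t).verts}, ((e (Sum.inl x) : {x // x ∈ (G'.induce (insert v t)).verts}) : ℕ) = (x : ℕ) := by
    intro x; rfl
  have her : ∀ u : PUnit.{1}, ((e (Sum.inr u) : {x // x ∈ (G'.induce (insert v t)).verts}) : ℕ) = v := by
    intro u; rfl
  have hsub : (G'.induce (insert v t)).A.submatrix (fun i => e i) (fun j => e j)
      = Matrix.fromBlocks (G.induce t).A 0 0 (0 : Matrix PUnit.{1} PUnit.{1} (ZMod 2)) := by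
    ext i j
    rcases i with x | u <;> rcases j with y | w
    · -- inl inl
      have hx : (x : ℕ) ∈ t ∧ (x : ℕ) ∈ G.verts := Finset.mem_inter.mp x.2
      have hy : (y : ℕ) ∈ t ∧ (y : ℕ) ∈ G.verts := Finset.mem_inter.mp y.2
      have hxv : (x : ℕ) ≠ v := fun hc => hv (hc ▸ hx.2)
      have hyv : (y : ℕ) ≠ v := fun hc => hv (hc ▸ hy.2)
      have hxv' : (x : ℕ) ∉ ({v} : Finset ℕ) := by simpa using hxv
      have hyv' : (y : ℕ) ∉ ({v} : Finset ℕ) := by simpa using hyv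
      simp only [Matrix.submatrix_apply, Matrix.fromBlocks_apply₁₁, LGraph.A]
      simp only [hel]
      simp only [LGraph.induce]
      by_cases hxy : (x : ℕ) = (y : ℕ)
      · simp [hxy, (hout.2 _ hyv').1]
      · simp [hxy, hx.1, hy.1, Finset.mem_insert, hout.1 _ _ hxv' hyv']
    · -- inl inr
      have hx : (x : ℕ) ∈ t ∧ (x : ℕ) ∈ G.verts := Finset.mem_inter.mp x.2
      have hxv : (x : ℕ) ≠ v := fun hc => hv (hc ▸ hx.2)
      have hGvx : G'.adj (x : ℕ) v = false := (G'.symm _ _).trans (hadj _)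
      simp only [Matrix.submatrix_apply, Matrix.fromBlocks_apply₁₂, LGraph.A,
        Matrix.zero_apply]
      simp only [hel, her]
      simp only [LGraph.induce]
      simp [hxv, hGvx]
    · -- inr inl
      have hy : (y : ℕ) ∈ t ∧ (y : ℕ) ∈ G.verts := Finset.mem_inter.mp y.2
      have hyv : (y : ℕ) ≠ v := fun hc => hv (hc ▸ hy.2)
      simp only [Matrix.submatrix_apply, Matrix.fromBlocks_apply₂₁, LGraph.A,
        Matrix.zero_apply]
      simp only [hel, her]
      simp only [LGraph.induce]
      have : v ≠ (y : ℕ) := fun hc => hyv hc.symm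
      simp [this, hadj]
    · -- inr inr
      simp only [Matrix.submatrix_apply, Matrix.fromBlocks_apply₂₂, LGraph.A,
        Matrix.zero_apply]
      simp only [her]
      simp only [LGraph.induce]
      simp [hfr]
  unfold LGraph.corankA
  have hrank : (G'.induce (insert v t)).A.rank = (G.induce t).A.rank := by
    rw [← Matrix.rank_submatrix (G'.induce (insert v t)).A e e]
    rw [show ((G'.induce (insert v t)).A.submatrix (e ·) (e ·)) = _ from hsub,
      rank_fromBlocks_zero']
  have hcard : Fintype.card {x // x ∈ (G'.induce (insert v t)).verts}
      = Fintype.card {x // x ∈ (G.induce t).verts} + 1 := by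
    rw [Fintype.card_congr e.symm]
    simp
  rw [hrank, hcard, Nat.succ_sub ((G.induce t).A.rank_le_card_width)]

private lemma alphaS_le' (G : LGraph) (t : Finset ℕ) (ht : t ⊆ G.verts) :
    G.alphaS t ≤ G.verts.card := by
  unfold LGraph.alphaS
  calc (t.filter (fun x => G.sgn x = false)).card
        + ((G.verts \ t).filter (fun x => G.sgn x = true)).card
      ≤ t.card + (G.verts \ t).card :=
        Nat.add_le_add (Finset.card_filter_le _ _) (Finset.card_filter_le _ _)
    _ = G.verts.card := by
        rw [Finset.card_sdiff_of_subset ht]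
        exact Nat.add_sub_cancel' (Finset.card_le_card ht)

private lemma alphaS_not (G G' : LGraph) (v : ℕ)
    (h : LGraph.Omega1AddAt G G' v) (t : Finset ℕ) (ht : t ⊆ G.verts) :
    G'.alphaS t = G.alphaS t + (if G'.sgn v then 1 else 0) := by
  obtain ⟨hv, hverts, hfr, hadj, hout⟩ := h
  have hsgn : ∀ x, x ≠ v → G'.sgn x = G.sgn x := by
    intro x hx
    exact (hout.2 x (by simpa using hx)).2
  have hvt : v ∉ t := fun hc => hv (ht hc)
  unfold LGraph.alphaS
  have h1 : t.filter (fun x => G'.sgn x = false) = t.filter (fun x => G.sgn x = false) := by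
    apply Finset.filter_congr
    intro x hx
    rw [hsgn x (fun hc => hv (ht (hc ▸ hx)))]
  have h2 : G'.verts \ t = insert v (G.verts \ t) := by
    rw [hverts, Finset.insert_sdiff_of_notMem _ hvt]
  have h3 : (G.verts \ t).filter (fun x => G'.sgn x = true)
      = (G.verts \ t).filter (fun x => G.sgn x = true) := by
    apply Finset.filter_congr
    intro x hx
    rw [hsgn x (fun hc => hv (Finset.mem_sdiff.mp (hc ▸ hx)).1)]
  have hvnot : v ∉ (G.verts \ t).filter (fun x => G'.sgn x = true) := by
    simp [Finset.mem_sdiff, hv]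
  rw [h1, h2, Finset.filter_insert]
  by_cases hb : G'.sgn v
  · rw [if_pos hb, Finset.card_insert_of_notMem hvnot, h3, if_pos hb]
    omega
  · rw [if_neg hb, h3, if_neg hb]
    omega

private lemma alphaS_ins (G G' : LGraph) (v : ℕ)
    (h : LGraph.Omega1AddAt G G' v) (t : Finset ℕ) (ht : t ⊆ G.verts) :
    G'.alphaS (insert v t) = G.alphaS t + (if G'.sgn v then 0 else 1) := by
  obtain ⟨hv, hverts, hfr, hadj, hout⟩ := h
  have hsgn : ∀ x, x ≠ v → G'.sgn x = G.sgn x := by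
    intro x hx
    exact (hout.2 x (by simpa using hx)).2
  have hvt : v ∉ t := fun hc => hv (ht hc)
  unfold LGraph.alphaS
  have h1 : t.filter (fun x => G'.sgn x = false) = t.filter (fun x => G.sgn x = false) := by
    apply Finset.filter_congr
    intro x hx
    rw [hsgn x (fun hc => hv (ht (hc ▸ hx)))]
  have h2 : G'.verts \ insert v t = G.verts \ t := by
    ext x
    simp only [hverts, Finset.mem_sdiff, Finset.mem_insert, not_or]
    constructor
    · rintro ⟨hx1 | hx1, hx2, hx3⟩
      · exact absurd hx1 hx2
      · exact ⟨hx1, hx3⟩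
    · rintro ⟨hx1, hx2⟩
      exact ⟨Or.inr hx1, fun hc => hv (hc ▸ hx1), hx2⟩
  have h3 : (G.verts \ t).filter (fun x => G'.sgn x = true)
      = (G.verts \ t).filter (fun x => G.sgn x = true) := by
    apply Finset.filter_congr
    intro x hx
    rw [hsgn x (fun hc => hv (Finset.mem_sdiff.mp (hc ▸ hx)).1)]
  have hvnot : v ∉ t.filter (fun x => G.sgn x = false) := by simp [hvt]
  rw [Finset.filter_insert, h2, h3, h1]
  by_cases hb : G'.sgn v
  · rw [if_neg (by simp [hb]), if_pos hb]
    omega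
  · rw [if_pos (by simp [hb]), Finset.card_insert_of_notMem hvnot, if_neg hb]
    omega

end OmegaOneAux

/-- Adding an isolated vertex with framing `0` and sign `α`
(move `Ω1`) multiplies the Kauffman bracket by `-a^{-3}` if `α = +` and by
`-a^{3}` if `α = -`. -/
theorem bracket_omega1 (G G' : LGraph) (v : ℕ) (h : LGraph.Omega1AddAt G G' v) :
    (G'.sgn v = true →
      G'.bracket = -(LaurentPolynomial.T (-3)) * G.bracket) ∧
    (G'.sgn v = false →
      G'.bracket = -(LaurentPolynomial.T 3) * G.bracket) := by
  have hmain : G'.bracket =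
      (if G'.sgn v then -(LaurentPolynomial.T (-3)) else -(LaurentPolynomial.T 3)) * G.bracket := by
    unfold LGraph.bracket
    rw [h.2.1, Finset.sum_powerset_insert h.1, ← Finset.sum_add_distrib, Finset.mul_sum]
    refine Finset.sum_congr rfl ?_
    intro t htm
    have ht : t ⊆ G.verts := Finset.mem_powerset.mp htm
    have hn' : G'.verts.card = G.verts.card + 1 := by
      rw [h.2.1, Finset.card_insert_of_notMem h.1]
    have ha := alphaS_le' G t ht
    have h1 := alphaS_not G G' v h t ht
    have h2 := alphaS_ins G G' v h t ht
    have e1 : (G'.alphaS t : ℤ) - G'.betaS t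
        = ((G.alphaS t : ℤ) - G.betaS t) + (if G'.sgn v then 1 else -1) := by
      unfold LGraph.betaS
      rw [h1, hn']
      by_cases hs : G'.sgn v <;> simp only [hs, if_true, if_false, Bool.false_eq_true] <;> omega
    have e2 : (G'.alphaS (insert v t) : ℤ) - G'.betaS (insert v t)
        = ((G.alphaS t : ℤ) - G.betaS t) + (if G'.sgn v then -1 else 1) := by
      unfold LGraph.betaS
      rw [h2, hn']
      by_cases hs : G'.sgn v <;> simp only [hs, if_true, if_false, Bool.false_eq_true] <;> omega
    have c1 : (G'.induce t).corankA = (G.induce t).corankA :=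
      corank_induce_notmem G G' v h t ht
    have c2 : (G'.induce (insert v t)).corankA = (G.induce t).corankA + 1 :=
      corank_induce_insert G G' v h t ht
    rw [e1, e2, c1, c2]
    set X : LaurentPolynomial ℤ := -(LaurentPolynomial.T 2) - LaurentPolynomial.T (-2) with hX
    set d : ℤ := (G.alphaS t : ℤ) - G.betaS t with hd
    set c : ℕ := (G.induce t).corankA with hc
    have a1 : (LaurentPolynomial.T (-1) : LaurentPolynomial ℤ) * LaurentPolynomial.T 2
        = LaurentPolynomial.T 1 := by rw [← LaurentPolynomial.T_add]; norm_num
    have a2 : (LaurentPolynomial.T (-1) : LaurentPolynomial ℤ) * LaurentPolynomial.T (-2)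
        = LaurentPolynomial.T (-3) := by rw [← LaurentPolynomial.T_add]; norm_num
    have a3 : (LaurentPolynomial.T 1 : LaurentPolynomial ℤ) * LaurentPolynomial.T 2
        = LaurentPolynomial.T 3 := by rw [← LaurentPolynomial.T_add]; norm_num
    have a4 : (LaurentPolynomial.T 1 : LaurentPolynomial ℤ) * LaurentPolynomial.T (-2)
        = LaurentPolynomial.T (-1) := by rw [← LaurentPolynomial.T_add]; norm_num
    by_cases hs : G'.sgn v
    · simp only [hs, if_true]
      have key : (LaurentPolynomial.T 1 : LaurentPolynomial ℤ) + LaurentPolynomial.T (-1) * X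
          = -(LaurentPolynomial.T (-3)) := by
        rw [hX]; linear_combination -a1 - a2
      rw [LaurentPolynomial.T_add d 1, LaurentPolynomial.T_add d (-1), pow_succ]
      linear_combination (LaurentPolynomial.T d * X ^ c) * key
    · simp only [hs, if_false, Bool.false_eq_true]
      have key : (LaurentPolynomial.T (-1) : LaurentPolynomial ℤ) + LaurentPolynomial.T 1 * X
          = -(LaurentPolynomial.T 3) := by
        rw [hX]; linear_combination -a3 - a4
      rw [LaurentPolynomial.T_add d 1, LaurentPolynomial.T_add d (-1), pow_succ]
      linear_combination (LaurentPolynomial.T d * X ^ c) * key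
  constructor
  · intro hs
    rw [hmain, if_pos hs]
  · intro hs
    rw [hmain, if_neg (by simp [hs])]
end

section
/- Let G' be obtained from a labeled graph G by the second graph-move Ω2, i.e. by adding two vertices that have the same adjacencies with all vertices of G, carry opposite signs, and are either non-adjacent with both framings 0 or adjacent with both framings 1. Then ⟨G'⟩ = ⟨G⟩. -/
namespace LGraph

lemma rank_submatrix_le'' {l m o p : Type*} [Fintype l] [Fintype m] [Fintype o] [Fintype p]
    [DecidableEq l] [DecidableEq m] [DecidableEq o] [DecidableEq p]
    (A : Matrix m p (ZMod 2)) (f : l → m) (g : o → p) :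
    (A.submatrix f g).rank ≤ A.rank := by
  have h1 : A.submatrix f g =
      ((1 : Matrix m m (ZMod 2)).submatrix f id) * A *
        ((1 : Matrix p p (ZMod 2)).submatrix id g) := by
    ext i j
    simp [Matrix.mul_apply, Matrix.one_apply, Finset.sum_ite_eq, Finset.sum_ite_eq',
      mul_ite, ite_mul]
  rw [h1]
  exact le_trans (Matrix.rank_mul_le_left _ _) (Matrix.rank_mul_le_right _ _)

lemma corankA_congr (G1 G2 : LGraph) (e : {x // x ∈ G1.verts} ≃ {x // x ∈ G2.verts})
    (h : ∀ x y, G1.A x y = G2.A (e x) (e y)) : G1.corankA = G2.corankA := by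
  have hA : G1.A = G2.A.submatrix e e := by ext x y; exact h x y
  rw [corankA, corankA, hA, Matrix.rank_submatrix, Fintype.card_congr e]

lemma corankA_succ (G1 G2 : LGraph) (f : {x // x ∈ G1.verts} → {x // x ∈ G2.verts})
    (g : {x // x ∈ G2.verts} → {x // x ∈ G1.verts}) (hfg : ∀ y, f (g y) = y)
    (h : ∀ x y, G1.A x y = G2.A (f x) (f y))
    (hcard : G1.verts.card = G2.verts.card + 1) :
    G1.corankA = G2.corankA + 1 := by
  have hA : G1.A = G2.A.submatrix f f := by ext x y; exact h x y
  have hA2 : G2.A = G1.A.submatrix g g := by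
    ext x y
    rw [hA]
    simp [Matrix.submatrix_apply, hfg]
  have hr : G1.A.rank = G2.A.rank := by
    refine le_antisymm ?_ ?_
    · rw [hA]; exact rank_submatrix_le'' _ _ _
    · conv_lhs => rw [hA2]
      exact rank_submatrix_le'' _ _ _
  have hle : G2.A.rank ≤ Fintype.card {x // x ∈ G2.verts} := Matrix.rank_le_card_width _
  rw [Fintype.card_coe] at hle
  rw [corankA, corankA, hr, Fintype.card_coe, Fintype.card_coe, hcard]
  omega

lemma A_induce_apply (G : LGraph) (t : Finset ℕ) (x y : {z // z ∈ (G.induce t).verts}) :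
    (G.induce t).A x y =
      if (x : ℕ) = (y : ℕ) then G.fr x else if G.adj x y then 1 else 0 := by
  have hx : (x : ℕ) ∈ t := (Finset.mem_inter.1 x.2).1
  have hy : (y : ℕ) ∈ t := (Finset.mem_inter.1 y.2).1
  simp [A, induce, hx, hy]

end LGraph
/-- The Kauffman bracket is invariant under the second
graph-move `Ω2` (addition of two vertices with the same adjacencies with all
other vertices, opposite signs, non-adjacent with framings `0` or adjacent
with framings `1`). -/
theorem bracket_omega2 (G G' : LGraph) (u v : ℕ)
    (h : LGraph.Omega2AddAt G G' u v) :
    G'.bracket = G.bracket := by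
  classical
  obtain ⟨huv, huV, hvV, hV, hsgnuv, hadj, hcase, hadjO, hlabO⟩ := h
  have hVsub : G.verts ⊆ G'.verts := by rw [hV]; intro x hx; simp [hx]
  have huV' : u ∈ G'.verts := by rw [hV]; simp
  have hvV' : v ∈ G'.verts := by rw [hV]; simp
  have hfrvu : G'.fr v = G'.fr u := by
    rcases hcase with ⟨_, h1, h2⟩ | ⟨_, h1, h2⟩ <;> rw [h1, h2]
  have hkey : (if G'.adj u v = true then (1 : ZMod 2) else 0) = G'.fr u := by
    rcases hcase with ⟨h0, h1, _⟩ | ⟨h0, h1, _⟩ <;> simp [h0, h1]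
  have hnotmemuv : ∀ x ∈ G.verts, x ∉ ({u, v} : Finset ℕ) := by
    intro x hx
    simp only [Finset.mem_insert, Finset.mem_singleton, not_or]
    exact ⟨fun h => huV (h ▸ hx), fun h => hvV (h ▸ hx)⟩
  have hfr_eq : ∀ x ∈ G.verts, G'.fr x = G.fr x := fun x hx => (hlabO x (hnotmemuv x hx)).1
  have hsgn_eq : ∀ x ∈ G.verts, G'.sgn x = G.sgn x := fun x hx => (hlabO x (hnotmemuv x hx)).2
  have hadj_eq : ∀ x y, x ∈ G.verts → y ∈ G.verts → G'.adj x y = G.adj x y :=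
    fun x y hx hy => hadjO x y (hnotmemuv x hx) (hnotmemuv y hy)
  have huNot : u ∉ insert v G.verts := by simp [huv, huV]
  rw [LGraph.bracket, LGraph.bracket, hV, Finset.sum_powerset_insert huNot,
    Finset.sum_powerset_insert hvV, Finset.sum_powerset_insert hvV,
    ← Finset.sum_add_distrib, ← Finset.sum_add_distrib, ← Finset.sum_add_distrib]
  refine Finset.sum_congr rfl fun s hs => ?_
  have hsub : s ⊆ G.verts := Finset.mem_powerset.1 hs
  have hus : u ∉ s := fun h => huV (hsub h)
  have hvs : v ∉ s := fun h => hvV (hsub h)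
  have hsub' : s ⊆ G'.verts := hsub.trans hVsub
  -- verts of the induced graphs
  have hw0 : (G'.induce s).verts = s := Finset.inter_eq_left.mpr hsub'
  have hw0G : (G.induce s).verts = s := Finset.inter_eq_left.mpr hsub
  have hwv : (G'.induce (insert v s)).verts = insert v s :=
    Finset.inter_eq_left.mpr (Finset.insert_subset hvV' hsub')
  have hwu : (G'.induce (insert u s)).verts = insert u s :=
    Finset.inter_eq_left.mpr (Finset.insert_subset huV' hsub')
  have hwuv : (G'.induce (insert u (insert v s))).verts = insert u (insert v s) :=
    Finset.inter_eq_left.mpr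
      (Finset.insert_subset huV' (Finset.insert_subset hvV' hsub'))
  have hsneuv : ∀ x ∈ s, x ≠ u ∧ x ≠ v :=
    fun x hx => ⟨fun h => huV (h ▸ hsub hx), fun h => hvV (h ▸ hsub hx)⟩
  -- the replacing map and the key entry identity
  set φ : ℕ → ℕ := fun x => if x = v then u else x with hφ
  have hφv : φ v = u := by simp [hφ]
  have hφu : φ u = u := by simp [hφ, huv]
  have hφs : ∀ x ∈ s, φ x = x := fun x hx => by simp [hφ, (hsneuv x hx).2]
  have key : ∀ x y : ℕ, x ∈ insert u (insert v s) → y ∈ insert u (insert v s) →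
      ((if x = y then G'.fr x else if G'.adj x y then 1 else 0) : ZMod 2) =
      (if φ x = φ y then G'.fr (φ x) else if G'.adj (φ x) (φ y) then 1 else 0) := by
    intro x y hx hy
    have hadj' : ∀ z ∈ s, G'.adj u z = G'.adj v z :=
      fun z hz => hadj z (fun hh => (hsneuv z hz).1 hh) (fun hh => (hsneuv z hz).2 hh)
    rcases Finset.mem_insert.1 hx with rfl | hx'
    · rcases Finset.mem_insert.1 hy with rfl | hy'
      · simp [hφu]
      · rcases Finset.mem_insert.1 hy' with rfl | hys
        · rw [hφu, hφv, if_neg huv, if_pos rfl, hkey]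
        · rw [hφu, hφs y hys]
    · rcases Finset.mem_insert.1 hx' with rfl | hxs
      · rcases Finset.mem_insert.1 hy with rfl | hy'
        · rw [hφv, hφu, if_neg (Ne.symm huv), if_pos rfl, G'.symm, hkey]
        · rcases Finset.mem_insert.1 hy' with rfl | hys
          · simp [hφv, hfrvu]
          · rw [hφv, hφs y hys, if_neg (Ne.symm (hsneuv y hys).2),
              if_neg (Ne.symm (hsneuv y hys).1), hadj' y hys]
      · rcases Finset.mem_insert.1 hy with rfl | hy'
        · rw [hφs x hxs, hφu]
        · rcases Finset.mem_insert.1 hy' with hyv | hys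
          · rw [hyv, hφs x hxs, hφv, if_neg (hsneuv x hxs).2, if_neg (hsneuv x hxs).1,
              G'.symm x v, G'.symm x u, hadj' x hxs]
          · rw [hφs x hxs, hφs y hys]
  -- corank facts
  have hc0 : (G'.induce s).corankA = (G.induce s).corankA := by
    have hvmem : ∀ x, x ∈ (G'.induce s).verts ↔ x ∈ (G.induce s).verts := by
      intro x; rw [hw0, hw0G]
    refine LGraph.corankA_congr _ _ (Equiv.subtypeEquivRight hvmem) ?_
    intro x y
    rw [LGraph.A_induce_apply, LGraph.A_induce_apply]
    have hxV : (x : ℕ) ∈ G.verts := hsub (Finset.mem_inter.1 x.2).1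
    have hyV : (y : ℕ) ∈ G.verts := hsub (Finset.mem_inter.1 y.2).1
    have hcx : ((Equiv.subtypeEquivRight hvmem x : {z // z ∈ (G.induce s).verts}) : ℕ) = x := rfl
    have hcy : ((Equiv.subtypeEquivRight hvmem y : {z // z ∈ (G.induce s).verts}) : ℕ) = y := rfl
    rw [hcx, hcy, hfr_eq _ hxV, hadj_eq _ _ hxV hyV]
  set ψ : ℕ → ℕ := fun x => if x = u then v else x with hψ
  have hψu : ψ u = v := by simp [hψ]
  have hψs : ∀ x ∈ s, ψ x = x := fun x hx => by simp [hψ, (hsneuv x hx).1]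
  have hmemto : ∀ x : ℕ, x ∈ insert v s → φ x ∈ insert u s := by
    intro x hx
    rcases Finset.mem_insert.1 hx with rfl | hxs
    · rw [hφv]; exact Finset.mem_insert_self u s
    · rw [hφs x hxs]; exact Finset.mem_insert_of_mem hxs
  have hmemfrom : ∀ x : ℕ, x ∈ insert u s → ψ x ∈ insert v s := by
    intro x hx
    rcases Finset.mem_insert.1 hx with rfl | hxs
    · rw [hψu]; exact Finset.mem_insert_self v s
    · rw [hψs x hxs]; exact Finset.mem_insert_of_mem hxs
  have hψφ : ∀ x ∈ insert v s, ψ (φ x) = x := by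
    intro x hx
    rcases Finset.mem_insert.1 hx with rfl | hxs
    · rw [hφv, hψu]
    · rw [hφs x hxs, hψs x hxs]
  have hφψ : ∀ x ∈ insert u s, φ (ψ x) = x := by
    intro x hx
    rcases Finset.mem_insert.1 hx with rfl | hxs
    · rw [hψu, hφv]
    · rw [hψs x hxs, hφs x hxs]
  have hxmem_v : ∀ x : {z // z ∈ (G'.induce (insert v s)).verts}, (x : ℕ) ∈ insert v s :=
    fun x => (Finset.ext_iff.mp hwv _).mp x.2
  have hxmem_u : ∀ x : {z // z ∈ (G'.induce (insert u s)).verts}, (x : ℕ) ∈ insert u s :=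
    fun x => (Finset.ext_iff.mp hwu _).mp x.2
  have hxmem_uv : ∀ x : {z // z ∈ (G'.induce (insert u (insert v s))).verts},
      (x : ℕ) ∈ insert u (insert v s) :=
    fun x => (Finset.ext_iff.mp hwuv _).mp x.2
  have hcv : (G'.induce (insert v s)).corankA = (G'.induce (insert u s)).corankA := by
    refine LGraph.corankA_congr _ _
      ⟨fun x => ⟨φ x, (Finset.ext_iff.mp hwu _).mpr (hmemto _ (hxmem_v x))⟩,
       fun y => ⟨ψ y, (Finset.ext_iff.mp hwv _).mpr (hmemfrom _ (hxmem_u y))⟩,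
       fun x => Subtype.ext (hψφ _ (hxmem_v x)),
       fun y => Subtype.ext (hφψ _ (hxmem_u y))⟩ ?_
    intro x y
    rw [LGraph.A_induce_apply, LGraph.A_induce_apply]
    exact key x y (Finset.mem_insert_of_mem (hxmem_v x)) (Finset.mem_insert_of_mem (hxmem_v y))
  have hmemto2 : ∀ x : ℕ, x ∈ insert u (insert v s) → φ x ∈ insert u s := by
    intro x hx
    rcases Finset.mem_insert.1 hx with hxu | hx'
    · rw [hxu, hφu]; exact Finset.mem_insert_self u s
    · exact hmemto x hx'
  have hφid : ∀ y ∈ insert u s, φ y = y := by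
    intro y hy
    rcases Finset.mem_insert.1 hy with hyu | hys
    · rw [hyu]; exact hφu
    · exact hφs y hys
  have hcuv : (G'.induce (insert u (insert v s))).corankA
      = (G'.induce (insert u s)).corankA + 1 := by
    have huvs : u ∉ insert v s := by simp [huv, hus]
    refine LGraph.corankA_succ _ _
      (fun x => ⟨φ x, (Finset.ext_iff.mp hwu _).mpr (hmemto2 _ (hxmem_uv x))⟩)
      (fun y => ⟨(y : ℕ), (Finset.ext_iff.mp hwuv _).mpr (by
        rcases Finset.mem_insert.1 (hxmem_u y) with hyu | hys
        · rw [hyu]; exact Finset.mem_insert_self _ _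
        · exact Finset.mem_insert_of_mem (Finset.mem_insert_of_mem hys))⟩)
      (fun y => Subtype.ext (hφid _ (hxmem_u y))) ?_ ?_
    · intro x y
      rw [LGraph.A_induce_apply, LGraph.A_induce_apply]
      exact key x y (hxmem_uv x) (hxmem_uv y)
    · rw [hwuv, hwu, Finset.card_insert_of_notMem huvs,
        Finset.card_insert_of_notMem hvs, Finset.card_insert_of_notMem hus]
  -- counting facts
  have hP1le := Finset.card_filter_le s (fun x => G.sgn x = false)
  have hP2le := Finset.card_filter_le (G.verts \ s) (fun x => G.sgn x = true)
  have hsdcard : (G.verts \ s).card = G.verts.card - s.card := Finset.card_sdiff_of_subset hsub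
  have hscard : s.card ≤ G.verts.card := Finset.card_le_card hsub
  have hAle : G.alphaS s ≤ G.verts.card := by
    unfold LGraph.alphaS; omega
  have hn' : G'.verts.card = G.verts.card + 2 := by
    rw [hV, Finset.card_insert_of_notMem huNot, Finset.card_insert_of_notMem hvV]
  have hc0' : G'.verts \ s = insert u (insert v (G.verts \ s)) := by
    rw [hV]; ext x
    simp only [Finset.mem_sdiff, Finset.mem_insert]
    constructor
    · rintro ⟨h1 | h1 | h1, h2⟩
      · exact Or.inl h1
      · exact Or.inr (Or.inl h1)
      · exact Or.inr (Or.inr ⟨h1, h2⟩)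
    · rintro (h1 | h1 | ⟨h1, h2⟩)
      · exact ⟨Or.inl h1, fun hh => hus (h1 ▸ hh)⟩
      · exact ⟨Or.inr (Or.inl h1), fun hh => hvs (h1 ▸ hh)⟩
      · exact ⟨Or.inr (Or.inr h1), h2⟩
  have hcu' : G'.verts \ insert u s = insert v (G.verts \ s) := by
    rw [hV]; ext x
    simp only [Finset.mem_sdiff, Finset.mem_insert, not_or]
    constructor
    · rintro ⟨h1 | h1 | h1, h2, h3⟩
      · exact absurd h1 h2
      · exact Or.inl h1
      · exact Or.inr ⟨h1, h3⟩
    · rintro (h1 | ⟨h1, h2⟩)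
      · exact ⟨Or.inr (Or.inl h1), fun hh => huv (hh.symm.trans h1), fun hh => hvs (h1 ▸ hh)⟩
      · exact ⟨Or.inr (Or.inr h1), fun hh => huV (hh ▸ h1), h2⟩
  have hcv' : G'.verts \ insert v s = insert u (G.verts \ s) := by
    rw [hV]; ext x
    simp only [Finset.mem_sdiff, Finset.mem_insert, not_or]
    constructor
    · rintro ⟨h1 | h1 | h1, h2, h3⟩
      · exact Or.inl h1
      · exact absurd h1 h2
      · exact Or.inr ⟨h1, h3⟩
    · rintro (h1 | ⟨h1, h2⟩)
      · exact ⟨Or.inl h1, fun hh => huv (h1.symm.trans hh), fun hh => hus (h1 ▸ hh)⟩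
      · exact ⟨Or.inr (Or.inr h1), fun hh => hvV (hh ▸ h1), h2⟩
  have hcuv' : G'.verts \ insert u (insert v s) = G.verts \ s := by
    rw [hV]; ext x
    simp only [Finset.mem_sdiff, Finset.mem_insert, not_or]
    constructor
    · rintro ⟨h1 | h1 | h1, h2, h3, h4⟩
      · exact absurd h1 h2
      · exact absurd h1 h3
      · exact ⟨h1, h4⟩
    · rintro ⟨h1, h2⟩
      exact ⟨Or.inr (Or.inr h1), fun hh => huV (hh ▸ h1), fun hh => hvV (hh ▸ h1), h2⟩
  have hfs : s.filter (fun x => G'.sgn x = false) = s.filter (fun x => G.sgn x = false) :=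
    Finset.filter_congr (fun x hx => by rw [hsgn_eq x (hsub hx)])
  have hfV : (G.verts \ s).filter (fun x => G'.sgn x = true)
      = (G.verts \ s).filter (fun x => G.sgn x = true) :=
    Finset.filter_congr (fun x hx => by rw [hsgn_eq x (Finset.mem_sdiff.1 hx).1])
  have hfsf : s.filter (fun x => G'.sgn x = false) = s.filter (fun x => G.sgn x = false) := hfs
  have hunm1 : u ∉ (G.verts \ s).filter (fun x => G.sgn x = true) := by
    simp [Finset.mem_filter, Finset.mem_sdiff, huV]
  have hvnm1 : v ∉ (G.verts \ s).filter (fun x => G.sgn x = true) := by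
    simp [Finset.mem_filter, Finset.mem_sdiff, hvV]
  have hvnm2 : v ∉ s.filter (fun x => G.sgn x = false) := by simp [Finset.mem_filter, hvs]
  have hunm2 : u ∉ s.filter (fun x => G.sgn x = false) := by simp [Finset.mem_filter, hus]
  set X : ℤ := (G.alphaS s : ℤ) - (G.betaS s : ℤ) with hX
  have hbranch : (G'.sgn u = true ∧ G'.sgn v = false) ∨
      (G'.sgn u = false ∧ G'.sgn v = true) := by
    cases hbu : G'.sgn u <;> cases hbv : G'.sgn v <;>
      rw [hbu, hbv] at hsgnuv <;> simp_all
  have hEs : ((G'.alphaS s : ℤ) - (G'.betaS s : ℤ) = X)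
      ∧ ((G'.alphaS (insert u (insert v s)) : ℤ)
          - (G'.betaS (insert u (insert v s)) : ℤ) = X) := by
    have hA0 : G'.alphaS s = G.alphaS s + 1 := by
      unfold LGraph.alphaS
      rw [hfs, hc0', Finset.filter_insert, Finset.filter_insert, hfV]
      rcases hbranch with ⟨hsu, hsv⟩ | ⟨hsu, hsv⟩
      · rw [if_pos hsu, if_neg (by rw [hsv]; simp : ¬(G'.sgn v = true)),
          Finset.card_insert_of_notMem hunm1]
        omega
      · rw [if_neg (by rw [hsu]; simp : ¬(G'.sgn u = true)), if_pos hsv,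
          Finset.card_insert_of_notMem hvnm1]
        omega
    have hAuv : G'.alphaS (insert u (insert v s)) = G.alphaS s + 1 := by
      unfold LGraph.alphaS
      rw [hcuv', Finset.filter_insert, Finset.filter_insert, hfV, hfs]
      rcases hbranch with ⟨hsu, hsv⟩ | ⟨hsu, hsv⟩
      · rw [if_neg (by rw [hsu]; simp : ¬(G'.sgn u = false)), if_pos hsv,
          Finset.card_insert_of_notMem hvnm2]
        omega
      · rw [if_pos hsu, if_neg (by rw [hsv]; simp : ¬(G'.sgn v = false)),
          Finset.card_insert_of_notMem hunm2]
        omega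
    constructor
    · rw [hX]; unfold LGraph.betaS; rw [hA0, hn']; omega
    · rw [hX]; unfold LGraph.betaS; rw [hAuv, hn']; omega
  have hEuvpair : (((G'.alphaS (insert u s) : ℤ) - (G'.betaS (insert u s) : ℤ) = X + (-2))
        ∧ ((G'.alphaS (insert v s) : ℤ) - (G'.betaS (insert v s) : ℤ) = X + 2))
      ∨ (((G'.alphaS (insert u s) : ℤ) - (G'.betaS (insert u s) : ℤ) = X + 2)
        ∧ ((G'.alphaS (insert v s) : ℤ) - (G'.betaS (insert v s) : ℤ) = X + (-2))) := by
    rcases hbranch with ⟨hsu, hsv⟩ | ⟨hsu, hsv⟩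
    · left
      have hAu : G'.alphaS (insert u s) = G.alphaS s := by
        unfold LGraph.alphaS
        rw [hcu', Finset.filter_insert, Finset.filter_insert, hfV, hfs,
          if_neg (by rw [hsu]; simp : ¬(G'.sgn u = false)),
          if_neg (by rw [hsv]; simp : ¬(G'.sgn v = true))]
      have hAv : G'.alphaS (insert v s) = G.alphaS s + 2 := by
        unfold LGraph.alphaS
        rw [hcv', Finset.filter_insert, Finset.filter_insert, hfV, hfs,
          if_pos hsv, if_pos hsu, Finset.card_insert_of_notMem hvnm2,
          Finset.card_insert_of_notMem hunm1]
        omega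
      constructor
      · rw [hX]; unfold LGraph.betaS; rw [hAu, hn']; omega
      · rw [hX]; unfold LGraph.betaS; rw [hAv, hn']; omega
    · right
      have hAu : G'.alphaS (insert u s) = G.alphaS s + 2 := by
        unfold LGraph.alphaS
        rw [hcu', Finset.filter_insert, Finset.filter_insert, hfV, hfs,
          if_pos hsu, if_pos hsv, Finset.card_insert_of_notMem hunm2,
          Finset.card_insert_of_notMem hvnm1]
        omega
      have hAv : G'.alphaS (insert v s) = G.alphaS s := by
        unfold LGraph.alphaS
        rw [hcv', Finset.filter_insert, Finset.filter_insert, hfV, hfs,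
          if_neg (by rw [hsv]; simp : ¬(G'.sgn v = false)),
          if_neg (by rw [hsu]; simp : ¬(G'.sgn u = true))]
      constructor
      · rw [hX]; unfold LGraph.betaS; rw [hAu, hn']; omega
      · rw [hX]; unfold LGraph.betaS; rw [hAv, hn']; omega
  obtain ⟨hE0, hEuv⟩ := hEs
  rw [hE0, hEuv, hc0, hcv, hcuv]
  rcases hEuvpair with ⟨hEu, hEv⟩ | ⟨hEu, hEv⟩ <;>
    rw [hEu, hEv, LaurentPolynomial.T_add, LaurentPolynomial.T_add, pow_succ] <;>
    ring
end

section
/- Let G be a labeled graph with adjacent vertices u, v carrying labels (0,α) and (0,β), and let G' be obtained from G by the fourth graph-move Ω4: replace G by piv(G;u,v) and set the sign of u to −β and the sign of v to −α. Then ⟨G'⟩ = ⟨G⟩. -/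
namespace Omega4Proof
open Finset

abbrev F2 := ZMod 2

def ind (b : Bool) : F2 := if b then 1 else 0

def aF (fr : ℕ → F2) (ad : ℕ → ℕ → Bool) (i j : ℕ) : F2 :=
  if i = j then fr i else ind (ad i j)

def Ent (s : Finset ℕ) (fr : ℕ → F2) (ad : ℕ → ℕ → Bool) (i j : ℕ) : F2 :=
  if i ∈ s ∧ j ∈ s then aF fr ad i j else if i = j then 1 else 0

def pad (W s : Finset ℕ) (fr : ℕ → F2) (ad : ℕ → ℕ → Bool) : Matrix ↥W ↥W F2 :=
  fun i j => Ent s fr ad ↑i ↑j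

def extF (t : Finset ℕ) (x : ↥t → F2) (n : ℕ) : F2 :=
  if h : n ∈ t then x ⟨n, h⟩ else 0

lemma extF_coe (t : Finset ℕ) (x : ↥t → F2) (i : ↥t) : extF t x ↑i = x i := by
  simp [extF]

lemma mulVec_zero_iff (t : Finset ℕ) (E : ℕ → ℕ → F2) (M : Matrix ↥t ↥t F2)
    (hM : ∀ i j : ↥t, M i j = E ↑i ↑j) (x : ↥t → F2) :
    M.mulVec x = 0 ↔ ∀ i ∈ t, ∑ j ∈ t, E i j * extF t x j = 0 := by
  have hrow : ∀ i : ↥t, M.mulVec x i = ∑ j ∈ t, E ↑i j * extF t x j := by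
    intro i
    have h1 : M.mulVec x i = ∑ j : ↥t, E ↑i ↑j * x j := by
      simp [Matrix.mulVec, dotProduct, hM]
    rw [h1, Finset.univ_eq_attach,
      ← Finset.sum_attach t (fun j => E ↑i j * extF t x j)]
    exact Finset.sum_congr rfl fun j _ => by rw [extF_coe]
  constructor
  · intro h0 i hi
    have := congrFun h0 ⟨i, hi⟩
    rw [hrow ⟨i, hi⟩] at this
    exact this
  · intro h0
    funext i
    rw [Pi.zero_apply, hrow i]
    exact h0 ↑i i.2

lemma row_notmem {W s : Finset ℕ} (fr : ℕ → F2) (ad : ℕ → ℕ → Bool) (x : ↥W → F2)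
    {i : ℕ} (hi : i ∈ W) (his : i ∉ s) :
    ∑ j ∈ W, Ent s fr ad i j * extF W x j = extF W x i := by
  rw [Finset.sum_eq_single_of_mem i hi]
  · simp [Ent, his]
  · intro j _ hji
    have hij : i ≠ j := Ne.symm hji
    simp [Ent, his, hij]

lemma row_mem {W s : Finset ℕ} (hs : s ⊆ W) (fr : ℕ → F2) (ad : ℕ → ℕ → Bool)
    (x : ↥W → F2) {i : ℕ} (hi : i ∈ s) :
    ∑ j ∈ W, Ent s fr ad i j * extF W x j = ∑ j ∈ s, aF fr ad i j * extF W x j := by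
  have h1 : ∑ j ∈ s, Ent s fr ad i j * extF W x j
      = ∑ j ∈ W, Ent s fr ad i j * extF W x j := by
    refine Finset.sum_subset hs ?_
    intro j _ hjs
    have hij : i ≠ j := fun h => hjs (h ▸ hi)
    simp [Ent, hjs, hij]
  rw [← h1]
  exact Finset.sum_congr rfl fun j hj => by simp [Ent, hi, hj]

lemma ker_iff {W s : Finset ℕ} (hs : s ⊆ W) (fr : ℕ → F2) (ad : ℕ → ℕ → Bool)
    (x : ↥W → F2) :
    (pad W s fr ad).mulVec x = 0 ↔
      ((∀ i ∈ W, i ∉ s → extF W x i = 0) ∧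
       ∀ i ∈ s, ∑ j ∈ s, aF fr ad i j * extF W x j = 0) := by
  rw [mulVec_zero_iff W (Ent s fr ad) (pad W s fr ad) (fun i j => rfl)]
  constructor
  · intro h
    refine ⟨fun i hi his => ?_, fun i hi => ?_⟩
    · rw [← row_notmem fr ad x hi his]; exact h i hi
    · rw [← row_mem hs fr ad x hi]; exact h i (hs hi)
  · rintro ⟨h1, h2⟩ i hi
    by_cases his : i ∈ s
    · rw [row_mem hs fr ad x his]; exact h2 i his
    · rw [row_notmem fr ad x hi his]; exact h1 i hi his

noncomputable def nu (W s : Finset ℕ) (fr : ℕ → F2) (ad : ℕ → ℕ → Bool) : ℕ :=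
  Fintype.card {x : ↥W → F2 // (pad W s fr ad).mulVec x = 0}

lemma card_ker {n : Type*} [Fintype n] [DecidableEq n] (M : Matrix n n F2) :
    Fintype.card {x : n → F2 // M.mulVec x = 0} = 2 ^ (Fintype.card n - M.rank) := by
  have e : {x : n → F2 // M.mulVec x = 0} ≃ LinearMap.ker M.mulVecLin :=
    Equiv.subtypeEquivRight (fun x => by simp [LinearMap.mem_ker])
  letI : Fintype (LinearMap.ker M.mulVecLin) := Fintype.ofEquiv _ e
  rw [Fintype.card_congr e]
  have h1 : Fintype.card (LinearMap.ker M.mulVecLin)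
      = 2 ^ Module.finrank F2 (LinearMap.ker M.mulVecLin) := by
    have := Module.card_eq_pow_finrank (K := F2) (V := LinearMap.ker M.mulVecLin)
    simpa using this
  rw [h1]
  congr 1
  have h2 := LinearMap.finrank_range_add_finrank_ker M.mulVecLin
  have h3 : Module.finrank F2 (n → F2) = Fintype.card n :=
    Module.finrank_fintype_fun_eq_card F2
  rw [h3] at h2
  have h4 : M.rank = Module.finrank F2 (LinearMap.range M.mulVecLin) := rfl
  omega


lemma card_ker_eq_nu (W s : Finset ℕ) (hs : s ⊆ W) (fr : ℕ → F2) (ad : ℕ → ℕ → Bool)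
    (t : Finset ℕ) (hts : t = s) (M : Matrix ↥t ↥t F2)
    (hM : ∀ i j : ↥t, M i j = aF fr ad ↑i ↑j) :
    Fintype.card {x : ↥t → F2 // M.mulVec x = 0}
      = Fintype.card {x : ↥W → F2 // (pad W s fr ad).mulVec x = 0} := by
  subst hts
  have hextW : ∀ (x : ↥t → F2) (n : ℕ),
      extF W (fun i : ↥W => extF t x ↑i) n = extF t x n := by
    intro x n
    by_cases h : n ∈ W
    · simp [extF, h]
    · have h2 : n ∉ t := fun hn => h (hs hn)
      simp [extF, h, h2]
  refine Fintype.card_congr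
    ⟨fun x => ⟨fun i => extF t x.1 ↑i, ?_⟩,
     fun y => ⟨fun i => y.1 ⟨↑i, hs i.2⟩, ?_⟩, ?_, ?_⟩
  · rw [ker_iff hs]
    constructor
    · intro i _ his
      rw [hextW]
      exact dif_neg his
    · intro i hi
      have hx := (mulVec_zero_iff t (aF fr ad) M hM x.1).1 x.2 i hi
      rw [← hx]
      exact Finset.sum_congr rfl fun j _ => by rw [hextW]
  · rw [mulVec_zero_iff t (aF fr ad) M hM]
    intro i hi
    have hy := (ker_iff hs fr ad y.1).1 y.2
    have := hy.2 i hi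
    rw [← this]
    refine Finset.sum_congr rfl fun j hj => ?_
    congr 1
    simp [extF, hj, hs hj]
  · intro x
    apply Subtype.ext; funext i
    simp [extF, i.2]
  · intro y
    apply Subtype.ext; funext i
    have hy := (ker_iff hs fr ad y.1).1 y.2
    by_cases h : (↑i : ℕ) ∈ t
    · simp [extF, h]
    · have h0 := hy.1 ↑i i.2 h
      simp [extF, h, i.2] at h0 ⊢
      exact h0.symm

lemma key (H : LGraph) (s : Finset ℕ) (hs : s ⊆ H.verts) :
    2 ^ (H.induce s).corankA = nu H.verts s H.fr H.adj := by
  have hts : (H.induce s).verts = s := Finset.inter_eq_left.2 hs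
  have hM : ∀ i j : ↥(H.induce s).verts, (H.induce s).A i j = aF H.fr H.adj ↑i ↑j := by
    intro i j
    have hi : (↑i : ℕ) ∈ s := (Finset.mem_inter.1 i.2).1
    have hj : (↑j : ℕ) ∈ s := (Finset.mem_inter.1 j.2).1
    simp [LGraph.A, LGraph.induce, aF, ind, hi, hj]
  have h1 := card_ker_eq_nu H.verts s hs H.fr H.adj _ hts _ hM
  rw [LGraph.corankA, ← card_ker ((H.induce s).A), nu]
  exact h1


def upd2 {W : Finset ℕ} (x : ↥W → F2) (u v : ℕ) (cu cv : F2) : ↥W → F2 :=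
  fun i => if (↑i : ℕ) = u then cu else if (↑i : ℕ) = v then cv else x i

def upd1 {W : Finset ℕ} (x : ↥W → F2) (u : ℕ) (c : F2) : ↥W → F2 :=
  fun i => if (↑i : ℕ) = u then c else x i

lemma extF_upd2 {W : Finset ℕ} (x : ↥W → F2) {u v : ℕ} (hu : u ∈ W) (hv : v ∈ W)
    (cu cv : F2) (n : ℕ) :
    extF W (upd2 x u v cu cv) n
      = if n = u then cu else if n = v then cv else extF W x n := by
  by_cases h : n ∈ W
  · simp [extF, upd2, h]
  · have h1 : n ≠ u := fun e => h (e ▸ hu)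
    have h2 : n ≠ v := fun e => h (e ▸ hv)
    simp [extF, h, h1, h2]

lemma extF_upd1 {W : Finset ℕ} (x : ↥W → F2) {u : ℕ} (hu : u ∈ W) (c : F2) (n : ℕ) :
    extF W (upd1 x u c) n = if n = u then c else extF W x n := by
  by_cases h : n ∈ W
  · simp [extF, upd1, h]
  · have h1 : n ≠ u := fun e => h (e ▸ hu)
    simp [extF, h, h1]

structure Pkg (W : Finset ℕ) (u v : ℕ) (fr fr' : ℕ → F2) (ad ad' : ℕ → ℕ → Bool) : Prop where
  hne : u ≠ v
  hu : u ∈ W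
  hv : v ∈ W
  sym : ∀ i j, aF fr ad i j = aF fr ad j i
  sym' : ∀ i j, aF fr' ad' i j = aF fr' ad' j i
  rowu : ∀ j, aF fr' ad' u j = aF fr ad u j
  rowv : ∀ j, aF fr' ad' v j = aF fr ad v j
  fru : fr u = 0
  frv : fr v = 0
  fru' : fr' u = 0
  frv' : fr' v = 0
  auv : aF fr ad u v = 1
  ent : ∀ i j, i ≠ u → i ≠ v → j ≠ u → j ≠ v →
    aF fr' ad' i j = aF fr ad i j + aF fr ad u i * aF fr ad v j + aF fr ad v i * aF fr ad u j

namespace Pkg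

variable {W : Finset ℕ} {u v : ℕ} {fr fr' : ℕ → F2} {ad ad' : ℕ → ℕ → Bool}

lemma avu (P : Pkg W u v fr fr' ad ad') : aF fr ad v u = 1 := by
  rw [P.sym v u]; exact P.auv

lemma auv' (P : Pkg W u v fr fr' ad ad') : aF fr' ad' u v = 1 := by
  rw [P.rowu v]; exact P.auv

lemma avu' (P : Pkg W u v fr fr' ad ad') : aF fr' ad' v u = 1 := by
  rw [P.sym' v u]; exact P.auv'

lemma swapUV (P : Pkg W u v fr fr' ad ad') : Pkg W v u fr fr' ad ad' where
  hne := P.hne.symm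
  hu := P.hv
  hv := P.hu
  sym := P.sym
  sym' := P.sym'
  rowu := P.rowv
  rowv := P.rowu
  fru := P.frv
  frv := P.fru
  fru' := P.frv'
  frv' := P.fru'
  auv := P.avu
  ent := by
    intro i j h1 h2 h3 h4
    rw [P.ent i j h2 h1 h4 h3]
    ring

lemma swapPrime (P : Pkg W u v fr fr' ad ad') : Pkg W u v fr' fr ad' ad where
  hne := P.hne
  hu := P.hu
  hv := P.hv
  sym := P.sym'
  sym' := P.sym
  rowu := fun j => (P.rowu j).symm
  rowv := fun j => (P.rowv j).symm
  fru := P.fru'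
  frv := P.frv'
  fru' := P.fru
  frv' := P.frv
  auv := P.auv'
  ent := by
    intro i j h1 h2 h3 h4
    rw [P.rowu i, P.rowv j, P.rowv i, P.rowu j, P.ent i j h1 h2 h3 h4]
    have hh : ∀ a p q : F2, a + p + q + p + q = a := by decide
    exact (hh _ _ _).symm

lemma diag_u (P : Pkg W u v fr fr' ad ad') : aF fr ad u u = 0 := by simp [aF, P.fru]
lemma diag_v (P : Pkg W u v fr fr' ad ad') : aF fr ad v v = 0 := by simp [aF, P.frv]
lemma diag_u' (P : Pkg W u v fr fr' ad ad') : aF fr' ad' u u = 0 := by simp [aF, P.fru']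

end Pkg

section NUlemmas

variable {W : Finset ℕ} {u v : ℕ} {fr fr' : ℕ → F2} {ad ad' : ℕ → ℕ → Bool}

lemma sum_ent_expand (P : Pkg W u v fr fr' ad ad') (t : Finset ℕ)
    (htu : u ∉ t) (htv : v ∉ t) {i : ℕ} (hiu : i ≠ u) (hiv : i ≠ v) (X : ℕ → F2) :
    ∑ j ∈ t, aF fr' ad' i j * X j
      = (∑ j ∈ t, aF fr ad i j * X j)
        + aF fr ad i u * (∑ j ∈ t, aF fr ad v j * X j)
        + aF fr ad i v * (∑ j ∈ t, aF fr ad u j * X j) := by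
  rw [Finset.mul_sum, Finset.mul_sum, ← Finset.sum_add_distrib, ← Finset.sum_add_distrib]
  refine Finset.sum_congr rfl fun j hj => ?_
  have hju : j ≠ u := fun e => htu (e ▸ hj)
  have hjv : j ≠ v := fun e => htv (e ▸ hj)
  rw [P.ent i j hiu hiv hju hjv, P.sym u i, P.sym v i]
  ring


lemma NU1_fwd (P : Pkg W u v fr fr' ad ad') {s : Finset ℕ} (hs : s ⊆ W)
    (hus : u ∉ s) (hvs : v ∉ s) (x : ↥W → F2)
    (hx : (pad W s fr' ad').mulVec x = 0) :
    (pad W (insert u (insert v s)) fr ad).mulVec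
      (upd2 x u v (∑ j ∈ s, aF fr ad v j * extF W x j)
                  (∑ j ∈ s, aF fr ad u j * extF W x j)) = 0 := by
  set X := extF W x with hX
  set dg := ∑ j ∈ s, aF fr ad v j * X j with hdg
  set df := ∑ j ∈ s, aF fr ad u j * X j with hdf
  have hs' : insert u (insert v s) ⊆ W :=
    Finset.insert_subset_iff.2 ⟨P.hu, Finset.insert_subset_iff.2 ⟨P.hv, hs⟩⟩
  obtain ⟨hsup, hrows⟩ := (ker_iff hs fr' ad' x).1 hx
  have husv : u ∉ insert v s := by simp [P.hne, hus]
  rw [ker_iff hs']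
  have hY : ∀ n, extF W (upd2 x u v dg df) n
      = if n = u then dg else if n = v then df else X n :=
    fun n => extF_upd2 x P.hu P.hv dg df n
  have hYu : extF W (upd2 x u v dg df) u = dg := by rw [hY]; simp
  have hYv : extF W (upd2 x u v dg df) v = df := by rw [hY]; simp [P.hne.symm]
  have hYs : ∀ j ∈ s, extF W (upd2 x u v dg df) j = X j := by
    intro j hj
    rw [hY, if_neg (fun e : j = u => hus (e ▸ hj)), if_neg (fun e : j = v => hvs (e ▸ hj))]
  constructor
  · intro i hi his
    have hiu : i ≠ u := fun e => his (by simp [e])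
    have hiv : i ≠ v := fun e => his (by simp [e])
    have his' : i ∉ s := fun e => his (by simp [e])
    rw [hY, if_neg hiu, if_neg hiv]
    exact hsup i hi his'
  · intro i hi
    rw [Finset.sum_insert husv, Finset.sum_insert hvs, hYu, hYv]
    have hsum : ∑ j ∈ s, aF fr ad i j * extF W (upd2 x u v dg df) j
        = ∑ j ∈ s, aF fr ad i j * X j :=
      Finset.sum_congr rfl fun j hj => by rw [hYs j hj]
    rw [hsum]
    rcases Finset.mem_insert.1 hi with hiu | hi2
    · subst hiu
      rw [P.diag_u, P.auv, ← hdf]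
      have hh : ∀ a b : F2, 0 * a + (1 * b + b) = 0 := by decide
      exact hh dg df
    · rcases Finset.mem_insert.1 hi2 with hiv | his
      · subst hiv
        rw [P.avu, P.diag_v, ← hdg]
        have hh : ∀ a b : F2, 1 * a + (0 * b + a) = 0 := by decide
        exact hh dg df
      · have hiu : i ≠ u := fun e => hus (e ▸ his)
        have hiv : i ≠ v := fun e => hvs (e ▸ his)
        have hexp := sum_ent_expand P s hus hvs hiu hiv X
        have h0 := hrows i his
        rw [hexp, ← hdg, ← hdf] at h0
        linear_combination h0

lemma NU1_rows (P : Pkg W u v fr fr' ad ad') {s : Finset ℕ} (hs : s ⊆ W)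
    (hus : u ∉ s) (hvs : v ∉ s) (y : ↥W → F2)
    (hy : (pad W (insert u (insert v s)) fr ad).mulVec y = 0) :
    extF W y u = (∑ j ∈ s, aF fr ad v j * extF W y j) ∧
    extF W y v = (∑ j ∈ s, aF fr ad u j * extF W y j) := by
  have hs' : insert u (insert v s) ⊆ W :=
    Finset.insert_subset_iff.2 ⟨P.hu, Finset.insert_subset_iff.2 ⟨P.hv, hs⟩⟩
  obtain ⟨-, hrows⟩ := (ker_iff hs' fr ad y).1 hy
  have husv : u ∉ insert v s := by simp [P.hne, hus]
  have hrowu := hrows u (Finset.mem_insert_self u _)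
  have hrowv := hrows v (Finset.mem_insert.2 (Or.inr (Finset.mem_insert_self v s)))
  rw [Finset.sum_insert husv, Finset.sum_insert hvs] at hrowu hrowv
  rw [P.diag_u, P.auv] at hrowu
  rw [P.avu, P.diag_v] at hrowv
  constructor
  · have hh : ∀ a b c : F2, 1 * a + (0 * b + c) = 0 → a = c := by decide
    exact hh _ _ _ hrowv
  · have hh : ∀ a b c : F2, 0 * a + (1 * b + c) = 0 → b = c := by decide
    exact hh _ _ _ hrowu

lemma NU1_bwd (P : Pkg W u v fr fr' ad ad') {s : Finset ℕ} (hs : s ⊆ W)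
    (hus : u ∉ s) (hvs : v ∉ s) (y : ↥W → F2)
    (hy : (pad W (insert u (insert v s)) fr ad).mulVec y = 0) :
    (pad W s fr' ad').mulVec (upd2 y u v 0 0) = 0 := by
  set Y := extF W y with hYdef
  have hs' : insert u (insert v s) ⊆ W :=
    Finset.insert_subset_iff.2 ⟨P.hu, Finset.insert_subset_iff.2 ⟨P.hv, hs⟩⟩
  obtain ⟨hsup, hrows⟩ := (ker_iff hs' fr ad y).1 hy
  obtain ⟨hYu, hYv⟩ := NU1_rows P hs hus hvs y hy
  have husv : u ∉ insert v s := by simp [P.hne, hus]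
  have hZ : ∀ n, extF W (upd2 y u v 0 0) n
      = if n = u then 0 else if n = v then 0 else Y n :=
    fun n => extF_upd2 y P.hu P.hv 0 0 n
  have hZs : ∀ j ∈ s, extF W (upd2 y u v 0 0) j = Y j := by
    intro j hj
    rw [hZ, if_neg (fun e : j = u => hus (e ▸ hj)), if_neg (fun e : j = v => hvs (e ▸ hj))]
  rw [ker_iff hs]
  constructor
  · intro i hi his
    rw [hZ]
    by_cases hiu : i = u
    · simp [hiu]
    · by_cases hiv : i = v
      · simp [hiu, hiv]
      · rw [if_neg hiu, if_neg hiv]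
        exact hsup i hi (by simp [hiu, hiv, his])
  · intro i hi
    have hiu : i ≠ u := fun e => hus (e ▸ hi)
    have hiv : i ≠ v := fun e => hvs (e ▸ hi)
    have hsum : ∑ j ∈ s, aF fr' ad' i j * extF W (upd2 y u v 0 0) j
        = ∑ j ∈ s, aF fr' ad' i j * Y j :=
      Finset.sum_congr rfl fun j hj => by rw [hZs j hj]
    rw [hsum, sum_ent_expand P s hus hvs hiu hiv Y]
    have h0 := hrows i (by simp [hi])
    rw [Finset.sum_insert husv, Finset.sum_insert hvs, hYu, hYv] at h0
    linear_combination h0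

lemma NU1 (P : Pkg W u v fr fr' ad ad') {s : Finset ℕ} (hs : s ⊆ W)
    (hus : u ∉ s) (hvs : v ∉ s) :
    nu W s fr' ad' = nu W (insert u (insert v s)) fr ad := by
  refine Fintype.card_congr
    ⟨fun x => ⟨upd2 x.1 u v (∑ j ∈ s, aF fr ad v j * extF W x.1 j)
        (∑ j ∈ s, aF fr ad u j * extF W x.1 j), NU1_fwd P hs hus hvs x.1 x.2⟩,
     fun y => ⟨upd2 y.1 u v 0 0, NU1_bwd P hs hus hvs y.1 y.2⟩, ?_, ?_⟩
  · intro x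
    apply Subtype.ext; funext i
    obtain ⟨hsup, -⟩ := (ker_iff hs fr' ad' x.1).1 x.2
    show upd2 (upd2 x.1 u v _ _) u v 0 0 i = x.1 i
    by_cases hiu : (↑i : ℕ) = u
    · have h0 : x.1 i = 0 := by
        have h1 := hsup ↑i i.2 (by rw [hiu]; exact hus)
        rwa [extF_coe] at h1
      simp [upd2, hiu, h0]
    · by_cases hiv : (↑i : ℕ) = v
      · have h0 : x.1 i = 0 := by
          have h1 := hsup ↑i i.2 (by rw [hiv]; exact hvs)
          rwa [extF_coe] at h1
        simp [upd2, hiu, hiv, h0]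
      · simp [upd2, hiu, hiv]
  · intro y
    apply Subtype.ext; funext i
    obtain ⟨hYu, hYv⟩ := NU1_rows P hs hus hvs y.1 y.2
    have hZs : ∀ j ∈ s, extF W (upd2 y.1 u v 0 0) j = extF W y.1 j := by
      intro j hj
      rw [extF_upd2 y.1 P.hu P.hv 0 0 j, if_neg (fun e : j = u => hus (e ▸ hj)),
        if_neg (fun e : j = v => hvs (e ▸ hj))]
    have hgs : (∑ j ∈ s, aF fr ad v j * extF W (upd2 y.1 u v 0 0) j)
        = ∑ j ∈ s, aF fr ad v j * extF W y.1 j :=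
      Finset.sum_congr rfl fun j hj => by rw [hZs j hj]
    have hfs : (∑ j ∈ s, aF fr ad u j * extF W (upd2 y.1 u v 0 0) j)
        = ∑ j ∈ s, aF fr ad u j * extF W y.1 j :=
      Finset.sum_congr rfl fun j hj => by rw [hZs j hj]
    show (if (↑i : ℕ) = u then (∑ j ∈ s, aF fr ad v j * extF W (upd2 y.1 u v 0 0) j)
      else if (↑i : ℕ) = v then (∑ j ∈ s, aF fr ad u j * extF W (upd2 y.1 u v 0 0) j)
      else upd2 y.1 u v 0 0 i) = y.1 i
    by_cases hiu : (↑i : ℕ) = u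
    · rw [if_pos hiu, hgs, ← hYu]
      have h3 := extF_coe W y.1 i
      rw [hiu] at h3
      exact h3
    · by_cases hiv : (↑i : ℕ) = v
      · rw [if_neg hiu, if_pos hiv, hfs, ← hYv]
        have h3 := extF_coe W y.1 i
        rw [hiv] at h3
        exact h3
      · rw [if_neg hiu, if_neg hiv]
        simp [upd2, hiu, hiv]

lemma NU3_fwd (P : Pkg W u v fr fr' ad ad') {s : Finset ℕ} (hs : s ⊆ W)
    (hus : u ∈ s) (hvs : v ∉ s) (x : ↥W → F2)
    (hx : (pad W s fr' ad').mulVec x = 0) :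
    (pad W s fr ad).mulVec
      (upd1 x u (extF W x u + ∑ j ∈ s.erase u, aF fr ad v j * extF W x j)) = 0 := by
  set L := ∑ j ∈ s.erase u, aF fr ad v j * extF W x j with hL
  set c := extF W x u + L with hc
  obtain ⟨hsup, hrows⟩ := (ker_iff hs fr' ad' x).1 hx
  have hZ : ∀ n, extF W (upd1 x u c) n = if n = u then c else extF W x n :=
    fun n => extF_upd1 x P.hu c n
  have hZs : ∀ j ∈ s.erase u, extF W (upd1 x u c) j = extF W x j := by
    intro j hj
    rw [hZ, if_neg (Finset.mem_erase.1 hj).1]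
  have hueru : u ∉ s.erase u := Finset.notMem_erase u s
  have hverase : v ∉ s.erase u := fun hmem => hvs (Finset.mem_of_mem_erase hmem)
  -- the row at u of the primed system
  have hdfu : ∑ j ∈ s.erase u, aF fr ad u j * extF W x j = 0 := by
    have hrowu := hrows u hus
    rw [← Finset.add_sum_erase s _ hus, P.diag_u'] at hrowu
    have e : ∑ j ∈ s.erase u, aF fr' ad' u j * extF W x j
        = ∑ j ∈ s.erase u, aF fr ad u j * extF W x j :=
      Finset.sum_congr rfl fun j _ => by rw [P.rowu j]
    rw [e] at hrowu
    have hh : ∀ a b : F2, 0 * a + b = 0 → b = 0 := by decide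
    exact hh _ _ hrowu
  rw [ker_iff hs]
  constructor
  · intro i hi his
    rw [hZ, if_neg (fun e : i = u => his (e ▸ hus))]
    exact hsup i hi his
  · intro i hi
    rw [← Finset.add_sum_erase s _ hus]
    have hsum2 : ∑ j ∈ s.erase u, aF fr ad i j * extF W (upd1 x u c) j
        = ∑ j ∈ s.erase u, aF fr ad i j * extF W x j :=
      Finset.sum_congr rfl fun j hj => by rw [hZs j hj]
    rw [hsum2, hZ, if_pos rfl]
    by_cases hiu : i = u
    · subst hiu
      rw [P.diag_u, hdfu]
      simp
    · have hiv : i ≠ v := fun e => hvs (e ▸ hi)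
      have h0 := hrows i hi
      rw [← Finset.add_sum_erase s _ hus] at h0
      have e1 : aF fr' ad' i u = aF fr ad i u :=
        (P.sym' i u).trans ((P.rowu i).trans (P.sym u i))
      rw [e1, sum_ent_expand P (s.erase u) hueru hverase hiu hiv (extF W x), ← hL, hdfu] at h0
      rw [hc]
      linear_combination h0

lemma NU3_bwd (P : Pkg W u v fr fr' ad ad') {s : Finset ℕ} (hs : s ⊆ W)
    (hus : u ∈ s) (hvs : v ∉ s) (y : ↥W → F2)
    (hy : (pad W s fr ad).mulVec y = 0) :
    (pad W s fr' ad').mulVec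
      (upd1 y u (extF W y u + ∑ j ∈ s.erase u, aF fr ad v j * extF W y j)) = 0 := by
  have h := NU3_fwd P.swapPrime hs hus hvs y hy
  have e : (∑ j ∈ s.erase u, aF fr' ad' v j * extF W y j)
      = ∑ j ∈ s.erase u, aF fr ad v j * extF W y j :=
    Finset.sum_congr rfl fun j _ => by rw [P.rowv j]
  rwa [e] at h

lemma upd1_invol {W : Finset ℕ} {u : ℕ} (hu : u ∈ W) (g : ℕ → F2) (t : Finset ℕ)
    (hut : u ∉ t) (x : ↥W → F2) :
    upd1 (upd1 x u (extF W x u + ∑ j ∈ t, g j * extF W x j)) u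
      (extF W (upd1 x u (extF W x u + ∑ j ∈ t, g j * extF W x j)) u
        + ∑ j ∈ t, g j * extF W (upd1 x u (extF W x u + ∑ j ∈ t, g j * extF W x j)) j)
      = x := by
  set c := extF W x u + ∑ j ∈ t, g j * extF W x j with hc
  have h1 : extF W (upd1 x u c) u = c := by rw [extF_upd1 x hu]; simp
  have h2 : ∑ j ∈ t, g j * extF W (upd1 x u c) j = ∑ j ∈ t, g j * extF W x j := by
    refine Finset.sum_congr rfl fun j hj => ?_
    rw [extF_upd1 x hu, if_neg (fun e : j = u => hut (e ▸ hj))]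
  funext i
  by_cases hiu : (↑i : ℕ) = u
  · simp only [upd1, hiu, if_pos rfl]
    rw [h1, h2, hc]
    have h3 : extF W x ↑i = x i := extF_coe W x i
    rw [hiu] at h3
    rw [← h3]
    have hh : ∀ a b : F2, a + b + b = a := by decide
    exact hh _ _
  · simp [upd1, hiu]

lemma NU3 (P : Pkg W u v fr fr' ad ad') {s : Finset ℕ} (hs : s ⊆ W)
    (hus : u ∈ s) (hvs : v ∉ s) :
    nu W s fr' ad' = nu W s fr ad := by
  refine Fintype.card_congr
    ⟨fun x => ⟨upd1 x.1 u (extF W x.1 u + ∑ j ∈ s.erase u, aF fr ad v j * extF W x.1 j),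
        NU3_fwd P hs hus hvs x.1 x.2⟩,
     fun y => ⟨upd1 y.1 u (extF W y.1 u + ∑ j ∈ s.erase u, aF fr ad v j * extF W y.1 j),
        NU3_bwd P hs hus hvs y.1 y.2⟩, ?_, ?_⟩
  · intro x
    apply Subtype.ext
    exact upd1_invol P.hu (fun j => aF fr ad v j) (s.erase u) (Finset.notMem_erase u s) x.1
  · intro y
    apply Subtype.ext
    exact upd1_invol P.hu (fun j => aF fr ad v j) (s.erase u) (Finset.notMem_erase u s) y.1

lemma NU2 (P : Pkg W u v fr fr' ad ad') {s : Finset ℕ} (hs : s ⊆ W)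
    (hus : u ∈ s) (hvs : v ∈ s) :
    nu W s fr' ad' = nu W ((s.erase u).erase v) fr ad := by
  have h0 : (s.erase u).erase v ⊆ W :=
    fun a ha => hs (Finset.mem_of_mem_erase (Finset.mem_of_mem_erase ha))
  have h1 : u ∉ (s.erase u).erase v := fun ha => Finset.notMem_erase u s (Finset.mem_of_mem_erase ha)
  have h2 : v ∉ (s.erase u).erase v := Finset.notMem_erase v _
  have h3 : insert u (insert v ((s.erase u).erase v)) = s := by
    ext a
    by_cases ha1 : a = u <;> by_cases ha2 : a = v <;>
      simp [ha1, ha2, hus, hvs, Finset.mem_insert, Finset.mem_erase]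
  have := NU1 P.swapPrime h0 h1 h2
  rw [h3] at this
  exact this.symm

end NUlemmas

lemma aF_symm_of (fr : ℕ → F2) (ad : ℕ → ℕ → Bool) (hsym : ∀ i j, ad i j = ad j i)
    (i j : ℕ) : aF fr ad i j = aF fr ad j i := by
  by_cases hij : i = j
  · subst hij; rfl
  · unfold aF
    rw [if_neg hij, if_neg (Ne.symm hij), hsym i j]

lemma pkg_of_omega4 {G G' : LGraph} {u v : ℕ} (h : LGraph.Omega4At G G' u v) :
    Pkg G.verts u v G.fr G'.fr G.adj G'.adj := by
  obtain ⟨hne, hadj, hfru, hfrv, hverts, hadjf, hfru', hfrv', hsgnu, hsgnv, hoth⟩ := h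
  have hu : u ∈ G.verts := (G.adj_mem u v hadj).1
  have hv : v ∈ G.verts := (G.adj_mem u v hadj).2
  have hrowu : ∀ j, G'.adj u j = G.adj u j := by
    intro j
    rw [hadjf u j, if_neg]
    rintro ⟨-, hmem, -⟩
    exact hmem (by simp)
  have hrowv : ∀ j, G'.adj v j = G.adj v j := by
    intro j
    rw [hadjf v j, if_neg]
    rintro ⟨-, hmem, -⟩
    exact hmem (by simp)
  refine ⟨hne, hu, hv, aF_symm_of _ _ G.symm, aF_symm_of _ _ G'.symm, ?_, ?_,
    hfru, hfrv, hfru', hfrv', ?_, ?_⟩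
  · intro j
    by_cases hj : u = j
    · subst hj; unfold aF; rw [if_pos rfl, if_pos rfl, hfru', hfru]
    · unfold aF; rw [if_neg hj, if_neg hj, hrowu j]
  · intro j
    by_cases hj : v = j
    · subst hj; unfold aF; rw [if_pos rfl, if_pos rfl, hfrv', hfrv]
    · unfold aF; rw [if_neg hj, if_neg hj, hrowv j]
  · unfold aF; rw [if_neg hne]; simp [ind, hadj]
  · intro i j hiu hiv hju hjv
    by_cases hij : i = j
    · subst hij
      have hfr : G'.fr i = G.fr i := (hoth i hiu hiv).1
      have e1 : aF G'.fr G'.adj i i = G.fr i := by unfold aF; rw [if_pos rfl, hfr]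
      have e2 : aF G.fr G.adj i i = G.fr i := by unfold aF; rw [if_pos rfl]
      rw [e1, e2]
      have hh : ∀ a p q : F2, a = a + p * q + q * p := by decide
      exact hh _ _ _
    · have hcond : (i ≠ j ∧ i ∉ ({u, v} : Finset ℕ) ∧ j ∉ ({u, v} : Finset ℕ) ∧
          (LGraph.pivCond G u v i j ∨ LGraph.pivCond G u v j i)) ↔
          (LGraph.pivCond G u v i j ∨ LGraph.pivCond G u v j i) := by
        simp [hij, hiu, hiv, hju, hjv]
      have e : G'.adj i j = (if LGraph.pivCond G u v i j ∨ LGraph.pivCond G u v j i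
          then !(G.adj i j) else G.adj i j) := by
        rw [hadjf i j, if_congr hcond rfl rfl]
      have f1 : aF G'.fr G'.adj i j = ind (G'.adj i j) := by unfold aF; rw [if_neg hij]
      have f2 : aF G.fr G.adj i j = ind (G.adj i j) := by unfold aF; rw [if_neg hij]
      have f3 : aF G.fr G.adj u i = ind (G.adj u i) := by
        unfold aF; rw [if_neg (show ¬u = i from fun e => hiu e.symm)]
      have f4 : aF G.fr G.adj v j = ind (G.adj v j) := by
        unfold aF; rw [if_neg (show ¬v = j from fun e => hjv e.symm)]
      have f5 : aF G.fr G.adj v i = ind (G.adj v i) := by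
        unfold aF; rw [if_neg (show ¬v = i from fun e => hiv e.symm)]
      have f6 : aF G.fr G.adj u j = ind (G.adj u j) := by
        unfold aF; rw [if_neg (show ¬u = j from fun e => hju e.symm)]
      rw [f1, f2, f3, f4, f5, f6, e]
      cases h1 : G.adj u i <;> cases h2 : G.adj v j <;> cases h3 : G.adj v i <;>
        cases h4 : G.adj u j <;> cases hb : G.adj i j <;>
          simp [LGraph.pivCond, ind, h1, h2, h3, h4, hb] <;> decide

def mset (u v : ℕ) (s : Finset ℕ) : Finset ℕ :=
  if u ∈ s then (if v ∈ s then (s.erase u).erase v else s)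
  else (if v ∈ s then s else insert u (insert v s))

lemma mset_subset {W : Finset ℕ} {u v : ℕ} (hu : u ∈ W) (hv : v ∈ W)
    {s : Finset ℕ} (hs : s ⊆ W) : mset u v s ⊆ W := by
  intro a ha
  unfold mset at ha
  split_ifs at ha
  · exact hs (Finset.mem_of_mem_erase (Finset.mem_of_mem_erase ha))
  · exact hs ha
  · exact hs ha
  · rcases Finset.mem_insert.1 ha with h | h
    · exact h ▸ hu
    · rcases Finset.mem_insert.1 h with h' | h'
      · exact h' ▸ hv
      · exact hs h'

lemma mem_mset_other {u v a : ℕ} (s : Finset ℕ) (hau : a ≠ u) (hav : a ≠ v) :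
    a ∈ mset u v s ↔ a ∈ s := by
  unfold mset
  split_ifs <;> simp [hau, hav]

lemma mset_mset {u v : ℕ} (hne : u ≠ v) (s : Finset ℕ) :
    mset u v (mset u v s) = s := by
  by_cases h1 : u ∈ s <;> by_cases h2 : v ∈ s
  · have e1 : mset u v s = (s.erase u).erase v := by simp [mset, h1, h2]
    have hu2 : u ∉ (s.erase u).erase v :=
      fun ha => Finset.notMem_erase u s (Finset.mem_of_mem_erase ha)
    have hv2 : v ∉ (s.erase u).erase v := Finset.notMem_erase v _
    have e2 : mset u v ((s.erase u).erase v)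
        = insert u (insert v ((s.erase u).erase v)) := by simp [mset, hu2, hv2]
    rw [e1, e2]
    ext a
    by_cases ha1 : a = u <;> by_cases ha2 : a = v <;>
      simp [ha1, ha2, h1, h2, Finset.mem_insert, Finset.mem_erase]
  · have e1 : mset u v s = s := by simp [mset, h1, h2]
    rw [e1, e1]
  · have e1 : mset u v s = s := by simp [mset, h1, h2]
    rw [e1, e1]
  · have e1 : mset u v s = insert u (insert v s) := by simp [mset, h1, h2]
    have hu2 : u ∈ insert u (insert v s) := Finset.mem_insert_self _ _
    have hv2 : v ∈ insert u (insert v s) :=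
      Finset.mem_insert.2 (Or.inr (Finset.mem_insert_self _ _))
    have e2 : mset u v (insert u (insert v s))
        = ((insert u (insert v s)).erase u).erase v := by simp [mset, hu2, hv2]
    rw [e1, e2]
    ext a
    by_cases ha1 : a = u <;> by_cases ha2 : a = v <;>
      simp [ha1, ha2, h1, h2, hne, Finset.mem_insert, Finset.mem_erase]

def ACnt (sg : ℕ → Bool) (s : Finset ℕ) (x : ℕ) : ℕ :=
  if x ∈ s then (if sg x then 0 else 1) else (if sg x then 1 else 0)

lemma alphaS_eq_sum (H : LGraph) (s : Finset ℕ) (hs : s ⊆ H.verts) :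
    H.alphaS s = ∑ x ∈ H.verts, ACnt H.sgn s x := by
  unfold LGraph.alphaS
  have h1 : (s.filter (fun x => H.sgn x = false)).card
      = ∑ x ∈ s, (if H.sgn x then 0 else 1) := by
    rw [Finset.card_filter]
    exact Finset.sum_congr rfl fun x _ => by cases hx : H.sgn x <;> simp [hx]
  have h2 : ((H.verts \ s).filter (fun x => H.sgn x = true)).card
      = ∑ x ∈ H.verts \ s, (if H.sgn x then 1 else 0) := by
    rw [Finset.card_filter]
  rw [h1, h2, ← Finset.sum_sdiff hs (f := fun x => ACnt H.sgn s x), add_comm]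
  congr 1
  · exact Finset.sum_congr rfl fun x hx => by
      simp [ACnt, (Finset.mem_sdiff.1 hx).2]
  · exact Finset.sum_congr rfl fun x hx => by simp [ACnt, hx]

lemma alpha_eq (G G' : LGraph) (u v : ℕ) (h : LGraph.Omega4At G G' u v)
    {s : Finset ℕ} (hs : s ⊆ G.verts) : G'.alphaS s = G.alphaS (mset u v s) := by
  obtain ⟨hne, hadj, hfru, hfrv, hverts, hadjf, hfru', hfrv', hsgnu, hsgnv, hoth⟩ := h
  have hu : u ∈ G.verts := (G.adj_mem u v hadj).1
  have hv : v ∈ G.verts := (G.adj_mem u v hadj).2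
  have hs' : s ⊆ G'.verts := by rw [hverts]; exact hs
  have hms : mset u v s ⊆ G.verts := mset_subset hu hv hs
  rw [alphaS_eq_sum G' s hs', alphaS_eq_sum G _ hms, hverts]
  have hvm : v ∈ G.verts.erase u := Finset.mem_erase.2 ⟨hne.symm, hv⟩
  rw [← Finset.add_sum_erase _ (fun x => ACnt G'.sgn s x) hu,
      ← Finset.add_sum_erase _ (fun x => ACnt G'.sgn s x) hvm,
      ← Finset.add_sum_erase _ (fun x => ACnt G.sgn (mset u v s) x) hu,
      ← Finset.add_sum_erase _ (fun x => ACnt G.sgn (mset u v s) x) hvm]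
  have hrest : ∑ x ∈ (G.verts.erase u).erase v, ACnt G'.sgn s x
      = ∑ x ∈ (G.verts.erase u).erase v, ACnt G.sgn (mset u v s) x := by
    refine Finset.sum_congr rfl fun x hx => ?_
    have hxv : x ≠ v := (Finset.mem_erase.1 hx).1
    have hxu : x ≠ u := (Finset.mem_erase.1 (Finset.mem_of_mem_erase hx)).1
    simp [ACnt, (hoth x hxu hxv).2, mem_mset_other s hxu hxv]
  have hcorner : ACnt G'.sgn s u + ACnt G'.sgn s v
      = ACnt G.sgn (mset u v s) u + ACnt G.sgn (mset u v s) v := by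
    by_cases h1 : u ∈ s <;> by_cases h2 : v ∈ s
    · have m1 : u ∉ mset u v s := by
        simp [mset, h1, h2, Finset.mem_erase]
      have m2 : v ∉ mset u v s := by
        simp [mset, h1, h2, Finset.mem_erase]
      simp only [ACnt, if_pos h1, if_pos h2, if_neg m1, if_neg m2, hsgnu, hsgnv]
      cases hgu : G.sgn u <;> cases hgv : G.sgn v <;> simp [hgu, hgv]
    · have m1 : u ∈ mset u v s := by simp [mset, h1, h2]
      have m2 : v ∉ mset u v s := by simp [mset, h1, h2]
      simp only [ACnt, if_pos h1, if_neg h2, if_pos m1, if_neg m2, hsgnu, hsgnv]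
      cases hgu : G.sgn u <;> cases hgv : G.sgn v <;> simp [hgu, hgv]
    · have m1 : u ∉ mset u v s := by simp [mset, h1, h2]
      have m2 : v ∈ mset u v s := by simp [mset, h1, h2]
      simp only [ACnt, if_neg h1, if_pos h2, if_neg m1, if_pos m2, hsgnu, hsgnv]
      cases hgu : G.sgn u <;> cases hgv : G.sgn v <;> simp [hgu, hgv]
    · have m1 : u ∈ mset u v s := by simp [mset, h1, h2]
      have m2 : v ∈ mset u v s := by simp [mset, h1, h2, hne.symm]
      simp only [ACnt, if_neg h1, if_neg h2, if_pos m1, if_pos m2, hsgnu, hsgnv]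
      cases hgu : G.sgn u <;> cases hgv : G.sgn v <;> simp [hgu, hgv]
  omega

lemma beta_eq (G G' : LGraph) (u v : ℕ) (h : LGraph.Omega4At G G' u v)
    {s : Finset ℕ} (hs : s ⊆ G.verts) : G'.betaS s = G.betaS (mset u v s) := by
  have hverts : G'.verts = G.verts := h.2.2.2.2.1
  unfold LGraph.betaS
  rw [hverts, alpha_eq G G' u v h hs]

lemma corank_eq (G G' : LGraph) (u v : ℕ) (h : LGraph.Omega4At G G' u v)
    {s : Finset ℕ} (hs : s ⊆ G.verts) :
    (G'.induce s).corankA = (G.induce (mset u v s)).corankA := by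
  have P := pkg_of_omega4 h
  have hverts : G'.verts = G.verts := h.2.2.2.2.1
  have k1 : (2:ℕ) ^ (G'.induce s).corankA = nu G.verts s G'.fr G'.adj := by
    have := key G' s (by rw [hverts]; exact hs)
    rwa [hverts] at this
  have k2 : (2:ℕ) ^ (G.induce (mset u v s)).corankA
      = nu G.verts (mset u v s) G.fr G.adj :=
    key G _ (mset_subset P.hu P.hv hs)
  have hnu : nu G.verts s G'.fr G'.adj = nu G.verts (mset u v s) G.fr G.adj := by
    by_cases h1 : u ∈ s <;> by_cases h2 : v ∈ s
    · have e : mset u v s = (s.erase u).erase v := by simp [mset, h1, h2]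
      rw [e]; exact NU2 P hs h1 h2
    · have e : mset u v s = s := by simp [mset, h1, h2]
      rw [e]; exact NU3 P hs h1 h2
    · have e : mset u v s = s := by simp [mset, h1, h2]
      rw [e]; exact NU3 P.swapUV hs h2 h1
    · have e : mset u v s = insert u (insert v s) := by simp [mset, h1, h2]
      rw [e]; exact NU1 P hs h1 h2
  exact Nat.pow_right_injective (le_refl 2) (k1.trans (hnu.trans k2.symm))

end Omega4Proof

/-- The Kauffman bracket is invariant under the fourth
graph-move `Ω4` (pivot at two adjacent vertices labeled `(0,α)`, `(0,β)`,
with the signs of `u`, `v` set to `-β`, `-α`). -/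
theorem bracket_omega4 (G G' : LGraph) (u v : ℕ)
    (h : LGraph.Omega4At G G' u v) :
    G'.bracket = G.bracket := by
  have hne : u ≠ v := h.1
  have hadj : G.adj u v = true := h.2.1
  have hverts : G'.verts = G.verts := h.2.2.2.2.1
  have hu : u ∈ G.verts := (G.adj_mem u v hadj).1
  have hv : v ∈ G.verts := (G.adj_mem u v hadj).2
  unfold LGraph.bracket
  rw [hverts]
  refine Finset.sum_nbij' (fun s => Omega4Proof.mset u v s)
    (fun s => Omega4Proof.mset u v s) ?_ ?_ ?_ ?_ ?_
  · intro a ha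
    exact Finset.mem_powerset.2
      (Omega4Proof.mset_subset hu hv (Finset.mem_powerset.1 ha))
  · intro a ha
    exact Finset.mem_powerset.2
      (Omega4Proof.mset_subset hu hv (Finset.mem_powerset.1 ha))
  · intro a _
    exact Omega4Proof.mset_mset hne a
  · intro a _
    exact Omega4Proof.mset_mset hne a
  · intro a ha
    have hsub := Finset.mem_powerset.1 ha
    rw [Omega4Proof.alpha_eq G G' u v h hsub, Omega4Proof.beta_eq G G' u v h hsub,
      Omega4Proof.corank_eq G G' u v h hsub]
end

section
/- Let G be a labeled graph with a vertex v carrying label (1,α), and let G' be obtained from G by the graph-move Ω4': replace G by LC(G;v), change the sign of v to −α, and toggle the framing of every vertex adjacent to v. Then ⟨G'⟩ = ⟨G⟩. -/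
section AuxOmega4p

open Matrix LinearMap

lemma sum_split {F : Type*} [AddCommMonoid F] {n : Type*} [Fintype n] [DecidableEq n]
    (v : n) (f : n → F) :
    ∑ t, f t = f v + ∑ t : {x : n // x ≠ v}, f t.1 := by
  rw [← Finset.sum_subtype (Finset.univ.erase v)
    (fun x => by simp [Finset.mem_erase]) f]
  exact (Finset.add_sum_erase _ f (Finset.mem_univ v)).symm

lemma finrank_ker_schur {F : Type*} [Field F] {n : Type*} [Fintype n] [DecidableEq n]
    (M : Matrix n n F) (v : n) (hv : M v v = 1) :
    Module.finrank F (ker M.mulVecLin) =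
      Module.finrank F (ker (Matrix.mulVecLin
        (Matrix.of fun x y : {x : n // x ≠ v} => M x.1 y.1 - M x.1 v * M v y.1))) := by
  set D : Matrix {x : n // x ≠ v} {x : n // x ≠ v} F :=
    Matrix.of fun x y => M x.1 y.1 - M x.1 v * M v y.1 with hD
  have expand : ∀ (x : n → F) (s : {x : n // x ≠ v}),
      D.mulVec (fun t => x t.1) s
        = (M.mulVec x s.1 - M s.1 v * x v) - M s.1 v * (M.mulVec x v - M v v * x v) := by
    intro x s
    simp only [Matrix.mulVec, dotProduct, hD, Matrix.of_apply]
    rw [sum_split v (fun t => M s.1 t * x t), sum_split v (fun t => M v t * x t)]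
    rw [show ∀ a b c d e : F, a*c + e - a*c - (a*(b*c + d - b*c)) = e - a*d by intros; ring]
    rw [Finset.mul_sum, ← Finset.sum_sub_distrib]
    exact Finset.sum_congr rfl (fun t _ => by ring)
  have rowv : ∀ x : n → F, M.mulVec x = 0 →
      x v = - ∑ t : {x : n // x ≠ v}, M v t.1 * x t.1 := by
    intro x hx
    have h0 := congrFun hx v
    rw [Matrix.mulVec, dotProduct] at h0
    rw [sum_split v (fun t => M v t * x t), hv, one_mul] at h0
    simpa [eq_neg_iff_add_eq_zero] using h0
  have hres : ∀ x ∈ ker M.mulVecLin,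
      (LinearMap.funLeft F F (Subtype.val : {x : n // x ≠ v} → n)) x ∈ ker D.mulVecLin := by
    intro x hx
    rw [mem_ker, mulVecLin_apply] at hx ⊢
    funext s
    have h2 := expand x s
    simp only [hx, Pi.zero_apply, hv] at h2
    simp only [LinearMap.funLeft, LinearMap.coe_mk, AddHom.coe_mk]
    rw [show (x ∘ Subtype.val) = fun t : {x : n // x ≠ v} => x t.1 from rfl, h2]
    simp only [Pi.zero_apply]
    ring
  refine LinearEquiv.finrank_eq (LinearEquiv.ofBijective
    ((LinearMap.funLeft F F Subtype.val).restrict hres) ⟨?_, ?_⟩)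
  · intro a b hab
    have h1 : ∀ t : {x : n // x ≠ v}, (a : n → F) t.1 = (b : n → F) t.1 := by
      intro t
      have := congrArg Subtype.val hab
      simpa [LinearMap.restrict_apply, LinearMap.funLeft] using congrFun this t
    have ha := rowv a (by have := a.2; rwa [mem_ker, mulVecLin_apply] at this)
    have hb := rowv b (by have := b.2; rwa [mem_ker, mulVecLin_apply] at this)
    apply Subtype.ext
    funext u
    by_cases hu : u = v
    · subst hu
      rw [ha, hb]
      congr 1
      exact Finset.sum_congr rfl (fun t _ => by rw [h1 t])
    · exact h1 ⟨u, hu⟩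
  · rintro ⟨y, hy⟩
    rw [mem_ker, mulVecLin_apply] at hy
    set xe : n → F := fun t =>
      if h : t = v then -∑ u : {x : n // x ≠ v}, M v u.1 * y u else y ⟨t, h⟩ with hxe
    have hrest : (fun t : {x : n // x ≠ v} => xe t.1) = y := by
      funext t; simp [hxe, t.2]
    have hxev : xe v = -∑ u : {x : n // x ≠ v}, M v u.1 * y u := by simp [hxe]
    have hv0 : M.mulVec xe v = 0 := by
      rw [Matrix.mulVec, dotProduct]
      rw [sum_split v (fun t => M v t * xe t), hv, one_mul, hxev]
      rw [show (fun t : {x : n // x ≠ v} => M v t.1 * xe t.1)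
            = fun t : {x : n // x ≠ v} => M v t.1 * y t from by
        funext t; rw [congrFun hrest t]]
      ring
    have hker : M.mulVec xe = 0 := by
      funext s
      by_cases hs : s = v
      · subst hs; exact hv0
      · have h2 := expand xe ⟨s, hs⟩
        rw [hrest] at h2
        rw [congrFun hy ⟨s, hs⟩] at h2
        have hxv : xe v = xe v := rfl
        rw [hv0, hv, one_mul] at h2
        have : (0 : F) = M.mulVec xe s - M s v * xe v - M s v * (0 - xe v) := h2
        simp only [Pi.zero_apply] at this ⊢
        linear_combination -this
    refine ⟨⟨xe, by rw [mem_ker, mulVecLin_apply]; exact hker⟩, ?_⟩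
    apply Subtype.ext
    simp only [LinearMap.restrict_apply, LinearMap.funLeft, LinearMap.coe_mk, AddHom.coe_mk]
    exact hrest

lemma corank_eq_nullity {F : Type*} [Field F] {n : Type*} [Fintype n] [DecidableEq n]
    (M : Matrix n n F) :
    Fintype.card n - M.rank = Module.finrank F (ker M.mulVecLin) := by
  have h := LinearMap.finrank_range_add_finrank_ker M.mulVecLin
  rw [Module.finrank_pi] at h
  rw [Matrix.rank]
  omega

lemma corank_transfer {n m : Type*} [Fintype n] [DecidableEq n] [Fintype m] [DecidableEq m]
    (M : Matrix n n (ZMod 2)) (v : n) (hv : M v v = 1)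
    (B : Matrix m m (ZMod 2)) (e : {x : n // x ≠ v} ≃ m)
    (hB : ∀ x y : {x : n // x ≠ v}, B (e x) (e y) = M x.1 y.1 - M x.1 v * M v y.1) :
    Fintype.card n - M.rank = Fintype.card m - B.rank := by
  rw [corank_eq_nullity, corank_eq_nullity, finrank_ker_schur M v hv]
  have hDB : (Matrix.of fun x y : {x : n // x ≠ v} => M x.1 y.1 - M x.1 v * M v y.1)
      = B.submatrix e e := by
    ext x y
    simp [Matrix.submatrix_apply, hB]
  rw [hDB, ← corank_eq_nullity, ← corank_eq_nullity, Matrix.rank_submatrix,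
    Fintype.card_congr e]

namespace LGraph

lemma zmod2_neg_one : (-1 : ZMod 2) = 1 := rfl

lemma zmod2_sub_one (x : ZMod 2) : x - 1 = x + 1 := by
  have : (1 : ZMod 2) = -1 := rfl
  rw [sub_eq_add_neg, ← this]

lemma corank_omega4p (G G' : LGraph) (v : ℕ) (h : Omega4pAt G G' v)
    (s : Finset ℕ) (hs : s ⊆ G.verts) :
    (G'.induce s).corankA =
      (G.induce (if v ∈ s then s.erase v else insert v s)).corankA := by
  obtain ⟨hvV, hfr1, hverts, hadj, hfrv, hsgnv, hsgn, hfr⟩ := h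
  have hloop : ∀ x, G.adj x x = false := G.loopless
  by_cases hv : v ∈ s
  · rw [if_pos hv]
    unfold corankA
    have hvmem : v ∈ (G'.induce s).verts := Finset.mem_inter.2 ⟨hv, hverts ▸ hvV⟩
    set v₁ : ((G'.induce s).verts : Finset ℕ) := (⟨v, hvmem⟩ : ((G'.induce s).verts : Finset ℕ)) with hv₁
    have hMvv : (G'.induce s).A v₁ v₁ = 1 := by
      simp [LGraph.A, LGraph.induce, hfrv, hfr1, hv₁]
    refine corank_transfer ((G'.induce s).A) v₁ hMvv _
      (⟨fun x => ⟨x.1.1, ?_⟩, fun y => ⟨⟨y.1, ?_⟩, ?_⟩, ?_, ?_⟩) ?_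
    · -- x.1.1 ∈ (s.erase v) ∩ G.verts
      have hxs := Finset.mem_inter.1 x.1.2
      have hxv : (x.1.1 : ℕ) ≠ v := fun hh => x.2 (Subtype.ext hh)
      exact Finset.mem_inter.2 ⟨Finset.mem_erase.2 ⟨hxv, hxs.1⟩, hverts ▸ hxs.2⟩
    · -- y.1 ∈ s ∩ G'.verts
      have hy := Finset.mem_inter.1 y.2
      exact Finset.mem_inter.2 ⟨Finset.mem_of_mem_erase hy.1, hverts ▸ hy.2⟩
    · -- ≠ v₁
      intro hh
      exact (Finset.mem_erase.1 (Finset.mem_inter.1 y.2).1).1 (congrArg Subtype.val hh)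
    · intro x; rfl
    · intro y; rfl
    · -- entries
      rintro ⟨⟨a, ha⟩, hav⟩ ⟨⟨b, hb⟩, hbv⟩
      have has : a ∈ s := (Finset.mem_inter.1 ha).1
      have hbs : b ∈ s := (Finset.mem_inter.1 hb).1
      have hav' : a ≠ v := fun hh => hav (Subtype.ext hh)
      have hbv' : b ≠ v := fun hh => hbv (Subtype.ext hh)
      have haV : a ∈ G.verts := hverts ▸ (Finset.mem_inter.1 ha).2
      have hbV : b ∈ G.verts := hverts ▸ (Finset.mem_inter.1 hb).2
      have hsymbv : G.adj b v = G.adj v b := G.symm b v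
      have hsymav : G.adj a v = G.adj v a := G.symm a v
      have hadjav : G'.adj a v = G.adj a v := by rw [hadj a v]; simp [hloop v]
      have hadjvb : G'.adj v b = G.adj v b := by rw [hadj v b]; simp [hloop v]
      have hG'ab := hadj a b
      have hfra := hfr a hav'
      simp only [Equiv.coe_fn_mk, hv₁]
      simp only [LGraph.A, LGraph.induce, Matrix.of_apply]
      by_cases hab : a = b
      · subst hab
        rw [if_pos rfl, if_pos rfl, if_neg hav', if_neg (fun hh => hav' hh.symm : ¬ v = a)]
        simp only [hfra, hadjav, hadjvb]
        rcases Bool.eq_false_or_eq_true (G.adj v a) with hca | hca <;>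
          simp [hca, hsymav, has, hv] <;> ring
      · rw [if_neg hab, if_neg hab, if_neg hav', if_neg (fun hh => hbv' hh.symm : ¬ v = b)]
        simp only [hadjav, hadjvb, hG'ab]
        have hmem1 : a ∈ s.erase v := Finset.mem_erase.2 ⟨hav', has⟩
        have hmem2 : b ∈ s.erase v := Finset.mem_erase.2 ⟨hbv', hbs⟩
        rcases Bool.eq_false_or_eq_true (G.adj v a) with hca | hca <;>
          rcases Bool.eq_false_or_eq_true (G.adj v b) with hcb | hcb <;>
            rcases Bool.eq_false_or_eq_true (G.adj a b) with hcab | hcab <;>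
              simp [hca, hcb, hcab, hab, hsymav, hsymbv, hmem1, hmem2, has, hbs, hv] <;>
                first | rfl | decide
  · rw [if_neg hv]
    unfold corankA
    have hvmem : v ∈ (G.induce (insert v s)).verts :=
      Finset.mem_inter.2 ⟨Finset.mem_insert_self v s, hvV⟩
    set v₂ : ((G.induce (insert v s)).verts : Finset ℕ) :=
      (⟨v, hvmem⟩ : ((G.induce (insert v s)).verts : Finset ℕ)) with hv₂
    have hMvv : (G.induce (insert v s)).A v₂ v₂ = 1 := by
      simp [LGraph.A, LGraph.induce, hfr1, hv₂]
    symm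
    refine corank_transfer ((G.induce (insert v s)).A) v₂ hMvv _
      (⟨fun x => ⟨x.1.1, ?_⟩, fun y => ⟨⟨y.1, ?_⟩, ?_⟩, ?_, ?_⟩) ?_
    · have hxs := Finset.mem_inter.1 x.1.2
      have hxv : (x.1.1 : ℕ) ≠ v := fun hh => x.2 (Subtype.ext hh)
      exact Finset.mem_inter.2 ⟨(Finset.mem_insert.1 hxs.1).resolve_left hxv,
        hverts ▸ hxs.2⟩
    · have hy := Finset.mem_inter.1 y.2
      exact Finset.mem_inter.2 ⟨Finset.mem_insert_of_mem hy.1, hverts ▸ hy.2⟩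
    · intro hh
      have : (y.1 : ℕ) = v := congrArg Subtype.val hh
      exact hv (this ▸ (Finset.mem_inter.1 y.2).1)
    · intro x; rfl
    · intro y; rfl
    · rintro ⟨⟨a, ha⟩, hav⟩ ⟨⟨b, hb⟩, hbv⟩
      have hav' : a ≠ v := fun hh => hav (Subtype.ext hh)
      have hbv' : b ≠ v := fun hh => hbv (Subtype.ext hh)
      have has : a ∈ s := (Finset.mem_insert.1 (Finset.mem_inter.1 ha).1).resolve_left hav'
      have hbs : b ∈ s := (Finset.mem_insert.1 (Finset.mem_inter.1 hb).1).resolve_left hbv'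
      have hsymav : G.adj a v = G.adj v a := G.symm a v
      have hsymbv : G.adj b v = G.adj v b := G.symm b v
      have hG'ab := hadj a b
      have hfra := hfr a hav'
      have hmem1 : a ∈ insert v s := Finset.mem_insert_of_mem has
      have hmem2 : b ∈ insert v s := Finset.mem_insert_of_mem hbs
      simp only [Equiv.coe_fn_mk, hv₂]
      simp only [LGraph.A, LGraph.induce, Matrix.of_apply]
      by_cases hab : a = b
      · subst hab
        rw [if_pos rfl, if_pos rfl, if_neg hav', if_neg (fun hh => hav' hh.symm : ¬ v = a)]
        simp only [hfra, hG'ab]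
        rcases Bool.eq_false_or_eq_true (G.adj v a) with hca | hca <;>
          simp [hca, hsymav, hmem1, Finset.mem_insert_self, hloop, sub_eq_add_neg,
            zmod2_neg_one] <;>
            first | ring | decide
      · rw [if_neg hab, if_neg hab, if_neg hav', if_neg (fun hh => hbv' hh.symm : ¬ v = b)]
        simp only [hG'ab]
        rcases Bool.eq_false_or_eq_true (G.adj v a) with hca | hca <;>
          rcases Bool.eq_false_or_eq_true (G.adj v b) with hcb | hcb <;>
            rcases Bool.eq_false_or_eq_true (G.adj a b) with hcab | hcab <;>
              simp [hca, hcb, hcab, hab, hsymav, hsymbv, hmem1, hmem2, has, hbs,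
                Finset.mem_insert_self, sub_eq_add_neg, zmod2_neg_one] <;>
                first | rfl | ring | decide

end LGraph

namespace LGraph

lemma alphaS_eq_sum (G : LGraph) (s : Finset ℕ) (hs : s ⊆ G.verts) :
    G.alphaS s = ∑ x ∈ G.verts,
      (if x ∈ s then (if G.sgn x = false then 1 else 0)
       else (if G.sgn x = true then 1 else 0)) := by
  unfold alphaS
  rw [← Finset.sum_filter_add_sum_filter_not G.verts (· ∈ s)]
  congr 1
  · rw [Finset.card_filter]
    rw [show G.verts.filter (· ∈ s) = s from by
      rw [Finset.filter_mem_eq_inter]; exact Finset.inter_eq_right.2 hs]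
    exact Finset.sum_congr rfl (fun x hx => by simp [hx])
  · rw [Finset.card_filter]
    rw [show G.verts \ s = G.verts.filter (· ∉ s) from Finset.sdiff_eq_filter _ _]
    refine Finset.sum_congr rfl (fun x hx => ?_)
    have := (Finset.mem_filter.1 hx).2
    simp [this]

lemma alphaS_move (G G' : LGraph) (v : ℕ) (hvV : v ∈ G.verts)
    (hverts : G'.verts = G.verts) (hsgnv : G'.sgn v = !(G.sgn v))
    (hsgn : ∀ x, x ≠ v → G'.sgn x = G.sgn x) (s : Finset ℕ) (hs : s ⊆ G.verts) :
    G'.alphaS s = G.alphaS (if v ∈ s then s.erase v else insert v s) := by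
  have hms : (if v ∈ s then s.erase v else insert v s) ⊆ G.verts := by
    split
    · exact fun x hx => hs (Finset.mem_of_mem_erase hx)
    · intro x hx
      rcases Finset.mem_insert.1 hx with rfl | hx
      · exact hvV
      · exact hs hx
  rw [alphaS_eq_sum G' s (by rw [hverts]; exact hs), alphaS_eq_sum G _ hms, hverts]
  refine Finset.sum_congr rfl (fun x _ => ?_)
  by_cases hxv : x = v
  · subst hxv
    by_cases hvs : x ∈ s
    · have hset : (if x ∈ s then s.erase x else insert x s) = s.erase x := if_pos hvs
      rw [hset, if_pos hvs, if_neg (fun hh => (Finset.mem_erase.1 hh).1 rfl), hsgnv]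
      cases hsv : G.sgn x <;> simp
    · have hset : (if x ∈ s then s.erase x else insert x s) = insert x s := if_neg hvs
      rw [hset, if_neg hvs, if_pos (Finset.mem_insert_self x s), hsgnv]
      cases hsv : G.sgn x <;> simp
  · have hmemiff : (x ∈ (if v ∈ s then s.erase v else insert v s)) ↔ x ∈ s := by
      split <;> simp [Finset.mem_erase, Finset.mem_insert, hxv]
    rw [hsgn x hxv]
    by_cases hxs : x ∈ s
    · rw [if_pos hxs, if_pos (hmemiff.2 hxs)]
    · rw [if_neg hxs, if_neg (fun hh => hxs (hmemiff.1 hh))]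

end LGraph

theorem bracket_omega4p' (G G' : LGraph) (v : ℕ)
    (h : LGraph.Omega4pAt G G' v) :
    G'.bracket = G.bracket := by
  have hc := h
  obtain ⟨hvV, hfr1, hverts, hadj, hfrv, hsgnv, hsgn, hfr⟩ := hc
  unfold LGraph.bracket
  rw [hverts]
  refine Finset.sum_bij' (fun s _ => if v ∈ s then s.erase v else insert v s)
    (fun s _ => if v ∈ s then s.erase v else insert v s) ?_ ?_ ?_ ?_ ?_
  · intro s hsp
    have hs := Finset.mem_powerset.1 hsp
    rw [Finset.mem_powerset]
    split
    · exact fun x hx => hs (Finset.mem_of_mem_erase hx)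
    · intro x hx
      rcases Finset.mem_insert.1 hx with rfl | hx
      · exact hvV
      · exact hs hx
  · intro s hsp
    have hs := Finset.mem_powerset.1 hsp
    rw [Finset.mem_powerset]
    split
    · exact fun x hx => hs (Finset.mem_of_mem_erase hx)
    · intro x hx
      rcases Finset.mem_insert.1 hx with rfl | hx
      · exact hvV
      · exact hs hx
  · intro s _
    by_cases hvs : v ∈ s
    · rw [if_pos hvs]
      rw [if_neg (fun hh => (Finset.mem_erase.1 hh).1 rfl)]
      exact Finset.insert_erase hvs
    · rw [if_neg hvs, if_pos (Finset.mem_insert_self v s)]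
      exact Finset.erase_insert hvs
  · intro s _
    by_cases hvs : v ∈ s
    · rw [if_pos hvs]
      rw [if_neg (fun hh => (Finset.mem_erase.1 hh).1 rfl)]
      exact Finset.insert_erase hvs
    · rw [if_neg hvs, if_pos (Finset.mem_insert_self v s)]
      exact Finset.erase_insert hvs
  · intro s hsp
    have hs := Finset.mem_powerset.1 hsp
    have ha := LGraph.alphaS_move G G' v hvV hverts hsgnv hsgn s hs
    have hb : G'.betaS s = G.betaS (if v ∈ s then s.erase v else insert v s) := by
      unfold LGraph.betaS
      rw [ha, hverts]
    rw [ha, hb, LGraph.corank_omega4p G G' v h s hs]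


end AuxOmega4p

/-- The Kauffman bracket is invariant under the graph-move
`Ω4'` (local complementation at a vertex labeled `(1,α)`, with the sign of `v`
changed to `-α` and the framings of all neighbours of `v` toggled). -/
theorem bracket_omega4p (G G' : LGraph) (v : ℕ)
    (h : LGraph.Omega4pAt G G' v) :
    G'.bracket = G.bracket :=
  bracket_omega4p' G G' v h
end

section
/- Call a vertex of a looped graph even if it is adjacent to an even number of vertices distinct from itself, and odd otherwise. Then the Reidemeister moves on looped graphs respect this parity: every vertex present both before and after a move L1, L2 or L3 has the same parity before and after the move; the two vertices added or removed in a move L2 have equal parity; and the vertex added or removed in a move L1 is even. -/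
/-- A *looped graph*: a finite simple graph together with a distinguished set
of looped vertices. -/
structure LoopedGraph where
  verts : Finset ℕ
  adj : ℕ → ℕ → Bool
  symm : ∀ x y, adj x y = adj y x
  loopless : ∀ x, adj x x = false
  adj_mem : ∀ x y, adj x y = true → x ∈ verts ∧ y ∈ verts
  looped : ℕ → Bool

namespace LoopedGraph

/-- `L'` agrees with `L` (adjacency and loops) away from the set `S`. -/
def sameOutside (L L' : LoopedGraph) (S : Finset ℕ) : Prop :=
  (∀ x y, x ∉ S → y ∉ S → L'.adj x y = L.adj x y) ∧
  (∀ x, x ∉ S → L'.looped x = L.looped x)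

/-- L1 (addition direction): addition of an isolated vertex, looped or unlooped. -/
def L1AddAt (L L' : LoopedGraph) (v : ℕ) : Prop :=
  v ∉ L.verts ∧ L'.verts = insert v L.verts ∧
    (∀ x, L'.adj v x = false) ∧ sameOutside L L' {v}

/-- L2 (addition direction): addition of two vertices, one looped and one
unlooped, having the same adjacencies with all other vertices. -/
def L2AddAt (L L' : LoopedGraph) (u v : ℕ) : Prop :=
  u ≠ v ∧ u ∉ L.verts ∧ v ∉ L.verts ∧
    L'.verts = insert u (insert v L.verts) ∧
    L'.looped u = !(L'.looped v) ∧
    (∀ x, x ≠ u → x ≠ v → L'.adj u x = L'.adj v x) ∧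
    sameOutside L L' {u, v}

/-- L3 at `u, v, w`: `v` looped, `w` unlooped, `v` and `w` adjacent, `u`
adjacent to neither `v` nor `w`, and every other vertex adjacent to `0` or
exactly `2` of `u, v, w`; the adjacencies of the three pairs are toggled. -/
def L3At (L L' : LoopedGraph) (u v w : ℕ) : Prop :=
  u ≠ v ∧ u ≠ w ∧ v ≠ w ∧ u ∈ L.verts ∧ v ∈ L.verts ∧ w ∈ L.verts ∧
    L.looped v = true ∧ L.looped w = false ∧
    L.adj v w = true ∧ L.adj u v = false ∧ L.adj u w = false ∧
    (∀ x, x ≠ u → x ≠ v → x ≠ w →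
      ((L.adj u x = false ∧ L.adj v x = false ∧ L.adj w x = false) ∨
       (L.adj u x = true ∧ L.adj v x = true ∧ L.adj w x = false) ∨
       (L.adj u x = true ∧ L.adj v x = false ∧ L.adj w x = true) ∨
       (L.adj u x = false ∧ L.adj v x = true ∧ L.adj w x = true))) ∧
    L'.verts = L.verts ∧
    L'.adj u v = true ∧ L'.adj u w = true ∧ L'.adj v w = false ∧
    (∀ x y, x ∉ ({u, v, w} : Finset ℕ) ∨ y ∉ ({u, v, w} : Finset ℕ) →
      L'.adj x y = L.adj x y) ∧
    (∀ x, L'.looped x = L.looped x)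

/-- A single Reidemeister move on looped graphs (in either direction). -/
inductive LMove : LoopedGraph → LoopedGraph → Prop
  | l1a {L L' v} : L1AddAt L L' v → LMove L L'
  | l1r {L L' v} : L1AddAt L' L v → LMove L L'
  | l2a {L L' u v} : L2AddAt L L' u v → LMove L L'
  | l2r {L L' u v} : L2AddAt L' L u v → LMove L L'
  | l3f {L L' u v w} : L3At L L' u v w → LMove L L'
  | l3b {L L' u v w} : L3At L' L u v w → LMove L L'

/-- Homotopy of looped graphs: a finite sequence of Reidemeister moves. -/
def Homotopic : LoopedGraph → LoopedGraph → Prop :=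
  Relation.ReflTransGen LMove

end LoopedGraph
namespace LoopedGraph

/-- A vertex of a looped graph is *even* if it is adjacent to an even number
of vertices distinct from itself. -/
def EvenV (L : LoopedGraph) (v : ℕ) : Prop :=
  Even ((L.verts.filter (fun x => L.adj v x = true)).card)

end LoopedGraph

/-- The Reidemeister moves on looped graphs respect the
parity of vertices: every vertex present both before and after a move `L1`,
`L2` or `L3` has the same parity before and after; the two vertices added or
removed by `L2` have equal parity; the vertex added or removed by `L1` is even. -/
theorem parity_invariant_under_LMoves :
    (∀ (L L' : LoopedGraph) (v : ℕ), LoopedGraph.L1AddAt L L' v →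
      (∀ x ∈ L.verts, (L.EvenV x ↔ L'.EvenV x)) ∧ L'.EvenV v) ∧
    (∀ (L L' : LoopedGraph) (u v : ℕ), LoopedGraph.L2AddAt L L' u v →
      (∀ x ∈ L.verts, (L.EvenV x ↔ L'.EvenV x)) ∧ (L'.EvenV u ↔ L'.EvenV v)) ∧
    (∀ (L L' : LoopedGraph) (u v w : ℕ), LoopedGraph.L3At L L' u v w →
      ∀ x ∈ L.verts, (L.EvenV x ↔ L'.EvenV x)) := by
  
  refine ⟨?_, ?_, ?_⟩
  · -- L1
    rintro L L' v ⟨hv, hverts, hiso, hadj, hloop⟩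
    constructor
    · intro x hx
      have hxv : x ≠ v := fun h => hv (h ▸ hx)
      unfold LoopedGraph.EvenV
      rw [hverts, Finset.filter_insert]
      have hnv : ¬ (L'.adj x v = true) := by
        rw [L'.symm, hiso]; simp
      rw [if_neg hnv]
      have hfe : L.verts.filter (fun y => L'.adj x y = true)
           = L.verts.filter (fun y => L.adj x y = true) := by
        apply Finset.filter_congr
        intro y hy
        rw [hadj x y (by simp [hxv]) (by simp; rintro rfl; exact hv hy)]
      rw [hfe]
    · unfold LoopedGraph.EvenV
      have he : L'.verts.filter (fun x => L'.adj v x = true) = ∅ := by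
        apply Finset.filter_eq_empty_iff.2
        intro x _; simp [hiso x]
      simp [he]
  · -- L2
    rintro L L' u v ⟨huv, hu, hv, hverts, hlooped, hsame, hadj, hloop⟩
    have hu' : u ∉ insert v L.verts := by simp [huv, hu]
    constructor
    · intro x hx
      have hxu : x ≠ u := fun h => hu (h ▸ hx)
      have hxv : x ≠ v := fun h => hv (h ▸ hx)
      have hsum : ∀ y ∈ L.verts,
          (if L'.adj x y = true then 1 else 0) = (if L.adj x y = true then (1:ℕ) else 0) := by
        intro y hy
        rw [hadj x y (by simp [hxu, hxv])
          (by simp; constructor <;> rintro rfl <;> [exact hu hy; exact hv hy])]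
      have key : L'.adj x u = L'.adj x v := by
        rw [L'.symm x u, L'.symm x v, hsame x hxu hxv]
      have heq : (L'.verts.filter (fun y => L'.adj x y = true)).card
          = (if L'.adj x v = true then 1 else 0) +
            ((if L'.adj x v = true then 1 else 0) +
              (L.verts.filter (fun y => L.adj x y = true)).card) := by
        rw [Finset.card_filter, Finset.card_filter, hverts,
          Finset.sum_insert hu', Finset.sum_insert hv, key,
          Finset.sum_congr rfl hsum]
      unfold LoopedGraph.EvenV
      rw [heq]
      simp only [Nat.even_iff]
      omega
    · have hS : (∑ y ∈ L.verts, if L'.adj u y = true then (1:ℕ) else 0)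
          = ∑ y ∈ L.verts, if L'.adj v y = true then (1:ℕ) else 0 := by
        apply Finset.sum_congr rfl
        intro y hy
        rw [hsame y (fun h => hu (h ▸ hy)) (fun h => hv (h ▸ hy))]
      have heq : (L'.verts.filter (fun y => L'.adj u y = true)).card
          = (L'.verts.filter (fun y => L'.adj v y = true)).card := by
        rw [Finset.card_filter, Finset.card_filter, hverts,
          Finset.sum_insert hu', Finset.sum_insert hu',
          Finset.sum_insert hv, Finset.sum_insert hv,
          L'.loopless, L'.loopless, L'.symm u v, hS]
        ring
      unfold LoopedGraph.EvenV
      rw [heq]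
  · -- L3
    rintro L L' u v w ⟨huv, huw, hvw, hum, hvm, hwm, hlv, hlw, hvwadj, huvadj,
      huwadj, hcond, hverts, h'uv, h'uw, h'vw, hout, hloops⟩
    intro x hx
    have hsub : ({u, v, w} : Finset ℕ) ⊆ L.verts := by
      intro y hy; simp at hy; rcases hy with rfl | rfl | rfl <;> assumption
    have hins : ({u, v, w} : Finset ℕ) = insert u (insert v {w}) := rfl
    have hu2 : u ∉ ({v, w} : Finset ℕ) := by simp [huv, huw]
    have hv2 : v ∉ ({w} : Finset ℕ) := by simp [hvw]
    have hsd : ∀ (M : LoopedGraph), ∀ z : ℕ,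
        (L.verts.filter (fun y => M.adj z y = true)).card
          = (∑ y ∈ L.verts \ {u, v, w}, (if M.adj z y = true then 1 else 0)) +
            ((if M.adj z u = true then 1 else 0) + ((if M.adj z v = true then 1 else 0) +
              (if M.adj z w = true then 1 else 0))) := by
      intro M z
      rw [Finset.card_filter, ← Finset.sum_sdiff hsub, hins,
        Finset.sum_insert hu2, Finset.sum_insert hv2, Finset.sum_singleton]
    have hsdiff : ∀ z : ℕ,
        (∑ y ∈ L.verts \ ({u, v, w} : Finset ℕ), (if L'.adj z y = true then 1 else 0)) =
        (∑ y ∈ L.verts \ ({u, v, w} : Finset ℕ), (if L.adj z y = true then (1:ℕ) else 0)) := by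
      intro z
      apply Finset.sum_congr rfl
      intro y hy
      rw [hout z y (Or.inr (Finset.mem_sdiff.1 hy).2)]
    have h1 := hsd L x
    have h2 := hsd L' x
    unfold LoopedGraph.EvenV
    rw [hverts]
    by_cases hxu : x = u
    · subst hxu
      rw [L.loopless, huvadj, huwadj] at h1
      rw [L'.loopless, h'uv, h'uw, hsdiff x] at h2
      simp only [reduceIte] at h1 h2
      rw [h1, h2]
      simp only [Nat.even_iff]
      omega
    · by_cases hxv : x = v
      · subst hxv
        have e1 : L.adj x u = false := by rw [L.symm]; exact huvadj
        have e2 : L'.adj x u = true := by rw [L'.symm]; exact h'uv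
        rw [L.loopless, e1, hvwadj] at h1
        rw [L'.loopless, e2, h'vw, hsdiff x] at h2
        simp only [reduceIte] at h1 h2
        rw [h1, h2]
        simp only [Nat.even_iff]
        omega
      · by_cases hxw : x = w
        · subst hxw
          have e1 : L.adj x u = false := by rw [L.symm]; exact huwadj
          have e2 : L'.adj x u = true := by rw [L'.symm]; exact h'uw
          have e3 : L.adj x v = true := by rw [L.symm]; exact hvwadj
          have e4 : L'.adj x v = false := by rw [L'.symm]; exact h'vw
          rw [L.loopless, e1, e3] at h1
          rw [L'.loopless, e2, e4, hsdiff x] at h2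
          simp only [reduceIte] at h1 h2
          rw [h1, h2]
          simp only [Nat.even_iff]
          omega
        · have hxS : x ∉ ({u, v, w} : Finset ℕ) := by simp [hxu, hxv, hxw]
          have hfe : L.verts.filter (fun y => L'.adj x y = true)
              = L.verts.filter (fun y => L.adj x y = true) := by
            apply Finset.filter_congr
            intro y _
            rw [hout x y (Or.inl hxS)]
          rw [hfe]
end
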